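/- arXiv:1009.0626 — 5 statements merged into one kernel-verified Lean document; each statement's English description precedes it below -/
import Mathlib

section
/- In a uniformly random permutation X₁,...,Xₙ of {1,...,n} with relative ranks Yᵢ, for r ≤ s ≤ n-1 and s+2 ≤ i ≤ n, the probability P(min{Y_{s+1},...,Y_{i-1}} > r) equals (s)_r / (i-1)_r, where (x)_r is the falling factorial. -/
open Finset

/-- The relative rank of the element at position `t` among the first `t+1` observed elements. -/
def relRank (n : ℕ) (σ : Equiv.Perm (Fin n)) (t : Fin n) : ℕ :=
  (Finset.univ.filter (fun k : Fin n => k ≤ t ∧ σ k ≤ σ t)).card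

namespace PrmAux

lemma card_filter_val_lt (m c : ℕ) (h : c ≤ m) :
    ((univ : Finset (Fin m)).filter (fun k : Fin m => (k : ℕ) < c)).card = c := by
  have himg : ((univ : Finset (Fin m)).filter (fun k : Fin m => (k : ℕ) < c)).image Fin.val
      = Finset.range c := by
    ext a
    simp only [mem_image, mem_filter, mem_univ, true_and, mem_range]
    constructor
    · rintro ⟨k, hk, rfl⟩; exact hk
    · intro ha; exact ⟨⟨a, lt_of_lt_of_le ha h⟩, ha, rfl⟩
  rw [← Finset.card_image_of_injective _ Fin.val_injective, himg, card_range]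

variable {n : ℕ}

/-- The `r` smallest elements of `Q`. -/
def lows (n r : ℕ) (Q : Finset (Fin n)) : Finset (Fin n) :=
  Q.filter (fun v => (Q.filter (fun w => w ≤ v)).card ≤ r)

lemma lows_subset {r : ℕ} {Q : Finset (Fin n)} : lows n r Q ⊆ Q := filter_subset _ _

lemma lt_of_mem_lows {r : ℕ} {Q : Finset (Fin n)} {a b : Fin n}
    (ha : a ∈ lows n r Q) (hb : b ∈ Q) (hb' : b ∉ lows n r Q) : a < b := by
  by_contra hab
  push_neg at hab
  apply hb'
  simp only [lows, mem_filter] at ha ⊢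
  refine ⟨hb, le_trans (Finset.card_le_card ?_) ha.2⟩
  intro w hw
  simp only [mem_filter] at hw ⊢
  exact ⟨hw.1, le_trans hw.2 hab⟩

lemma card_lows {r : ℕ} {Q : Finset (Fin n)} (hr : r ≤ Q.card) :
    (lows n r Q).card = r := by
  set f := Q.orderEmbOfFin rfl with hf
  have hrank : ∀ j : Fin Q.card, (Q.filter (fun w => w ≤ f j)).card = (j : ℕ) + 1 := by
    intro j
    have himg : Q.filter (fun w => w ≤ f j)
        = (univ.filter (fun k : Fin Q.card => k ≤ j)).image f := by
      ext v
      simp only [mem_filter, mem_univ, true_and, mem_image]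
      constructor
      · rintro ⟨hv, hvj⟩
        obtain ⟨k, rfl⟩ : ∃ k, f k = v := by
          have := Q.range_orderEmbOfFin (rfl : Q.card = Q.card)
          have hv' : v ∈ Set.range f := by rw [hf, this]; exact hv
          exact hv'
        exact ⟨k, f.le_iff_le.mp hvj, rfl⟩
      · rintro ⟨k, hk, rfl⟩
        exact ⟨Q.orderEmbOfFin_mem _ _, f.le_iff_le.mpr hk⟩
    rw [himg, Finset.card_image_of_injective _ f.injective]
    have : (univ.filter (fun k : Fin Q.card => k ≤ j))
        = (univ.filter (fun k : Fin Q.card => (k : ℕ) < (j : ℕ) + 1)) := by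
      ext k; simp only [mem_filter, mem_univ, true_and, Fin.le_def]; omega
    rw [this, card_filter_val_lt _ _ j.isLt]
  have hlows : lows n r Q = (univ.filter (fun j : Fin Q.card => (j : ℕ) < r)).image f := by
    ext v
    simp only [lows, mem_filter, mem_image, mem_univ, true_and]
    constructor
    · rintro ⟨hv, hcard⟩
      obtain ⟨k, rfl⟩ : ∃ k, f k = v := by
        have := Q.range_orderEmbOfFin (rfl : Q.card = Q.card)
        have hv' : v ∈ Set.range f := by rw [hf, this]; exact hv
        exact hv'
      refine ⟨k, ?_, rfl⟩
      have := hrank k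
      omega
    · rintro ⟨k, hk, rfl⟩
      refine ⟨Q.orderEmbOfFin_mem _ _, ?_⟩
      rw [hrank k]; omega
  rw [hlows, Finset.card_image_of_injective _ f.injective, card_filter_val_lt _ _ hr]


/-- first `m` positions -/
def posS (n m : ℕ) : Finset (Fin n) := univ.filter (fun t : Fin n => (t : ℕ) < m)

lemma card_posS {m : ℕ} (h : m ≤ n) : (posS n m).card = m := card_filter_val_lt n m h

lemma posS_mono {m m' : ℕ} (h : m ≤ m') : posS n m ⊆ posS n m' := by
  intro t ht
  simp only [posS, mem_filter, mem_univ, true_and] at ht ⊢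
  omega

/-- positions among the first `i-1` holding one of the `r` smallest values -/
def phi (n i r : ℕ) (σ : Equiv.Perm (Fin n)) : Finset (Fin n) :=
  (posS n (i-1)).filter (fun t => σ t ∈ lows n r ((posS n (i-1)).image σ))

variable {i r : ℕ} {σ : Equiv.Perm (Fin n)}

lemma card_Q (h : i - 1 ≤ n) : ((posS n (i-1)).image σ).card = i - 1 := by
  rw [Finset.card_image_of_injective _ σ.injective, card_posS h]

lemma phi_subset : phi n i r σ ⊆ posS n (i-1) := filter_subset _ _

lemma image_phi : (phi n i r σ).image σ = lows n r ((posS n (i-1)).image σ) := by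
  ext v
  simp only [phi, mem_image, mem_filter]
  constructor
  · rintro ⟨t, ⟨_, hv⟩, rfl⟩; exact hv
  · intro hv
    have hvQ : v ∈ (posS n (i-1)).image σ := lows_subset hv
    obtain ⟨t, ht, rfl⟩ := mem_image.mp hvQ
    exact ⟨t, ⟨ht, hv⟩, rfl⟩

lemma card_phi (h : i - 1 ≤ n) (hr : r ≤ i - 1) : (phi n i r σ).card = r := by
  rw [← Finset.card_image_of_injective (phi n i r σ) σ.injective, image_phi,
    card_lows (by rw [card_Q h]; exact hr)]

lemma phi_mul (π : Equiv.Perm (Fin n)) (hπ : ∀ x, π x ∈ posS n (i-1) ↔ x ∈ posS n (i-1))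
    (t : Fin n) : t ∈ phi n i r (σ * π) ↔ π t ∈ phi n i r σ := by
  have himg : (posS n (i-1)).image π = posS n (i-1) := by
    apply Finset.eq_of_subset_of_card_le
    · intro y hy
      obtain ⟨x, hx, rfl⟩ := mem_image.mp hy
      exact (hπ x).mpr hx
    · rw [Finset.card_image_of_injective _ π.injective]
  have hQ : (posS n (i-1)).image ⇑(σ * π) = (posS n (i-1)).image σ := by
    rw [show ⇑(σ * π) = ⇑σ ∘ ⇑π from rfl, ← Finset.image_image, himg]
  simp only [phi, mem_filter, hQ, Equiv.Perm.mul_apply, hπ t]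

lemma exists_perm (P A B : Finset (Fin n)) (hA : A ⊆ P) (hB : B ⊆ P) (hc : A.card = B.card) :
    ∃ π : Equiv.Perm (Fin n), (∀ x, π x ∈ P ↔ x ∈ P) ∧ (∀ x, π x ∈ B ↔ x ∈ A) := by
  classical
  let A' : Set {x : Fin n // x ∈ P} := {x | ↑x ∈ A}
  let B' : Set {x : Fin n // x ∈ P} := {x | ↑x ∈ B}
  have eA : A' ≃ {y : Fin n // y ∈ A} :=
    ⟨fun x => ⟨↑↑x, x.2⟩, fun y => ⟨⟨↑y, hA y.2⟩, y.2⟩,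
      fun x => by ext; rfl, fun y => by ext; rfl⟩
  have eB : B' ≃ {y : Fin n // y ∈ B} :=
    ⟨fun x => ⟨↑↑x, x.2⟩, fun y => ⟨⟨↑y, hB y.2⟩, y.2⟩,
      fun x => by ext; rfl, fun y => by ext; rfl⟩
  have eAc : ↥(A'ᶜ) ≃ {y : Fin n // y ∈ P \ A} :=
    ⟨fun x => ⟨↑↑x, mem_sdiff.mpr ⟨(↑x : {x : Fin n // x ∈ P}).2, fun h => x.2 h⟩⟩,
      fun y => ⟨⟨↑y, (mem_sdiff.mp y.2).1⟩, (mem_sdiff.mp y.2).2⟩,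
      fun x => by ext; rfl, fun y => by ext; rfl⟩
  have eBc : ↥(B'ᶜ) ≃ {y : Fin n // y ∈ P \ B} :=
    ⟨fun x => ⟨↑↑x, mem_sdiff.mpr ⟨(↑x : {x : Fin n // x ∈ P}).2, fun h => x.2 h⟩⟩,
      fun y => ⟨⟨↑y, (mem_sdiff.mp y.2).1⟩, (mem_sdiff.mp y.2).2⟩,
      fun x => by ext; rfl, fun y => by ext; rfl⟩
  have hcard1 : Fintype.card A' = Fintype.card B' := by
    rw [Fintype.card_congr eA, Fintype.card_congr eB, Fintype.card_coe, Fintype.card_coe, hc]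
  have hcard2 : Fintype.card ↥(A'ᶜ) = Fintype.card ↥(B'ᶜ) := by
    rw [Fintype.card_congr eAc, Fintype.card_congr eBc, Fintype.card_coe, Fintype.card_coe,
      card_sdiff_of_subset hA, card_sdiff_of_subset hB, hc]
  let e1 : A' ≃ B' := Fintype.equivOfCardEq hcard1
  let e2 : ↥(A'ᶜ) ≃ ↥(B'ᶜ) := Fintype.equivOfCardEq hcard2
  let ρ : Equiv.Perm {x : Fin n // x ∈ P} :=
    (Equiv.Set.sumCompl A').symm.trans ((e1.sumCongr e2).trans (Equiv.Set.sumCompl B'))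
  have key : ∀ x : {x : Fin n // x ∈ P}, (↑(ρ x) : Fin n) ∈ B ↔ (↑x : Fin n) ∈ A := by
    intro x
    by_cases hx : (↑x : Fin n) ∈ A
    · have hx' : x ∈ A' := hx
      simp only [ρ, Equiv.trans_apply, Equiv.Set.sumCompl_symm_apply_of_mem hx',
        Equiv.sumCongr_apply, Sum.map_inl, Equiv.Set.sumCompl_apply_inl]
      exact iff_of_true (e1 ⟨x, hx'⟩).2 hx
    · have hx' : x ∈ A'ᶜ := hx
      simp only [ρ, Equiv.trans_apply, Equiv.Set.sumCompl_symm_apply_of_notMem hx',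
        Equiv.sumCongr_apply, Sum.map_inr, Equiv.Set.sumCompl_apply_inr]
      exact iff_of_false (fun h => (e2 ⟨x, hx'⟩).2 h) hx
  refine ⟨Equiv.Perm.ofSubtype ρ, fun x => ?_, fun x => ?_⟩
  · by_cases hx : x ∈ P
    · rw [Equiv.Perm.ofSubtype_apply_of_mem ρ hx]
      exact iff_of_true (ρ ⟨x, hx⟩).2 hx
    · rw [Equiv.Perm.ofSubtype_apply_of_not_mem ρ hx]
  · by_cases hx : x ∈ P
    · rw [Equiv.Perm.ofSubtype_apply_of_mem ρ hx]
      exact key ⟨x, hx⟩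
    · rw [Equiv.Perm.ofSubtype_apply_of_not_mem ρ hx]
      exact iff_of_false (fun h => hx (hB h)) (fun h => hx (hA h))


lemma mem_posS {m : ℕ} {t : Fin n} : t ∈ posS n m ↔ (t : ℕ) < m := by
  simp [posS]

lemma event_iff {s : ℕ} (hrs : r ≤ s) (hsi : s + 2 ≤ i) (hin : i ≤ n) (σ : Equiv.Perm (Fin n)) :
    (∀ t : Fin n, s ≤ (t : ℕ) → (t : ℕ) ≤ i - 2 → r < relRank n σ t) ↔
      phi n i r σ ⊆ posS n s := by
  have hQcard : ((posS n (i-1)).image σ).card = i - 1 := card_Q (by omega)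
  constructor
  · intro h t ht
    rw [mem_posS]
    by_contra hts
    push_neg at hts
    have htP : t ∈ posS n (i-1) := phi_subset ht
    rw [mem_posS] at htP
    have hrt := h t hts (by omega)
    -- show relRank ≤ r
    have hmono : (univ.filter (fun k : Fin n => k ≤ t ∧ σ k ≤ σ t)).image σ
        ⊆ lows n r ((posS n (i-1)).image σ) := by
      intro v hv
      obtain ⟨k, hk, rfl⟩ := mem_image.mp hv
      rw [mem_filter] at hk
      obtain ⟨-, hkt, hkv⟩ := hk
      have hkQ : σ k ∈ (posS n (i-1)).image σ :=
        mem_image_of_mem σ (mem_posS.mpr (by have := Fin.le_def.mp hkt; omega))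
      by_contra hkl
      have := lt_of_mem_lows (mem_filter.mp ht).2 hkQ hkl
      exact absurd hkv (not_le.mpr this)
    have hcard : relRank n σ t ≤ r := by
      have h1 : relRank n σ t
          = ((univ.filter (fun k : Fin n => k ≤ t ∧ σ k ≤ σ t)).image σ).card :=
        (Finset.card_image_of_injective _ σ.injective).symm
      rw [h1]
      exact le_trans (Finset.card_le_card hmono)
        (le_of_eq (card_lows (by rw [hQcard]; omega)))
    omega
  · intro hsub t hst hti
    have htP : t ∈ posS n (i-1) := mem_posS.mpr (by omega)
    have htphi : t ∉ phi n i r σ := by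
      intro h
      have := mem_posS.mp (hsub h)
      omega
    have hQt : σ t ∈ (posS n (i-1)).image σ := mem_image_of_mem σ htP
    have hlt : σ t ∉ lows n r ((posS n (i-1)).image σ) := by
      intro h
      exact htphi (mem_filter.mpr ⟨htP, h⟩)
    have hins : insert t (phi n i r σ) ⊆ univ.filter (fun k : Fin n => k ≤ t ∧ σ k ≤ σ t) := by
      intro x hx
      rcases mem_insert.mp hx with rfl | hx
      · exact mem_filter.mpr ⟨mem_univ _, le_refl _, le_refl _⟩
      · have hxS : (x : ℕ) < s := mem_posS.mp (hsub hx)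
        have hxlow := (mem_filter.mp hx).2
        have hxlt : σ x < σ t := lt_of_mem_lows hxlow hQt hlt
        exact mem_filter.mpr ⟨mem_univ _, Fin.le_def.mpr (by omega), le_of_lt hxlt⟩
    have hcard : r + 1 ≤ relRank n σ t := by
      have h1 : (insert t (phi n i r σ)).card = r + 1 := by
        rw [Finset.card_insert_of_notMem htphi, card_phi (by omega) (by omega)]
      calc r + 1 = (insert t (phi n i r σ)).card := h1.symm
        _ ≤ _ := Finset.card_le_card hins
    omega

lemma fiber_eq (hn : i - 1 ≤ n) {A B : Finset (Fin n)}
    (hA : A ∈ powersetCard r (posS n (i-1))) (hB : B ∈ powersetCard r (posS n (i-1))) :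
    (univ.filter (fun σ : Equiv.Perm (Fin n) => phi n i r σ = A)).card
      = (univ.filter (fun σ : Equiv.Perm (Fin n) => phi n i r σ = B)).card := by
  obtain ⟨hA1, hA2⟩ := mem_powersetCard.mp hA
  obtain ⟨hB1, hB2⟩ := mem_powersetCard.mp hB
  obtain ⟨π, hπP, hπB⟩ := exists_perm (posS n (i-1)) A B hA1 hB1 (hA2.trans hB2.symm)
  have hπP' : ∀ x, π⁻¹ x ∈ posS n (i-1) ↔ x ∈ posS n (i-1) := by
    intro x
    have := hπP (π⁻¹ x)
    rw [show π (π⁻¹ x) = x from π.apply_symm_apply x] at this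
    exact this.symm
  have hπA : ∀ x, π⁻¹ x ∈ A ↔ x ∈ B := by
    intro x
    have := hπB (π⁻¹ x)
    rw [show π (π⁻¹ x) = x from π.apply_symm_apply x] at this
    exact this.symm
  apply Finset.card_nbij' (fun σ => σ * π⁻¹) (fun σ => σ * π)
  · intro σ hσ
    rw [mem_coe, mem_filter] at hσ ⊢
    refine ⟨mem_univ _, ?_⟩
    ext t
    rw [phi_mul π⁻¹ hπP' t, hσ.2, hπA]
  · intro σ hσ
    rw [mem_coe, mem_filter] at hσ ⊢
    refine ⟨mem_univ _, ?_⟩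
    ext t
    rw [phi_mul π hπP t, hσ.2, hπB]
  · intro σ _; group
  · intro σ _; group

end PrmAux

/-- In a uniformly random permutation of `{1,...,n}` with relative ranks `Yᵢ`, for
`r ≤ s ≤ n-1` and `s+2 ≤ i ≤ n`, the probability
`P(min{Y_{s+1},...,Y_{i-1}} > r)` equals `(s)_r / (i-1)_r`.
(The 1-based position `p ∈ {s+1,...,i-1}` corresponds to the index `t : Fin n`
with `s ≤ t.val ≤ i-2`.) -/
theorem prob_min_relRank_gt (n s r i : ℕ) (hrs : r ≤ s) (hsn : s ≤ n - 1)
    (hsi : s + 2 ≤ i) (hin : i ≤ n) :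
    ((Finset.univ.filter (fun σ : Equiv.Perm (Fin n) =>
        ∀ t : Fin n, s ≤ (t : ℕ) → (t : ℕ) ≤ i - 2 → r < relRank n σ t)).card : ℝ)
      / (Nat.factorial n : ℝ)
    = (Nat.descFactorial s r : ℝ) / (Nat.descFactorial (i - 1) r : ℝ) := by
  classical
  open PrmAux in
  have hn : i - 1 ≤ n := by omega
  have hri : r ≤ i - 1 := by omega
  have hsn' : s ≤ n := by omega
  set P := posS n (i-1) with hP
  set S := posS n s with hS
  have hSP : S ⊆ P := posS_mono (by omega)
  have hphiA : ∀ σ : Equiv.Perm (Fin n), phi n i r σ ∈ powersetCard r P :=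
    fun σ => mem_powersetCard.mpr ⟨phi_subset, card_phi hn hri⟩
  set A₀ : Finset (Fin n) := posS n r with hA₀def
  have hA₀S : A₀ ∈ powersetCard r S :=
    mem_powersetCard.mpr ⟨posS_mono hrs, card_posS (by omega)⟩
  have hA₀P : A₀ ∈ powersetCard r P := powersetCard_mono hSP hA₀S
  set F := (univ.filter (fun σ : Equiv.Perm (Fin n) => phi n i r σ = A₀)).card with hF
  -- total count
  have htot : Nat.factorial n = (i-1).choose r * F := by
    have h1 : (univ : Finset (Equiv.Perm (Fin n))).card
        = ∑ A ∈ powersetCard r P, (univ.filter (fun σ => phi n i r σ = A)).card :=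
      Finset.card_eq_sum_card_fiberwise (fun σ _ => hphiA σ)
    have h2 : ∀ A ∈ powersetCard r P,
        (univ.filter (fun σ : Equiv.Perm (Fin n) => phi n i r σ = A)).card = F :=
      fun A hA => fiber_eq hn hA hA₀P
    rw [Finset.sum_congr rfl h2, Finset.sum_const, smul_eq_mul,
      Finset.card_powersetCard, card_posS hn] at h1
    rw [← h1, card_univ, Fintype.card_perm, Fintype.card_fin]
  -- event count
  have hEcount : (Finset.univ.filter (fun σ : Equiv.Perm (Fin n) =>
        ∀ t : Fin n, s ≤ (t : ℕ) → (t : ℕ) ≤ i - 2 → r < relRank n σ t)).card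
      = s.choose r * F := by
    set E := Finset.univ.filter (fun σ : Equiv.Perm (Fin n) =>
        ∀ t : Fin n, s ≤ (t : ℕ) → (t : ℕ) ≤ i - 2 → r < relRank n σ t) with hE
    have hEsub : E = univ.filter (fun σ => phi n i r σ ⊆ S) := by
      ext σ
      simp only [hE, mem_filter, mem_univ, true_and]
      exact event_iff hrs hsi hin σ
    have h1 : E.card = ∑ A ∈ powersetCard r S, (E.filter (fun σ => phi n i r σ = A)).card := by
      apply Finset.card_eq_sum_card_fiberwise
      intro σ hσ
      rw [hEsub, mem_coe, mem_filter] at hσ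
      exact mem_powersetCard.mpr ⟨hσ.2, card_phi hn hri⟩
    have h2 : ∀ A ∈ powersetCard r S,
        (E.filter (fun σ => phi n i r σ = A)).card = F := by
      intro A hA
      have heq : E.filter (fun σ => phi n i r σ = A)
          = univ.filter (fun σ => phi n i r σ = A) := by
        ext σ
        simp only [mem_filter, mem_univ, true_and, and_iff_right_iff_imp]
        intro hphi
        rw [hEsub, mem_filter]
        exact ⟨mem_univ _, by rw [hphi]; exact (mem_powersetCard.mp hA).1⟩
      rw [heq]
      exact fiber_eq hn (powersetCard_mono hSP hA) hA₀P
    rw [h1, Finset.sum_congr rfl h2, Finset.sum_const, smul_eq_mul,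
      Finset.card_powersetCard, card_posS hsn']
  -- final arithmetic
  have hch : (0:ℝ) < ((i-1).choose r : ℝ) := by
    exact_mod_cast Nat.choose_pos hri
  have hFpos : (0:ℝ) < (F : ℝ) := by
    have : 0 < (i-1).choose r * F := by rw [← htot]; exact Nat.factorial_pos n
    have h0 : 0 < F := Nat.pos_of_ne_zero fun h => by simp [h] at this
    exact_mod_cast h0
  rw [hEcount, htot, Nat.descFactorial_eq_factorial_mul_choose,
    Nat.descFactorial_eq_factorial_mul_choose]
  push_cast
  have hfac : (0:ℝ) < (Nat.factorial r : ℝ) := by exact_mod_cast Nat.factorial_pos r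
  field_simp
end

section
/- In a uniformly random permutation of {1,...,n} with relative ranks Yᵢ, for rank levels 1 ≤ r₁ < r₂, position thresholds r₁ ≤ s₁ < s₂ ≤ n-1 with r₂ ≤ s₂, and s₂+2 ≤ i ≤ n, the probability P(min{Y_{s₁+1},...,Y_{s₂}} > r₁ and min{Y_{s₂+1},...,Y_{i-1}} > r₂) equals (s₁)_{r₁}·(s₂-r₁)_{r₂-r₁} / (i-1)_{r₂}. -/
open Finset

lemma relRank_pos {n : ℕ} (σ : Equiv.Perm (Fin n)) (t : Fin n) : 1 ≤ relRank n σ t := by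
  rw [Nat.one_le_iff_ne_zero, ← Nat.pos_iff_ne_zero]
  apply Finset.card_pos.mpr
  exact ⟨t, by simp [relRank]⟩

lemma relRank_le {n : ℕ} (σ : Equiv.Perm (Fin n)) (t : Fin n) : relRank n σ t ≤ (t : ℕ) + 1 := by
  calc (Finset.univ.filter (fun k : Fin n => k ≤ t ∧ σ k ≤ σ t)).card
      ≤ (Finset.Iic t).card := by
        apply Finset.card_le_card
        intro j hj
        simp only [mem_filter] at hj
        exact Finset.mem_Iic.mpr hj.2.1
    _ = (t : ℕ) + 1 := Fin.card_Iic t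

lemma relRank_eq {n : ℕ} (σ : Equiv.Perm (Fin n)) (t : Fin n) :
    relRank n σ t = (univ.filter fun j => j < t ∧ σ j < σ t).card + 1 := by
  unfold relRank
  have hins : (univ.filter fun k : Fin n => k ≤ t ∧ σ k ≤ σ t)
      = insert t (univ.filter fun j => j < t ∧ σ j < σ t) := by
    ext j
    simp only [mem_filter, mem_univ, true_and, mem_insert]
    constructor
    · rintro ⟨h1, h2⟩
      rcases eq_or_lt_of_le h1 with he | hlt
      · left; exact he
      · right
        exact ⟨hlt, lt_of_le_of_ne h2 (fun e => (ne_of_lt hlt) (σ.injective e))⟩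
    · rintro (rfl | ⟨h1, h2⟩)
      · exact ⟨le_refl _, le_refl _⟩
      · exact ⟨le_of_lt h1, le_of_lt h2⟩
  rw [hins, Finset.card_insert_of_notMem (by simp)]

lemma lt_iff_card {n : ℕ} (σ : Equiv.Perm (Fin n)) {k l : Fin n} (hkl : k < l) :
    σ k < σ l ↔ (univ.filter fun j => j < l ∧ σ j ≤ σ k).card
      ≤ (univ.filter fun j => j < l ∧ σ j < σ l).card := by
  constructor
  · intro h
    apply Finset.card_le_card
    intro j hj
    simp only [mem_filter, mem_univ, true_and] at hj ⊢
    exact ⟨hj.1, lt_of_le_of_lt hj.2 h⟩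
  · intro h
    by_contra hc
    push_neg at hc
    have hlt : σ l < σ k :=
      lt_of_le_of_ne hc (fun e => (ne_of_lt hkl) (σ.injective e).symm)
    have hsub : (univ.filter fun j => j < l ∧ σ j < σ l)
        ⊂ (univ.filter fun j => j < l ∧ σ j ≤ σ k) := by
      constructor
      · intro j hj
        simp only [mem_filter, mem_univ, true_and] at hj ⊢
        exact ⟨hj.1, le_of_lt (lt_trans hj.2 hlt)⟩
      · intro hsup
        have hk : k ∈ (univ.filter fun j => j < l ∧ σ j ≤ σ k) := by
          simp only [mem_filter, mem_univ, true_and]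
          exact ⟨hkl, le_refl _⟩
        have := hsup hk
        simp only [mem_filter, mem_univ, true_and] at this
        exact absurd this.2 (not_lt.mpr (le_of_lt hlt))
    exact absurd h (not_le.mpr (Finset.card_lt_card hsub))

lemma order_agree {n : ℕ} {σ τ : Equiv.Perm (Fin n)}
    (h : ∀ t, relRank n σ t = relRank n τ t) :
    ∀ m : ℕ, ∀ k l : Fin n, (k : ℕ) < m → (l : ℕ) < m → (σ k ≤ σ l ↔ τ k ≤ τ l) := by
  intro m
  induction m with
  | zero => intro k l hk _; omega
  | succ m ih =>
    have main : ∀ k l : Fin n, (k : ℕ) < m → (l : ℕ) = m → (σ k < σ l ↔ τ k < τ l) := by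
      intro k l hk hl
      have hkl : k < l := by rw [Fin.lt_def]; omega
      rw [lt_iff_card σ hkl, lt_iff_card τ hkl]
      have hA : (univ.filter fun j => j < l ∧ σ j ≤ σ k)
          = (univ.filter fun j => j < l ∧ τ j ≤ τ k) := by
        ext j
        simp only [mem_filter, mem_univ, true_and]
        constructor
        · rintro ⟨hj1, hj2⟩
          refine ⟨hj1, ?_⟩
          have hjm : (j : ℕ) < m := by rw [Fin.lt_def] at hj1; omega
          exact (ih j k hjm hk).mp hj2
        · rintro ⟨hj1, hj2⟩
          refine ⟨hj1, ?_⟩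
          have hjm : (j : ℕ) < m := by rw [Fin.lt_def] at hj1; omega
          exact (ih j k hjm hk).mpr hj2
      have hB : (univ.filter fun j => j < l ∧ σ j < σ l).card
          = (univ.filter fun j => j < l ∧ τ j < τ l).card := by
        have h1 := relRank_eq σ l
        have h2 := relRank_eq τ l
        have h3 := h l
        omega
      rw [hA, hB]
    intro k l hk hl
    by_cases hk' : (k : ℕ) < m
    · by_cases hl' : (l : ℕ) < m
      · exact ih k l hk' hl'
      · have hlm : (l : ℕ) = m := by omega
        have hne : k ≠ l := by intro e; rw [e] at hk'; omega
        have h1 : σ k ≤ σ l ↔ σ k < σ l := by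
          constructor
          · intro hle
            exact lt_of_le_of_ne hle (fun e => hne (σ.injective e))
          · exact le_of_lt
        have h2 : τ k ≤ τ l ↔ τ k < τ l := by
          constructor
          · intro hle
            exact lt_of_le_of_ne hle (fun e => hne (τ.injective e))
          · exact le_of_lt
        rw [h1, h2]
        exact main k l hk' hlm
    · have hkm : (k : ℕ) = m := by omega
      by_cases hl' : (l : ℕ) < m
      · have h1 : σ k ≤ σ l ↔ ¬ (σ l < σ k) := by rw [not_lt]
        have h2 : τ k ≤ τ l ↔ ¬ (τ l < τ k) := by rw [not_lt]
        rw [h1, h2, main l k hl' hkm]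
      · have : k = l := Fin.ext (by omega)
        subst this
        simp

lemma relRank_inj {n : ℕ} {σ τ : Equiv.Perm (Fin n)}
    (h : ∀ t, relRank n σ t = relRank n τ t) : σ = τ := by
  have hord := order_agree h n
  ext k
  have him : ∀ ρ : Equiv.Perm (Fin n),
      Finset.image ρ (univ.filter fun l => ρ l ≤ ρ k) = Finset.Iic (ρ k) := by
    intro ρ
    ext v
    simp only [Finset.mem_image, mem_filter, mem_univ, true_and, Finset.mem_Iic]
    constructor
    · rintro ⟨l, hl, rfl⟩; exact hl
    · intro hv; exact ⟨ρ.symm v, by simp [hv], by simp⟩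
  have hseteq : (univ.filter fun l => σ l ≤ σ k) = (univ.filter fun l => τ l ≤ τ k) := by
    ext l
    simp only [mem_filter, mem_univ, true_and]
    exact hord l k l.isLt k.isLt
  have c1 : (univ.filter fun l => σ l ≤ σ k).card = (σ k : ℕ) + 1 := by
    rw [← Finset.card_image_of_injective _ σ.injective, him σ, Fin.card_Iic]
  have c2 : (univ.filter fun l => τ l ≤ τ k).card = (τ k : ℕ) + 1 := by
    rw [← Finset.card_image_of_injective _ τ.injective, him τ, Fin.card_Iic]
  have : (σ k : ℕ) = (τ k : ℕ) := by rw [hseteq] at c1; omega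
  exact this

/-- The (shifted) sequential-rank code of a permutation. -/
def permCode (n : ℕ) (σ : Equiv.Perm (Fin n)) : (t : Fin n) → Fin ((t : ℕ) + 1) :=
  fun t => ⟨relRank n σ t - 1, by have h1 := relRank_le σ t; omega⟩

lemma permCode_val {n : ℕ} (σ : Equiv.Perm (Fin n)) (t : Fin n) :
    (permCode n σ t : ℕ) = relRank n σ t - 1 := rfl

lemma permCode_injective {n : ℕ} : Function.Injective (permCode n) := by
  intro σ τ hst
  apply relRank_inj
  intro t
  have hv : (permCode n σ t : ℕ) = (permCode n τ t : ℕ) := by rw [hst]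
  rw [permCode_val, permCode_val] at hv
  have := relRank_pos σ t
  have := relRank_pos τ t
  omega

lemma card_filter_ge_coord (m r : ℕ) (h : r ≤ m) :
    (univ.filter fun y : Fin (m + 1) => r ≤ (y : ℕ)).card = m + 1 - r := by
  have heq : (univ.filter fun y : Fin (m + 1) => r ≤ (y : ℕ))
      = Finset.Ici (⟨r, by omega⟩ : Fin (m + 1)) := by
    ext y
    simp [Finset.mem_Ici, Fin.le_def]
  rw [heq, Fin.card_Ici]

lemma prod_Ico_sub (a b r : ℕ) (hab : a ≤ b) :
    (∏ t ∈ Finset.Ico a b, (t + 1 - r)) = Nat.descFactorial (b - r) (b - a) := by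
  have hb : b = a + (b - a) := by omega
  rw [Finset.prod_Ico_eq_prod_range, Nat.descFactorial_eq_prod_range]
  rw [← Finset.prod_range_reflect (fun j => a + j + 1 - r) (b - a)]
  apply Finset.prod_congr rfl
  intro j hj
  rw [Finset.mem_range] at hj
  omega

/-- The per-coordinate constraint corresponding to the double-minimum event. -/
def Qpred (s₁ s₂ i r₁ r₂ : ℕ) {n : ℕ} (t : Fin n) (y : Fin ((t : ℕ) + 1)) : Prop :=
  (s₁ ≤ (t : ℕ) → (t : ℕ) < s₂ → r₁ ≤ (y : ℕ)) ∧
  (s₂ ≤ (t : ℕ) → (t : ℕ) ≤ i - 2 → r₂ ≤ (y : ℕ))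

instance Qpred.decidable (s₁ s₂ i r₁ r₂ : ℕ) {n : ℕ} (t : Fin n) :
    DecidablePred (Qpred s₁ s₂ i r₁ r₂ t) := fun y => by
  unfold Qpred; infer_instance

lemma coord_card (n r₁ r₂ s₁ s₂ i : ℕ)
    (hr1 : 1 ≤ r₁) (hr12 : r₁ < r₂) (hr1s1 : r₁ ≤ s₁) (hs12 : s₁ < s₂)
    (hr2s2 : r₂ ≤ s₂) (hs2i : s₂ + 2 ≤ i) (t : Fin n) :
    ((univ.filter (fun y => Qpred s₁ s₂ i r₁ r₂ t y)).card : ℕ)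
      = if (t : ℕ) < s₁ then (t : ℕ) + 1
        else if (t : ℕ) < s₂ then (t : ℕ) + 1 - r₁
        else if (t : ℕ) < i - 1 then (t : ℕ) + 1 - r₂
        else (t : ℕ) + 1 := by
  classical
  by_cases h1 : (t : ℕ) < s₁
  · rw [if_pos h1]
    have heq : (univ.filter (fun y => Qpred s₁ s₂ i r₁ r₂ t y)) = univ := by
      apply Finset.filter_true_of_mem
      intro y _
      exact ⟨fun ha => absurd ha (by omega), fun ha => absurd ha (by omega)⟩
    rw [heq, Finset.card_univ, Fintype.card_fin]
  · rw [if_neg h1]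
    by_cases h2 : (t : ℕ) < s₂
    · rw [if_pos h2]
      have heq : (univ.filter (fun y => Qpred s₁ s₂ i r₁ r₂ t y))
          = (univ.filter (fun y : Fin ((t : ℕ) + 1) => r₁ ≤ (y : ℕ))) := by
        apply Finset.filter_congr
        intro y _
        constructor
        · intro hq; exact hq.1 (by omega) h2
        · intro hr; exact ⟨fun _ _ => hr, fun ha _ => absurd ha (by omega)⟩
      rw [heq, card_filter_ge_coord _ _ (by omega)]
    · rw [if_neg h2]
      by_cases h3 : (t : ℕ) < i - 1
      · rw [if_pos h3]
        have heq : (univ.filter (fun y => Qpred s₁ s₂ i r₁ r₂ t y))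
            = (univ.filter (fun y : Fin ((t : ℕ) + 1) => r₂ ≤ (y : ℕ))) := by
          apply Finset.filter_congr
          intro y _
          constructor
          · intro hq; exact hq.2 (by omega) (by omega)
          · intro hr; exact ⟨fun _ hb => absurd hb (by omega), fun _ _ => hr⟩
        rw [heq, card_filter_ge_coord _ _ (by omega)]
      · rw [if_neg h3]
        have heq : (univ.filter (fun y => Qpred s₁ s₂ i r₁ r₂ t y)) = univ := by
          apply Finset.filter_true_of_mem
          intro y _
          exact ⟨fun _ hb => absurd hb (by omega), fun _ hb => absurd hb (by omega)⟩
        rw [heq, Finset.card_univ, Fintype.card_fin]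

lemma split_prod (n r₁ r₂ s₁ s₂ i : ℕ)
    (hr1 : 1 ≤ r₁) (hr12 : r₁ < r₂) (hr1s1 : r₁ ≤ s₁) (hs12 : s₁ < s₂)
    (hr2s2 : r₂ ≤ s₂) (hs2i : s₂ + 2 ≤ i) (hin : i ≤ n) :
    (∏ t ∈ Finset.range n,
        (if t < s₁ then t + 1
         else if t < s₂ then t + 1 - r₁
         else if t < i - 1 then t + 1 - r₂
         else t + 1))
      = Nat.factorial s₁ * Nat.descFactorial (s₂ - r₁) (s₂ - s₁)
        * Nat.descFactorial (i - 1 - r₂) (i - 1 - s₂)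
        * Nat.descFactorial n (n - (i - 1)) := by
  rw [Finset.range_eq_Ico,
    ← Finset.prod_Ico_consecutive _ (Nat.zero_le s₁) (by omega : s₁ ≤ n),
    ← Finset.prod_Ico_consecutive _ (by omega : s₁ ≤ s₂) (by omega : s₂ ≤ n),
    ← Finset.prod_Ico_consecutive _ (by omega : s₂ ≤ i - 1) (by omega : i - 1 ≤ n)]
  have p1 : (∏ t ∈ Finset.Ico 0 s₁,
      (if t < s₁ then t + 1
       else if t < s₂ then t + 1 - r₁
       else if t < i - 1 then t + 1 - r₂
       else t + 1)) = Nat.factorial s₁ := by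
    have h : ∀ t ∈ Finset.Ico 0 s₁,
        (if t < s₁ then t + 1
         else if t < s₂ then t + 1 - r₁
         else if t < i - 1 then t + 1 - r₂
         else t + 1) = t + 1 - 0 := by
      intro t ht
      rw [Finset.mem_Ico] at ht
      rw [if_pos ht.2]
      omega
    rw [Finset.prod_congr rfl h, prod_Ico_sub 0 s₁ 0 (Nat.zero_le _)]
    simp [Nat.descFactorial_self]
  have p2 : (∏ t ∈ Finset.Ico s₁ s₂,
      (if t < s₁ then t + 1
       else if t < s₂ then t + 1 - r₁
       else if t < i - 1 then t + 1 - r₂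
       else t + 1)) = Nat.descFactorial (s₂ - r₁) (s₂ - s₁) := by
    have h : ∀ t ∈ Finset.Ico s₁ s₂,
        (if t < s₁ then t + 1
         else if t < s₂ then t + 1 - r₁
         else if t < i - 1 then t + 1 - r₂
         else t + 1) = t + 1 - r₁ := by
      intro t ht
      rw [Finset.mem_Ico] at ht
      rw [if_neg (by omega), if_pos ht.2]
    rw [Finset.prod_congr rfl h, prod_Ico_sub s₁ s₂ r₁ (by omega)]
  have p3 : (∏ t ∈ Finset.Ico s₂ (i - 1),
      (if t < s₁ then t + 1
       else if t < s₂ then t + 1 - r₁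
       else if t < i - 1 then t + 1 - r₂
       else t + 1)) = Nat.descFactorial (i - 1 - r₂) (i - 1 - s₂) := by
    have h : ∀ t ∈ Finset.Ico s₂ (i - 1),
        (if t < s₁ then t + 1
         else if t < s₂ then t + 1 - r₁
         else if t < i - 1 then t + 1 - r₂
         else t + 1) = t + 1 - r₂ := by
      intro t ht
      rw [Finset.mem_Ico] at ht
      rw [if_neg (by omega), if_neg (by omega), if_pos ht.2]
    rw [Finset.prod_congr rfl h, prod_Ico_sub s₂ (i - 1) r₂ (by omega)]
  have p4 : (∏ t ∈ Finset.Ico (i - 1) n,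
      (if t < s₁ then t + 1
       else if t < s₂ then t + 1 - r₁
       else if t < i - 1 then t + 1 - r₂
       else t + 1)) = Nat.descFactorial n (n - (i - 1)) := by
    have h : ∀ t ∈ Finset.Ico (i - 1) n,
        (if t < s₁ then t + 1
         else if t < s₂ then t + 1 - r₁
         else if t < i - 1 then t + 1 - r₂
         else t + 1) = t + 1 - 0 := by
      intro t ht
      rw [Finset.mem_Ico] at ht
      rw [if_neg (by omega), if_neg (by omega), if_neg (by omega)]
      omega
    rw [Finset.prod_congr rfl h, prod_Ico_sub (i - 1) n 0 (by omega), Nat.sub_zero]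
  rw [p1, p2, p3, p4]
  ring

/-- In a uniformly random permutation of `{1,...,n}` with relative ranks `Yᵢ`, for rank
levels `1 ≤ r₁ < r₂`, position thresholds `r₁ ≤ s₁ < s₂ ≤ n-1` with `r₂ ≤ s₂`, and
`s₂+2 ≤ i ≤ n`, the probability
`P(min{Y_{s₁+1},...,Y_{s₂}} > r₁ ∧ min{Y_{s₂+1},...,Y_{i-1}} > r₂)`
equals `(s₁)_{r₁}·(s₂-r₁)_{r₂-r₁} / (i-1)_{r₂}`. -/
theorem prob_double_min_relRank_gt (n r₁ r₂ s₁ s₂ i : ℕ)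
    (hr1 : 1 ≤ r₁) (hr12 : r₁ < r₂) (hr1s1 : r₁ ≤ s₁) (hs12 : s₁ < s₂)
    (hs2n : s₂ ≤ n - 1) (hr2s2 : r₂ ≤ s₂) (hs2i : s₂ + 2 ≤ i) (hin : i ≤ n) :
    ((Finset.univ.filter (fun σ : Equiv.Perm (Fin n) =>
        (∀ t : Fin n, s₁ ≤ (t : ℕ) → (t : ℕ) < s₂ → r₁ < relRank n σ t) ∧
        (∀ t : Fin n, s₂ ≤ (t : ℕ) → (t : ℕ) ≤ i - 2 → r₂ < relRank n σ t))).card : ℝ)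
      / (Nat.factorial n : ℝ)
    = ((Nat.descFactorial s₁ r₁ * Nat.descFactorial (s₂ - r₁) (r₂ - r₁) : ℕ) : ℝ)
      / (Nat.descFactorial (i - 1) r₂ : ℝ) := by
  classical
  have hn : 4 ≤ n := by omega
  -- arithmetic facts, proven early while the context is clean for `omega`
  have a1 : s₂ - s₁ ≤ s₂ - r₁ := by omega
  have a2 : i - 1 - s₂ ≤ i - 1 - r₂ := by omega
  have a3 : n - (i - 1) ≤ n := by omega
  have a4 : r₁ ≤ s₁ := hr1s1
  have a5 : r₂ - r₁ ≤ s₂ - r₁ := by omega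
  have a6 : r₂ ≤ i - 1 := by omega
  have e1 : s₂ - r₁ - (s₂ - s₁) = s₁ - r₁ := by omega
  have e2 : i - 1 - r₂ - (i - 1 - s₂) = s₂ - r₂ := by omega
  have e3 : n - (n - (i - 1)) = i - 1 := by omega
  have e4 : s₂ - r₁ - (r₂ - r₁) = s₂ - r₂ := by omega
  have hcards : Fintype.card (Equiv.Perm (Fin n))
      = Fintype.card ((t : Fin n) → Fin ((t : ℕ) + 1)) := by
    rw [Fintype.card_perm, Fintype.card_fin, Fintype.card_pi]
    simp only [Fintype.card_fin]
    rw [Fin.prod_univ_eq_prod_range (fun t => t + 1) n, Finset.range_eq_Ico]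
    have h0 := prod_Ico_sub 0 n 0 (Nat.zero_le n)
    simp only [Nat.sub_zero] at h0
    rw [h0, Nat.descFactorial_self]
  have hbij : Function.Bijective (permCode n) :=
    (Fintype.bijective_iff_injective_and_card _).mpr ⟨permCode_injective, hcards⟩
  have hCD : ∀ σ : Equiv.Perm (Fin n),
      ((∀ t : Fin n, s₁ ≤ (t : ℕ) → (t : ℕ) < s₂ → r₁ < relRank n σ t) ∧
       (∀ t : Fin n, s₂ ≤ (t : ℕ) → (t : ℕ) ≤ i - 2 → r₂ < relRank n σ t))
      ↔ ∀ t, Qpred s₁ s₂ i r₁ r₂ t (permCode n σ t) := by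
    intro σ
    constructor
    · rintro ⟨h1, h2⟩ t
      have hp := relRank_pos σ t
      refine ⟨fun ha hb => ?_, fun ha hb => ?_⟩
      · have := h1 t ha hb; rw [permCode_val]; omega
      · have := h2 t ha hb; rw [permCode_val]; omega
    · intro h
      refine ⟨fun t ha hb => ?_, fun t ha hb => ?_⟩
      · have := (h t).1 ha hb; rw [permCode_val] at this
        have hp := relRank_pos σ t; omega
      · have := (h t).2 ha hb; rw [permCode_val] at this
        have hp := relRank_pos σ t; omega
  have hcard1 : (Finset.univ.filter (fun σ : Equiv.Perm (Fin n) =>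
        (∀ t : Fin n, s₁ ≤ (t : ℕ) → (t : ℕ) < s₂ → r₁ < relRank n σ t) ∧
        (∀ t : Fin n, s₂ ≤ (t : ℕ) → (t : ℕ) ≤ i - 2 → r₂ < relRank n σ t))).card
      = (Finset.univ.filter (fun y : (t : Fin n) → Fin ((t : ℕ) + 1) =>
          ∀ t, Qpred s₁ s₂ i r₁ r₂ t (y t))).card := by
    apply Finset.card_bij' (fun σ _ => permCode n σ)
      (fun y _ => (Equiv.ofBijective (permCode n) hbij).symm y)
    · intro σ hσ
      rw [Finset.mem_filter] at hσ ⊢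
      exact ⟨Finset.mem_univ _, (hCD σ).mp hσ.2⟩
    · intro y hy
      rw [Finset.mem_filter] at hy ⊢
      refine ⟨Finset.mem_univ _, (hCD _).mpr ?_⟩
      have hy2 : permCode n ((Equiv.ofBijective (permCode n) hbij).symm y) = y :=
        (Equiv.ofBijective (permCode n) hbij).apply_symm_apply y
      rw [hy2]
      exact hy.2
    · intro σ _
      exact (Equiv.ofBijective (permCode n) hbij).symm_apply_apply σ
    · intro y _
      exact (Equiv.ofBijective (permCode n) hbij).apply_symm_apply y
  have hpi : (Finset.univ.filter (fun y : (t : Fin n) → Fin ((t : ℕ) + 1) =>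
        ∀ t, Qpred s₁ s₂ i r₁ r₂ t (y t)))
      = Fintype.piFinset (fun t : Fin n => univ.filter (fun y => Qpred s₁ s₂ i r₁ r₂ t y)) := by
    ext y
    simp [Fintype.mem_piFinset]
  have hprod : (Finset.univ.filter (fun y : (t : Fin n) → Fin ((t : ℕ) + 1) =>
        ∀ t, Qpred s₁ s₂ i r₁ r₂ t (y t))).card
      = ∏ t ∈ Finset.range n,
          (if t < s₁ then t + 1
           else if t < s₂ then t + 1 - r₁
           else if t < i - 1 then t + 1 - r₂
           else t + 1) := by
    rw [hpi, Fintype.card_piFinset]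
    rw [← Fin.prod_univ_eq_prod_range (fun t =>
          (if t < s₁ then t + 1
           else if t < s₂ then t + 1 - r₁
           else if t < i - 1 then t + 1 - r₂
           else t + 1)) n]
    exact Finset.prod_congr rfl
      (fun t _ => coord_card n r₁ r₂ s₁ s₂ i hr1 hr12 hr1s1 hs12 hr2s2 hs2i t)
  rw [hcard1, hprod, split_prod n r₁ r₂ s₁ s₂ i hr1 hr12 hr1s1 hs12 hr2s2 hs2i hin]
  have hcast : ∀ a k : ℕ, k ≤ a →
      (Nat.descFactorial a k : ℝ) = (Nat.factorial a : ℝ) / (Nat.factorial (a - k) : ℝ) := by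
    intro a k hk
    rw [eq_div_iff (by exact_mod_cast Nat.factorial_ne_zero _)]
    exact_mod_cast (mul_comm ((a - k).factorial) (a.descFactorial k)) ▸
      Nat.factorial_mul_descFactorial hk
  push_cast
  rw [hcast (s₂ - r₁) (s₂ - s₁) a1, hcast (i - 1 - r₂) (i - 1 - s₂) a2,
    hcast n (n - (i - 1)) a3, hcast s₁ r₁ a4,
    hcast (s₂ - r₁) (r₂ - r₁) a5, hcast (i - 1) r₂ a6]
  rw [e1, e2, e3, e4]
  have f1 : (Nat.factorial (s₁ - r₁) : ℝ) ≠ 0 := by exact_mod_cast Nat.factorial_ne_zero _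
  have f2 : (Nat.factorial (s₂ - r₂) : ℝ) ≠ 0 := by exact_mod_cast Nat.factorial_ne_zero _
  have f3 : (Nat.factorial (i - 1) : ℝ) ≠ 0 := by exact_mod_cast Nat.factorial_ne_zero _
  have f4 : (Nat.factorial n : ℝ) ≠ 0 := by exact_mod_cast Nat.factorial_ne_zero _
  have f5 : (Nat.factorial (i - 1 - r₂) : ℝ) ≠ 0 := by exact_mod_cast Nat.factorial_ne_zero _
  field_simp
end

section
/- For the single-level policy π(s,r) with r ≤ s ≤ n-2 applied to a uniformly random permutation of n candidates, the probability of selecting a candidate of absolute rank ≤ b equals Σ_{i=s+1}^{n-1} [(s)_r/(i-1)_r]·( r/n + (1/n)Σ_{j=r+1}^{b} Σ_{k=1}^{r} C(j-1,k-1)C(n-j,i-k)/C(n-1,i-1) ) + [(s)_r/(n-1)_r]·(b/n). -/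
open Finset

namespace SLP

variable {n : ℕ}

/-- transfer Fin-filter cards to range-filter cards -/
lemma card_val_filter (P : ℕ → Prop) [DecidablePred P] :
    ((univ : Finset (Fin n)).filter (fun u => P u.val)).card
      = ((Finset.range n).filter P).card := by
  apply Finset.card_bij (fun u _ => u.val)
  · intro a ha; simp only [mem_filter, mem_range, mem_univ, true_and] at *
    exact ⟨a.isLt, ha⟩
  · intro a _ b _ h; exact Fin.ext h
  · intro c hc; simp only [mem_filter, mem_range] at hc
    exact ⟨⟨c, hc.1⟩, by simp [hc.2], rfl⟩

lemma card_val_le (t : ℕ) (ht : t < n) :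
    ((univ : Finset (Fin n)).filter (fun u => u.val ≤ t)).card = t + 1 := by
  rw [card_val_filter (fun x => x ≤ t)]
  have : (Finset.range n).filter (fun x => x ≤ t) = Finset.range (t+1) := by
    ext x; simp only [mem_filter, mem_range]; omega
  rw [this, Finset.card_range]

lemma card_val_lt (t : ℕ) (ht : t ≤ n) :
    ((univ : Finset (Fin n)).filter (fun u => u.val < t)).card = t := by
  rw [card_val_filter (fun x => x < t)]
  have : (Finset.range n).filter (fun x => x < t) = Finset.range t := by
    ext x; simp only [mem_filter, mem_range]; omega
  rw [this, Finset.card_range]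

lemma card_val_lt' (bb : ℕ) (hb : bb ≤ n) :
    ((univ : Finset (Fin n)).filter (fun u : Fin n => u.val + 1 ≤ bb)).card = bb := by
  simpa using card_val_lt (n := n) bb hb

/-- RANKSET: relRank expressed via the image of early positions. -/
lemma relRank_eq_card_image (σ : Equiv.Perm (Fin n)) (t : Fin n) :
    relRank n σ t
      = ((((univ : Finset (Fin n)).filter (fun k => k ≤ t)).image σ).filter
          (· ≤ σ t)).card := by
  rw [relRank]
  rw [Finset.filter_image]
  rw [Finset.card_image_of_injective _ σ.injective]
  congr 1
  ext k
  simp [Finset.mem_filter, and_assoc]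

lemma image_compl (e : Equiv.Perm (Fin n)) (A : Finset (Fin n)) :
    Finset.image e Aᶜ = (Finset.image e A)ᶜ := by
  ext y
  simp only [Finset.mem_image, Finset.mem_compl]
  constructor
  · rintro ⟨a, ha, rfl⟩ ⟨b, hb, hba⟩
    exact ha (by rwa [← e.injective hba])
  · intro h
    exact ⟨e.symm y, fun hmem => h ⟨e.symm y, hmem, e.apply_symm_apply y⟩,
      e.apply_symm_apply y⟩

/-- perms agreeing on late positions have the same image of early positions -/
lemma image_early_eq {σ σ' : Equiv.Perm (Fin n)} {c : ℕ}
    (h : ∀ u : Fin n, c ≤ u.val → σ u = σ' u) :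
    ((univ : Finset (Fin n)).filter (fun u => u.val < c)).image σ
      = ((univ : Finset (Fin n)).filter (fun u => u.val < c)).image σ' := by
  have hA : ((univ : Finset (Fin n)).filter (fun u => u.val < c))
      = ((univ : Finset (Fin n)).filter (fun u => c ≤ u.val))ᶜ := by
    ext u; simp only [mem_filter, mem_univ, true_and, Finset.mem_compl, not_le]
  have hlate : ((univ : Finset (Fin n)).filter (fun u => c ≤ u.val)).image σ
      = ((univ : Finset (Fin n)).filter (fun u => c ≤ u.val)).image σ' := by
    apply Finset.image_congr
    intro u hu
    simp only [Finset.coe_filter, Set.mem_setOf_eq] at hu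
    exact h u hu.2
  rw [hA, image_compl, image_compl, hlate]

/-- rank of the i-th element of a finset -/
lemma rank_orderIso (S : Finset (Fin n)) {m : ℕ} (h : S.card = m) (i : Fin m) :
    (S.filter (· ≤ (S.orderIsoOfFin h i : Fin n))).card = i + 1 := by
  set e := S.orderIsoOfFin h with he
  have himg : S.filter (· ≤ (e i : Fin n))
      = ((univ : Finset (Fin m)).filter (fun k => k ≤ i)).image (fun k => (e k : Fin n)) := by
    ext y
    simp only [mem_filter, mem_image, mem_univ, true_and]
    constructor
    · rintro ⟨hyS, hy⟩
      refine ⟨e.symm ⟨y, hyS⟩, ?_, by simp⟩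
      have : e (e.symm ⟨y, hyS⟩) ≤ e i := by
        rw [OrderIso.apply_symm_apply]; exact hy
      exact e.le_iff_le.mp this
    · rintro ⟨k, hk, rfl⟩
      exact ⟨(e k).2, by exact_mod_cast e.le_iff_le.mpr hk⟩
  rw [himg, Finset.card_image_of_injective _ (by
    intro a c hac
    exact e.injective (Subtype.ext hac))]
  have h2 : ((univ : Finset (Fin m)).filter (fun k => k ≤ i)).card = i.val + 1 := by
    simp only [Fin.le_def]
    exact card_val_le i.val i.isLt
  exact h2

lemma card_rank_gt (S : Finset (Fin n)) (r : ℕ) :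
    (S.filter (fun x => r < (S.filter (· ≤ x)).card)).card = S.card - r := by
  set m := S.card with hm
  set e := S.orderIsoOfFin hm.symm with he
  have himg : S.filter (fun x => r < (S.filter (· ≤ x)).card)
      = ((univ : Finset (Fin m)).filter (fun i => r < i.val + 1)).image
          (fun i => (e i : Fin n)) := by
    ext y
    simp only [mem_filter, mem_image, mem_univ, true_and]
    constructor
    · rintro ⟨hyS, hy⟩
      refine ⟨e.symm ⟨y, hyS⟩, ?_, by simp⟩
      have hr := rank_orderIso S hm.symm (e.symm ⟨y, hyS⟩)
      rw [← he] at hr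
      simp only [Equiv.apply_symm_apply, OrderIso.apply_symm_apply] at hr
      omega
    · rintro ⟨i, hi, rfl⟩
      refine ⟨(e i).2, ?_⟩
      have hr := rank_orderIso S hm.symm i
      rw [← he] at hr
      omega
  rw [himg, Finset.card_image_of_injective _ (by
    intro a c hac; exact e.injective (Subtype.ext hac))]
  rw [card_val_filter (fun v => r < v + 1)]
  have : (Finset.range m).filter (fun v => r < v + 1) = Finset.Ico r m := by
    ext x; simp only [mem_filter, mem_range, mem_Ico]; omega
  rw [this, Nat.card_Ico]

/-- the count of prefix patterns -/
def Afun (s r t : ℕ) : ℕ :=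
  if t ≤ s then t.factorial else s.factorial * Nat.descFactorial (t - r) (t - s)

lemma Afun_le {s r t : ℕ} (h : t ≤ s) : Afun s r t = t.factorial := if_pos h

lemma Afun_succ_lt {s r t : ℕ} (h : t < s) : Afun s r (t + 1) = (t + 1) * Afun s r t := by
  rw [Afun_le h.le, Afun_le h, Nat.factorial_succ]

lemma Afun_succ_ge {s r t : ℕ} (hrs : r ≤ s) (h : s ≤ t) :
    Afun s r (t + 1) = (t + 1 - r) * Afun s r t := by
  rcases eq_or_lt_of_le h with rfl | hlt
  · rw [Afun_le le_rfl, Afun]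
    simp only [Nat.add_sub_cancel_left, if_neg (by omega : ¬ s + 1 ≤ s)]
    rw [Nat.descFactorial_one]
    ring
  · rw [Afun, Afun, if_neg (by omega : ¬ t + 1 ≤ s), if_neg (by omega : ¬ t ≤ s)]
    have h1 : t + 1 - r = (t - r) + 1 := by omega
    have h2 : t + 1 - s = (t - s) + 1 := by omega
    rw [h1, h2, Nat.succ_descFactorial_succ]
    ring

lemma Afun_mul_desc {s r t : ℕ} (hr : 1 ≤ r) (hrs : r ≤ s) (h : s ≤ t) :
    Afun s r t * t.descFactorial r = t.factorial * s.descFactorial r := by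
  induction t, h using Nat.le_induction with
  | base => rw [Afun_le le_rfl]
  | succ t ht ih =>
    obtain ⟨r', rfl⟩ : ∃ r', r = r' + 1 := ⟨r - 1, by omega⟩
    rw [Afun_succ_ge hrs ht, Nat.succ_descFactorial_succ, Nat.factorial_succ]
    have hd : t.descFactorial (r' + 1) = (t - r') * t.descFactorial r' :=
      Nat.descFactorial_succ t r'
    have h1 : t + 1 - (r' + 1) = t - r' := by omega
    calc (t + 1 - (r' + 1)) * Afun s (r' + 1) t * ((t + 1) * t.descFactorial r')
        = (t + 1) * ((Afun s (r' + 1) t) * ((t - r') * t.descFactorial r')) := by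
          rw [h1]; ring
      _ = (t + 1) * (t.factorial * s.descFactorial (r' + 1)) := by rw [← hd, ih]
      _ = (t + 1) * t.factorial * s.descFactorial (r' + 1) := by ring

/-- permutations with tail (positions ≥ t) prescribed by ψ and relative-rank
constraints on positions in `[s, t)`. -/
def Gset (n s r t : ℕ) (ψ : Fin n → Fin n) : Finset (Equiv.Perm (Fin n)) :=
  univ.filter (fun σ => (∀ u : Fin n, t ≤ u.val → σ u = ψ u) ∧
    ∀ u : Fin n, s ≤ u.val → u.val < t → r < relRank n σ u)

lemma image_le_eq {σ σ' : Equiv.Perm (Fin n)} {t : ℕ}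
    (h : ∀ u : Fin n, t + 1 ≤ u.val → σ u = σ' u) :
    ((univ : Finset (Fin n)).filter (fun u => u.val ≤ t)).image σ
      = ((univ : Finset (Fin n)).filter (fun u => u.val ≤ t)).image σ' := by
  have hpred : ((univ : Finset (Fin n)).filter (fun u => u.val ≤ t))
      = ((univ : Finset (Fin n)).filter (fun u => u.val < t + 1)) := by
    ext u; simp [Nat.lt_succ_iff]
  rw [hpred]
  exact image_early_eq h

lemma relRank_tail {σ : Equiv.Perm (Fin n)} {t : ℕ} (ht : t < n) {S : Finset (Fin n)}
    (hS : ((univ : Finset (Fin n)).filter (fun u => u.val ≤ t)).image σ = S) :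
    relRank n σ ⟨t, ht⟩ = (S.filter (· ≤ σ ⟨t, ht⟩)).card := by
  have hfil : ((univ : Finset (Fin n)).filter (fun k => k ≤ (⟨t, ht⟩ : Fin n)))
      = ((univ : Finset (Fin n)).filter (fun u => u.val ≤ t)) := by
    ext u; simp [Fin.le_def]
  rw [relRank_eq_card_image, hfil, hS]

lemma Gset_card {s r : ℕ} (hrs : r ≤ s) :
    ∀ t, t ≤ n → ∀ ψ : Fin n → Fin n,
    (∃ σ₀ : Equiv.Perm (Fin n), ∀ u : Fin n, t ≤ u.val → σ₀ u = ψ u) →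
    (Gset n s r t ψ).card = Afun s r t := by
  intro t
  induction t with
  | zero =>
    rintro _ ψ ⟨σ₀, hσ₀⟩
    have hset : Gset n s r 0 ψ = {σ₀} := by
      ext σ
      simp only [Gset, mem_filter, mem_univ, true_and, Finset.mem_singleton]
      constructor
      · rintro ⟨h1, _⟩
        exact Equiv.ext fun u => (h1 u (Nat.zero_le _)).trans (hσ₀ u (Nat.zero_le _)).symm
      · rintro rfl
        exact ⟨hσ₀, fun u _ h => absurd h (by omega)⟩
    rw [hset, Finset.card_singleton, Afun_le (Nat.zero_le s), Nat.factorial_zero]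
  | succ t ih =>
    rintro ht1 ψ ⟨σ₀, hσ₀⟩
    have htn : t < n := ht1
    set tf : Fin n := ⟨t, htn⟩ with htf
    set S' : Finset (Fin n) :=
      ((univ : Finset (Fin n)).filter (fun u => u.val ≤ t)).image σ₀ with hS'
    -- every permutation with the same tail from t+1 has the same prefix image
    have key : ∀ σ : Equiv.Perm (Fin n), (∀ u : Fin n, t + 1 ≤ u.val → σ u = ψ u) →
        ((univ : Finset (Fin n)).filter (fun u => u.val ≤ t)).image σ = S' := by
      intro σ hσ
      exact image_le_eq (fun u hu => (hσ u hu).trans (hσ₀ u hu).symm)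
    have hrank : ∀ σ : Equiv.Perm (Fin n), (∀ u : Fin n, t + 1 ≤ u.val → σ u = ψ u) →
        relRank n σ tf = (S'.filter (· ≤ σ tf)).card := fun σ hσ =>
      relRank_tail htn (key σ hσ)
    set X : Finset (Fin n) :=
      S'.filter (fun x' => s ≤ t → r < (S'.filter (· ≤ x')).card) with hX
    have hGt : Gset n s r (t + 1) ψ
        = X.biUnion (fun x' => Gset n s r t (Function.update ψ tf x')) := by
      ext σ
      simp only [Gset, mem_filter, mem_univ, true_and, Finset.mem_biUnion]
      constructor
      · rintro ⟨h1, h2⟩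
        have h1' : ∀ u : Fin n, t + 1 ≤ u.val → σ u = ψ u := fun u hu => h1 u (by omega)
        refine ⟨σ tf, ?_, ?_, ?_⟩
        · rw [hX, Finset.mem_filter]
          constructor
          · rw [← key σ h1']
            exact Finset.mem_image_of_mem σ (by simp [htf])
          · intro hst
            rw [← hrank σ h1']
            have htv : (tf : ℕ) = t := rfl
            exact h2 tf (by omega) (by omega)
        · intro u hu
          rcases eq_or_lt_of_le hu with heq | hlt
          · have : u = tf := Fin.ext heq.symm
            rw [this, Function.update_self]
          · have htv : (tf : ℕ) = t := rfl
            rw [Function.update_of_ne (by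
              intro hc; rw [hc] at hlt; omega)]
            exact h1 u (by omega)
        · intro u hsu hut
          exact h2 u hsu (by omega)
      · rintro ⟨x', hx', h1, h2⟩
        have hσtf : σ tf = x' := by
          have := h1 tf le_rfl
          rwa [Function.update_self] at this
        have htv : (tf : ℕ) = t := rfl
        have h1' : ∀ u : Fin n, t + 1 ≤ u.val → σ u = ψ u := by
          intro u hu
          have := h1 u (by omega)
          rwa [Function.update_of_ne (by
            intro hc; rw [hc] at hu; omega)] at this
        refine ⟨h1', ?_⟩
        · intro u hsu hut
          rcases Nat.lt_succ_iff_lt_or_eq.mp hut with hlt | heq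
          · exact h2 u hsu hlt
          · have : u = tf := Fin.ext (by omega)
            rw [this, hrank σ h1', hσtf]
            rw [hX, Finset.mem_filter] at hx'
            exact hx'.2 (heq ▸ hsu)
    have hdisj : ∀ x₁ ∈ X, ∀ x₂ ∈ X, x₁ ≠ x₂ →
        Disjoint (Gset n s r t (Function.update ψ tf x₁))
          (Gset n s r t (Function.update ψ tf x₂)) := by
      intro x₁ _ x₂ _ hne
      rw [Finset.disjoint_left]
      intro σ hσ1 hσ2
      simp only [Gset, mem_filter, mem_univ, true_and] at hσ1 hσ2
      apply hne
      have e1 := hσ1.1 tf le_rfl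
      have e2 := hσ2.1 tf le_rfl
      rw [Function.update_self] at e1 e2
      rw [← e1, ← e2]
    have hcards : ∀ x' ∈ X, (Gset n s r t (Function.update ψ tf x')).card = Afun s r t := by
      intro x' hx'
      apply ih (by omega)
      -- witness: swap the position of x' with position t
      rw [hX, Finset.mem_filter] at hx'
      have hx'S : x' ∈ S' := hx'.1
      rw [hS', Finset.mem_image] at hx'S
      obtain ⟨p, hp, hpx⟩ := hx'S
      simp only [mem_filter, mem_univ, true_and] at hp
      refine ⟨σ₀ * Equiv.swap p tf, ?_⟩
      intro u hu
      rcases eq_or_lt_of_le hu with heq | hlt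
      · have hutf : u = tf := Fin.ext heq.symm
        rw [hutf, Function.update_self]
        simp only [Equiv.Perm.mul_apply]
        rw [Equiv.swap_apply_right]
        exact hpx
      · have hup : u ≠ p := by
          intro hc; rw [hc] at hlt; omega
        have hutf : u ≠ tf := by
          intro hc; rw [hc] at hlt
          have htv : (tf : ℕ) = t := rfl
          omega
        rw [Function.update_of_ne hutf]
        simp only [Equiv.Perm.mul_apply]
        rw [Equiv.swap_apply_of_ne_of_ne hup hutf]
        exact hσ₀ u (by omega)
    rw [hGt, Finset.card_biUnion hdisj]
    rw [Finset.sum_congr rfl hcards, Finset.sum_const, smul_eq_mul]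
    have hS'card : S'.card = t + 1 := by
      rw [hS', Finset.card_image_of_injective _ σ₀.injective]
      exact card_val_le t htn
    by_cases hst : s ≤ t
    · have hXeq : X = S'.filter (fun x' => r < (S'.filter (· ≤ x')).card) := by
        apply Finset.filter_congr
        intro x _
        simp [hst]
      rw [hXeq, card_rank_gt, hS'card, Afun_succ_ge hrs hst]
    · have hXeq : X = S' := by
        rw [hX]
        apply Finset.filter_true_of_mem
        intro x _ hc
        exact absurd hc hst
      rw [hXeq, hS'card, Afun_succ_lt (by omega)]

lemma relRank_of_mono_prefix {σ : Equiv.Perm (Fin n)} {u : Fin n}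
    (h : ∀ k : Fin n, k ≤ u → σ k ≤ σ u) : relRank n σ u = u.val + 1 := by
  have : (Finset.univ.filter (fun k : Fin n => k ≤ u ∧ σ k ≤ σ u))
      = (Finset.univ.filter (fun k : Fin n => k.val ≤ u.val)) := by
    ext k
    simp only [mem_filter, mem_univ, true_and, Fin.le_def]
    exact ⟨fun hk => hk.1, fun hk => ⟨hk, h k hk⟩⟩
  rw [relRank, this, card_val_le u.val u.isLt]

/-- permutations with given prefix-image, given value at position `tf`, and
rank constraints on `[s, tf)`. -/
def SCset (n s r : ℕ) (tf : Fin n) (x : Fin n) (S : Finset (Fin n)) :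
    Finset (Equiv.Perm (Fin n)) :=
  univ.filter (fun σ =>
    ((univ.filter (fun u : Fin n => u.val < tf.val)).image σ = S) ∧ σ tf = x ∧
    ∀ u : Fin n, s ≤ u.val → u.val < tf.val → r < relRank n σ u)

lemma SCset_card {s r : ℕ} (hrs : r ≤ s) (tf x : Fin n) (S : Finset (Fin n))
    (hS : S.card = tf.val) (hx : x ∉ S) :
    (SCset n s r tf x S).card = Afun s r tf.val * (n - 1 - tf.val).factorial := by
  classical
  set t := tf.val with htv
  have htn : t < n := tf.isLt
  set m := n - 1 - t with hm
  set τ : Equiv.Perm (Fin n) → (Fin n → Fin n) :=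
    fun σ u => if t + 1 ≤ u.val then σ u else x with hτ
  rw [Finset.card_eq_sum_card_image τ (SCset n s r tf x S)]
  -- each fiber has cardinality Afun s r t
  have hfiber : ∀ ψ ∈ (SCset n s r tf x S).image τ,
      ((SCset n s r tf x S).filter (fun σ => τ σ = ψ)).card = Afun s r t := by
    intro ψ hψ
    rw [Finset.mem_image] at hψ
    obtain ⟨σ₀, hσ₀S, hσ₀τ⟩ := hψ
    simp only [SCset, mem_filter, mem_univ, true_and] at hσ₀S
    obtain ⟨himg₀, hval₀, hrk₀⟩ := hσ₀S
    have hψval : ∀ u : Fin n, t + 1 ≤ u.val → ψ u = σ₀ u := by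
      intro u hu; rw [← hσ₀τ, hτ]; simp [hu]
    have hψx : ∀ u : Fin n, u.val < t + 1 → ψ u = x := by
      intro u hu; rw [← hσ₀τ, hτ]; simp [Nat.not_le.mpr hu]
    have hset : (SCset n s r tf x S).filter (fun σ => τ σ = ψ)
        = Gset n s r t (Function.update ψ tf x) := by
      ext σ
      simp only [SCset, Gset, mem_filter, mem_univ, true_and]
      constructor
      · rintro ⟨⟨himg, hval, hrk⟩, hτσ⟩
        refine ⟨?_, hrk⟩
        intro u hu
        rcases eq_or_lt_of_le hu with heq | hlt
        · have : u = tf := Fin.ext (by omega)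
          rw [this, Function.update_self, hval]
        · rw [Function.update_of_ne (by intro hc; rw [hc] at hlt; omega)]
          rw [← hτσ]
          simp only [hτ]
          rw [if_pos (show t + 1 ≤ u.val by omega)]
      · rintro ⟨htail, hrk⟩
        have hagree : ∀ u : Fin n, t ≤ u.val → σ u = σ₀ u := by
          intro u hu
          rcases eq_or_lt_of_le hu with heq | hlt
          · have hut : u = tf := Fin.ext (by omega)
            rw [hut, hval₀, htail tf (le_of_eq htv), Function.update_self]
          · rw [htail u hu, Function.update_of_ne (by intro hc; rw [hc] at hlt; omega)]
            exact hψval u (by omega)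
        refine ⟨⟨?_, ?_, hrk⟩, ?_⟩
        · rw [image_early_eq hagree]; exact himg₀
        · rw [htail tf (le_refl _), Function.update_self]
        · funext u
          by_cases hu : t + 1 ≤ u.val
          · rw [hτ]; simp only [if_pos hu]
            rw [htail u (by omega), Function.update_of_ne (by intro hc; rw [hc] at hu; omega)]
          · rw [hτ]; simp only [if_neg hu]
            exact (hψx u (by omega)).symm
    rw [hset]
    apply Gset_card hrs t (le_of_lt htn)
    refine ⟨σ₀, ?_⟩
    intro u hu
    rcases eq_or_lt_of_le hu with heq | hlt
    · have : u = tf := Fin.ext (by omega)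
      rw [this, Function.update_self, hval₀]
    · rw [Function.update_of_ne (by intro hc; rw [hc] at hlt; omega)]
      exact (hψval u (by omega)).symm
  rw [Finset.sum_congr rfl hfiber, Finset.sum_const, smul_eq_mul, mul_comm]
  congr 1
  -- now count the image: it is in bijection with embeddings Fin m ↪ R
  set R : Finset (Fin n) := (insert x S)ᶜ with hR
  have hRcard : R.card = m := by
    rw [hR, Finset.card_compl, Finset.card_insert_of_notMem hx, hS]
    simp only [Fintype.card_fin]
    omega
  have hmem : ∀ σ₀ ∈ SCset n s r tf x S, ∀ u : Fin n, t + 1 ≤ u.val → σ₀ u ∈ R := by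
    intro σ₀ h₀ u hu
    simp only [SCset, mem_filter, mem_univ, true_and] at h₀
    obtain ⟨himg₀, hval₀, -⟩ := h₀
    rw [hR, Finset.mem_compl, Finset.mem_insert]
    push_neg
    constructor
    · intro hc
      rw [← hval₀] at hc
      have := σ₀.injective hc
      rw [this] at hu; omega
    · intro hc
      rw [← himg₀, Finset.mem_image] at hc
      obtain ⟨w, hw, hww⟩ := hc
      simp only [mem_filter, mem_univ, true_and] at hw
      have := σ₀.injective hww
      rw [← this] at hu; omega
  have hidx : ∀ i : Fin m, t + 1 + i.val < n := by
    intro i; have := i.isLt; omega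
  have htau : ∀ σ₀ : Equiv.Perm (Fin n), ∀ u : Fin n, t + 1 ≤ u.val → τ σ₀ u = σ₀ u := by
    intro σ₀ u hu; simp only [hτ]; rw [if_pos hu]
  have htau' : ∀ σ₀ : Equiv.Perm (Fin n), ∀ u : Fin n, u.val < t + 1 → τ σ₀ u = x := by
    intro σ₀ u hu; simp only [hτ]; rw [if_neg (by omega)]
  have prf1 : ∀ ψ ∈ (SCset n s r tf x S).image τ, ∀ i : Fin m,
      ψ ⟨t + 1 + i.val, hidx i⟩ ∈ R := by
    intro ψ hψ i
    rw [Finset.mem_image] at hψ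
    obtain ⟨σ₀, h₀, rfl⟩ := hψ
    rw [htau σ₀ _ (Nat.le_add_right _ _)]
    exact hmem σ₀ h₀ _ (Nat.le_add_right _ _)
  have prf2 : ∀ ψ (hψ : ψ ∈ (SCset n s r tf x S).image τ),
      Function.Injective
        (fun i : Fin m => (⟨ψ ⟨t + 1 + i.val, hidx i⟩, prf1 ψ hψ i⟩ : {y // y ∈ R})) := by
    intro ψ hψ i₁ i₂ h12
    have hval : ψ ⟨t + 1 + i₁.val, hidx i₁⟩ = ψ ⟨t + 1 + i₂.val, hidx i₂⟩ :=
      Subtype.ext_iff.mp h12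
    have hψ' := hψ
    rw [Finset.mem_image] at hψ'
    obtain ⟨σ₀, h₀, hτψ⟩ := hψ'
    rw [← hτψ, htau σ₀ _ (Nat.le_add_right _ _), htau σ₀ _ (Nat.le_add_right _ _)] at hval
    have h' : t + 1 + i₁.val = t + 1 + i₂.val := congrArg Fin.val (σ₀.injective hval)
    exact Fin.ext (by omega)
  have himcard : ((SCset n s r tf x S).image τ).card = m.factorial := by
    have hbij : ((SCset n s r tf x S).image τ).card
        = (univ : Finset (Fin m ↪ {y // y ∈ R})).card := by
      apply Finset.card_bij (fun ψ hψ =>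
        (⟨fun i : Fin m => (⟨ψ ⟨t + 1 + i.val, hidx i⟩, prf1 ψ hψ i⟩ : {y // y ∈ R}),
          prf2 ψ hψ⟩ : Fin m ↪ {y // y ∈ R}))
      · intro ψ hψ; exact Finset.mem_univ _
      · intro ψ₁ hψ₁ ψ₂ hψ₂ heq
        have hfun : ∀ i : Fin m,
            ψ₁ ⟨t + 1 + i.val, hidx i⟩ = ψ₂ ⟨t + 1 + i.val, hidx i⟩ := by
          intro i
          have := Function.Embedding.ext_iff.mp heq i
          exact Subtype.ext_iff.mp this
        have hψ₁' := hψ₁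
        have hψ₂' := hψ₂
        rw [Finset.mem_image] at hψ₁' hψ₂'
        obtain ⟨σ₁, h₁, hτ₁⟩ := hψ₁'
        obtain ⟨σ₂, h₂, hτ₂⟩ := hψ₂'
        funext u
        by_cases hu : t + 1 ≤ u.val
        · have hum : u.val - t - 1 < m := by have := u.isLt; omega
          have h1 := hfun ⟨u.val - t - 1, hum⟩
          have hidq : (⟨t + 1 + (u.val - t - 1), hidx ⟨u.val - t - 1, hum⟩⟩ : Fin n) = u :=
            Fin.ext (by simp; omega)
          rwa [hidq] at h1
        · rw [← hτ₁, ← hτ₂, htau' σ₁ u (by omega), htau' σ₂ u (by omega)]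
      · intro e he
        have hiS : ∀ (v : ℕ) (hv : v < t), (S.orderIsoOfFin hS ⟨v, hv⟩ : Fin n) ∈ S :=
          fun v hv => (S.orderIsoOfFin hS ⟨v, hv⟩).2
        have heF : ∀ i : Fin m, ((e i : Fin n) ∈ R) := fun i => (e i).2
        have heR : ∀ i : Fin m, (e i : Fin n) ∉ S ∧ (e i : Fin n) ≠ x := by
          intro i
          have h0 := heF i
          have h1 : (e i : Fin n) ∉ insert x S := Finset.mem_compl.mp (hR ▸ h0)
          rw [Finset.mem_insert] at h1
          push_neg at h1
          exact ⟨h1.2, h1.1⟩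
        set f : Fin n → Fin n := fun u =>
          if h : u.val < t then (S.orderIsoOfFin hS ⟨u.val, h⟩ : Fin n)
          else if h2 : u.val = t then x
          else (e ⟨u.val - t - 1, by have := u.isLt; omega⟩ : Fin n) with hf
        have hfeq1 : ∀ (u : Fin n) (h : u.val < t),
            f u = (S.orderIsoOfFin hS ⟨u.val, h⟩ : Fin n) := by
          intro u h; rw [hf]; simp only; rw [dif_pos h]
        have hfeq2 : ∀ (u : Fin n), u.val = t → f u = x := by
          intro u h; rw [hf]; simp only; rw [dif_neg (by omega), dif_pos h]
        have hfeq3 : ∀ (u : Fin n) (h : t + 1 ≤ u.val),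
            f u = (e ⟨u.val - t - 1, by have := u.isLt; omega⟩ : Fin n) := by
          intro u h; rw [hf]; simp only; rw [dif_neg (by omega), dif_neg (by omega)]
        have hfinj : Function.Injective f := by
          intro u v huv
          rcases lt_trichotomy u.val t with hu | hu | hu <;>
            rcases lt_trichotomy v.val t with hv | hv | hv
          · rw [hfeq1 u hu, hfeq1 v hv] at huv
            have := (S.orderIsoOfFin hS).injective (Subtype.ext huv)
            have h' := congrArg Fin.val this
            exact Fin.ext (by simpa using h')
          · exfalso; rw [hfeq1 u hu, hfeq2 v hv] at huv
            exact hx (huv ▸ hiS u.val hu)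
          · exfalso; rw [hfeq1 u hu, hfeq3 v (by omega)] at huv
            exact (heR _).1 (huv ▸ hiS u.val hu)
          · exfalso; rw [hfeq2 u hu, hfeq1 v hv] at huv
            exact hx (huv.symm ▸ hiS v.val hv)
          · exact Fin.ext (by omega)
          · exfalso; rw [hfeq2 u hu, hfeq3 v (by omega)] at huv
            exact (heR _).2 huv.symm
          · exfalso; rw [hfeq3 u (by omega), hfeq1 v hv] at huv
            exact (heR _).1 (huv.symm ▸ hiS v.val hv)
          · exfalso; rw [hfeq3 u (by omega), hfeq2 v hv] at huv
            exact (heR _).2 huv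
          · rw [hfeq3 u (by omega), hfeq3 v (by omega)] at huv
            have := e.injective (Subtype.ext huv)
            have h' := congrArg Fin.val this
            simp only [Fin.val_mk] at h'
            exact Fin.ext (by omega)
        have hfbij : Function.Bijective f := Finite.injective_iff_bijective.mp hfinj
        set σ : Equiv.Perm (Fin n) := Equiv.ofBijective f hfbij with hσdef
        have hσap : ∀ u, σ u = f u := fun u => rfl
        have hσS : σ ∈ SCset n s r tf x S := by
          simp only [SCset, mem_filter, mem_univ, true_and]
          refine ⟨?_, ?_, ?_⟩
          · apply Finset.eq_of_subset_of_card_le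
            · intro y hy
              rw [Finset.mem_image] at hy
              obtain ⟨u, hu, rfl⟩ := hy
              simp only [mem_filter, mem_univ, true_and] at hu
              rw [hσap, hfeq1 u hu]
              exact hiS u.val hu
            · rw [Finset.card_image_of_injective _ σ.injective, hS,
                card_val_lt t (le_of_lt htn)]
          · rw [hσap, hfeq2 tf htv.symm]
          · intro u hsu hut
            have hmono : ∀ k : Fin n, k ≤ u → σ k ≤ σ u := by
              intro k hk
              have hkt : k.val < t := lt_of_le_of_lt hk hut
              rw [hσap, hσap, hfeq1 k hkt, hfeq1 u hut]
              have hmk : (⟨k.val, hkt⟩ : Fin t) ≤ ⟨u.val, hut⟩ := hk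
              exact_mod_cast (S.orderIsoOfFin hS).monotone hmk
            rw [relRank_of_mono_prefix hmono]
            omega
        refine ⟨τ σ, Finset.mem_image_of_mem τ hσS, ?_⟩
        apply Function.Embedding.ext
        intro i
        apply Subtype.ext
        show τ σ ⟨t + 1 + i.val, hidx i⟩ = (e i : Fin n)
        rw [htau σ ⟨t + 1 + i.val, hidx i⟩ (Nat.le_add_right _ _), hσap,
          hfeq3 ⟨t + 1 + i.val, hidx i⟩ (Nat.le_add_right _ _)]
        have hieq : (⟨(t + 1 + i.val) - t - 1, by have := i.isLt; omega⟩ : Fin m) = i :=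
          Fin.ext (by simp only [Fin.val_mk]; omega)
        exact congrArg (fun z : Fin m => ((e z : {y // y ∈ R}) : Fin n)) hieq
    rw [hbij, Finset.card_univ, Fintype.card_embedding_eq, Fintype.card_fin,
      Fintype.card_coe, hRcard, Nat.descFactorial_self]
  rw [himcard]

/-- families of prefix value-sets avoiding x with fewer than r elements below x -/
def Cset (n t r : ℕ) (x : Fin n) : Finset (Finset (Fin n)) :=
  univ.filter (fun S => S.card = t ∧ x ∉ S ∧ (S.filter (· < x)).card < r)

lemma relRank_val (σ : Equiv.Perm (Fin n)) (tf : Fin n) :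
    relRank n σ tf
      = ((((univ : Finset (Fin n)).filter (fun u => u.val < tf.val)).image σ).filter
          (· < σ tf)).card + 1 := by
  rw [relRank_eq_card_image]
  have h1 : ((univ : Finset (Fin n)).filter (fun k => k ≤ tf))
      = insert tf ((univ : Finset (Fin n)).filter (fun u => u.val < tf.val)) := by
    ext u
    simp only [mem_filter, mem_univ, true_and, Finset.mem_insert, Fin.le_def, Fin.ext_iff]
    omega
  rw [h1, Finset.image_insert]
  have hnot : σ tf ∉ ((univ : Finset (Fin n)).filter (fun u => u.val < tf.val)).image σ := by
    rw [Finset.mem_image]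
    rintro ⟨w, hw, hww⟩
    simp only [mem_filter, mem_univ, true_and] at hw
    have := σ.injective hww
    rw [this] at hw
    omega
  rw [Finset.filter_insert, if_pos le_rfl]
  have h2 : (((univ : Finset (Fin n)).filter (fun u => u.val < tf.val)).image σ).filter
        (· ≤ σ tf)
      = (((univ : Finset (Fin n)).filter (fun u => u.val < tf.val)).image σ).filter
        (· < σ tf) := by
    apply Finset.filter_congr
    intro y hy
    have hyne : y ≠ σ tf := fun hc => hnot (hc ▸ hy)
    simp only [le_iff_lt_or_eq, Fin.lt_def, Fin.ext_iff, eq_iff_iff]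
    constructor
    · rintro (h | h)
      · exact h
      · exact absurd (Fin.ext h) hyne
    · exact Or.inl
  rw [h2]
  apply Finset.card_insert_of_notMem
  rw [Finset.mem_filter]
  rintro ⟨-, hc⟩
  exact lt_irrefl _ hc

lemma Cset_card (t r : ℕ) (x : Fin n) (hrt : r ≤ t) (htn : t ≤ n) :
    (Cset n t r x).card
      = ∑ d ∈ Finset.range r, (x.val).choose d * (n - 1 - x.val).choose (t - d) := by
  classical
  have hIio : ((univ : Finset (Fin n)).filter (fun u => u < x)).card = x.val := by
    have : ((univ : Finset (Fin n)).filter (fun u => u < x))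
        = ((univ : Finset (Fin n)).filter (fun u => u.val < x.val)) := by
      ext u; simp only [mem_filter, mem_univ, true_and]; exact Iff.rfl
    rw [this, card_val_filter (fun v => v < x.val)]
    have : (Finset.range n).filter (fun v => v < x.val) = Finset.range x.val := by
      ext v; simp only [mem_filter, mem_range]
      have := x.isLt; omega
    rw [this, Finset.card_range]
  have hIoi : ((univ : Finset (Fin n)).filter (fun u => x < u)).card = n - 1 - x.val := by
    have : ((univ : Finset (Fin n)).filter (fun u => x < u))
        = ((univ : Finset (Fin n)).filter (fun u => x.val < u.val)) := by
      ext u; simp only [mem_filter, mem_univ, true_and]; exact Iff.rfl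
    rw [this, card_val_filter (fun v => x.val < v)]
    have : (Finset.range n).filter (fun v => x.val < v) = Finset.Ico (x.val + 1) n := by
      ext v; simp only [mem_filter, mem_range, mem_Ico]; omega
    rw [this, Nat.card_Ico]
    omega
  rw [Finset.card_eq_sum_card_fiberwise
    (f := fun S : Finset (Fin n) => (S.filter (· < x)).card)
    (t := Finset.range r) (by
      intro S hS
      simp only [Finset.mem_coe, Cset, mem_filter, mem_univ, true_and] at hS
      rw [Finset.mem_coe, Finset.mem_range]
      exact hS.2.2)]
  apply Finset.sum_congr rfl
  intro d hd
  rw [Finset.mem_range] at hd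
  have hbij : ((Cset n t r x).filter (fun S => (S.filter (· < x)).card = d)).card
      = ((Finset.powersetCard d ((univ : Finset (Fin n)).filter (fun u => u < x))) ×ˢ
         (Finset.powersetCard (t - d) ((univ : Finset (Fin n)).filter (fun u => x < u)))).card := by
    apply Finset.card_bij (fun S _ => (S.filter (· < x), S.filter (fun y => x < y)))
    · intro S hS
      simp only [Cset, mem_filter, mem_univ, true_and] at hS
      obtain ⟨⟨hcard, hxS, -⟩, hd'⟩ := hS
      rw [Finset.mem_product, Finset.mem_powersetCard, Finset.mem_powersetCard]
      refine ⟨⟨fun y hy => ?_, hd'⟩, fun y hy => ?_, ?_⟩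
      · rw [Finset.mem_filter] at hy ⊢; exact ⟨Finset.mem_univ _, hy.2⟩
      · rw [Finset.mem_filter] at hy ⊢; exact ⟨Finset.mem_univ _, hy.2⟩
      · have hsplit : (S.filter (· < x)).card + (S.filter (fun y => x < y)).card = t := by
          rw [← hcard]
          rw [← Finset.card_union_of_disjoint (by
            rw [Finset.disjoint_left]
            intro a ha hb
            rw [Finset.mem_filter] at ha hb
            exact absurd (lt_trans ha.2 hb.2) (lt_irrefl a))]
          congr 1
          ext y
          simp only [Finset.mem_union, Finset.mem_filter]
          constructor
          · rintro (⟨h, -⟩ | ⟨h, -⟩) <;> exact h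
          · intro hy
            rcases lt_trichotomy y x with h | h | h
            · exact Or.inl ⟨hy, h⟩
            · exact absurd (h ▸ hy) hxS
            · exact Or.inr ⟨hy, h⟩
        show (S.filter (fun y => x < y)).card = t - d
        omega
    · intro S₁ hS₁ S₂ hS₂ heq
      simp only [Prod.mk.injEq] at heq
      simp only [Cset, mem_filter, mem_univ, true_and] at hS₁ hS₂
      ext y
      rcases lt_trichotomy y x with h | h | h
      · constructor <;> intro hy
        · have : y ∈ S₂.filter (· < x) := heq.1 ▸ (Finset.mem_filter.mpr ⟨hy, h⟩)
          exact (Finset.mem_filter.mp this).1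
        · have : y ∈ S₁.filter (· < x) := heq.1.symm ▸ (Finset.mem_filter.mpr ⟨hy, h⟩)
          exact (Finset.mem_filter.mp this).1
      · subst h
        constructor <;> intro hy
        · exact absurd hy hS₁.1.2.1
        · exact absurd hy hS₂.1.2.1
      · constructor <;> intro hy
        · have : y ∈ S₂.filter (fun z => x < z) := heq.2 ▸ (Finset.mem_filter.mpr ⟨hy, h⟩)
          exact (Finset.mem_filter.mp this).1
        · have : y ∈ S₁.filter (fun z => x < z) := heq.2.symm ▸ (Finset.mem_filter.mpr ⟨hy, h⟩)
          exact (Finset.mem_filter.mp this).1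
    · rintro ⟨P, Q⟩ hPQ
      rw [Finset.mem_product, Finset.mem_powersetCard, Finset.mem_powersetCard] at hPQ
      obtain ⟨⟨hPsub, hPcard⟩, hQsub, hQcard⟩ := hPQ
      have hPlt : ∀ y ∈ P, y < x := fun y hy => (Finset.mem_filter.mp (hPsub hy)).2
      have hQgt : ∀ y ∈ Q, x < y := fun y hy => (Finset.mem_filter.mp (hQsub hy)).2
      have hdisj : Disjoint P Q := by
        rw [Finset.disjoint_left]
        intro a ha hb
        exact absurd (lt_trans (hPlt a ha) (hQgt a hb)) (lt_irrefl a)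
      refine ⟨P ∪ Q, ?_, ?_⟩
      · simp only [Finset.mem_filter, Cset, mem_univ, true_and]
        have hfP : (P ∪ Q).filter (· < x) = P := by
          ext y
          simp only [Finset.mem_filter, Finset.mem_union]
          constructor
          · rintro ⟨h | h, hlt⟩
            · exact h
            · exact absurd hlt (not_lt.mpr (le_of_lt (hQgt y h)))
          · intro hy; exact ⟨Or.inl hy, hPlt y hy⟩
        refine ⟨⟨?_, ?_, ?_⟩, ?_⟩
        · rw [Finset.card_union_of_disjoint hdisj, hPcard, hQcard]; omega
        · rw [Finset.mem_union]
          rintro (h | h)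
          · exact absurd (hPlt x h) (lt_irrefl x)
          · exact absurd (hQgt x h) (lt_irrefl x)
        · rw [hfP, hPcard]; exact hd
        · rw [hfP]; exact hPcard
      · have hfP : (P ∪ Q).filter (· < x) = P := by
          ext y
          simp only [Finset.mem_filter, Finset.mem_union]
          constructor
          · rintro ⟨h | h, hlt⟩
            · exact h
            · exact absurd hlt (not_lt.mpr (le_of_lt (hQgt y h)))
          · intro hy; exact ⟨Or.inl hy, hPlt y hy⟩
        have hfQ : (P ∪ Q).filter (fun y => x < y) = Q := by
          ext y
          simp only [Finset.mem_filter, Finset.mem_union]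
          constructor
          · rintro ⟨h | h, hlt⟩
            · exact absurd hlt (not_lt.mpr (le_of_lt (hPlt y h)))
            · exact h
          · intro hy; exact ⟨Or.inr hy, hQgt y hy⟩
        rw [hfP, hfQ]
  rw [hbij, Finset.card_product, Finset.card_powersetCard, Finset.card_powersetCard,
    hIio, hIoi]

/-- event: stop at tf with value x, i.e. rank ≤ r at tf, ranks > r before, σ tf = x -/
def Exset (n s r : ℕ) (tf x : Fin n) : Finset (Equiv.Perm (Fin n)) :=
  univ.filter (fun σ => relRank n σ tf ≤ r ∧
    (∀ u : Fin n, s ≤ u.val → u.val < tf.val → r < relRank n σ u) ∧ σ tf = x)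

lemma Exset_card {s r : ℕ} (hrs : r ≤ s) (tf x : Fin n) :
    (Exset n s r tf x).card
      = (Cset n tf.val r x).card * (Afun s r tf.val * (n - 1 - tf.val).factorial) := by
  classical
  rw [Finset.card_eq_sum_card_fiberwise
    (f := fun σ : Equiv.Perm (Fin n) =>
      (univ.filter (fun u : Fin n => u.val < tf.val)).image σ)
    (t := Cset n tf.val r x) (by
      intro σ hσ
      simp only [Finset.mem_coe, Exset, mem_filter, mem_univ, true_and] at hσ
      obtain ⟨hrk, hmin, hfix⟩ := hσ
      simp only [Finset.mem_coe, Cset, mem_filter, mem_univ, true_and]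
      refine ⟨?_, ?_, ?_⟩
      · rw [Finset.card_image_of_injective _ σ.injective]
        exact card_val_lt tf.val (le_of_lt tf.isLt)
      · rw [Finset.mem_image]
        rintro ⟨w, hw, hww⟩
        simp only [mem_filter, mem_univ, true_and] at hw
        rw [← hfix] at hww
        have := σ.injective hww
        rw [this] at hw
        omega
      · have := relRank_val σ tf
        rw [hfix] at this
        omega)]
  have hterm : ∀ S ∈ Cset n tf.val r x,
      ((Exset n s r tf x).filter (fun σ : Equiv.Perm (Fin n) =>
          (univ.filter (fun u : Fin n => u.val < tf.val)).image σ = S)).card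
        = Afun s r tf.val * (n - 1 - tf.val).factorial := by
    intro S hS
    simp only [Cset, mem_filter, mem_univ, true_and] at hS
    obtain ⟨hcard, hxS, hd⟩ := hS
    have hset : (Exset n s r tf x).filter (fun σ : Equiv.Perm (Fin n) =>
          (univ.filter (fun u : Fin n => u.val < tf.val)).image σ = S)
        = SCset n s r tf x S := by
      ext σ
      simp only [Exset, SCset, mem_filter, mem_univ, true_and, and_assoc]
      constructor
      · rintro ⟨hrk, hmin, hfix, himg⟩
        exact ⟨himg, hfix, hmin⟩
      · rintro ⟨himg, hfix, hmin⟩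
        have hrv := relRank_val σ tf
        rw [hfix, himg] at hrv
        exact ⟨by omega, hmin, hfix, himg⟩
    rw [hset]
    exact SCset_card hrs tf x S hcard hxS
  rw [Finset.sum_congr rfl hterm, Finset.sum_const, smul_eq_mul]

/-- event: policy stops at position `tf` and wins -/
def Eset (n s r bb : ℕ) (tf : Fin n) : Finset (Equiv.Perm (Fin n)) :=
  univ.filter (fun σ => relRank n σ tf ≤ r ∧
    (∀ u : Fin n, s ≤ u.val → u.val < tf.val → r < relRank n σ u) ∧
    (σ tf).val + 1 ≤ bb)

lemma Eset_card {s r bb : ℕ} (hrs : r ≤ s) (tf : Fin n) :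
    (Eset n s r bb tf).card
      = ∑ x ∈ (univ : Finset (Fin n)).filter (fun x : Fin n => x.val + 1 ≤ bb),
          (Cset n tf.val r x).card * (Afun s r tf.val * (n - 1 - tf.val).factorial) := by
  classical
  rw [Finset.card_eq_sum_card_fiberwise
    (f := fun σ : Equiv.Perm (Fin n) => σ tf)
    (t := (univ : Finset (Fin n)).filter (fun x : Fin n => x.val + 1 ≤ bb)) (by
      intro σ hσ
      simp only [Finset.mem_coe, Eset, mem_filter, mem_univ, true_and] at hσ ⊢
      exact hσ.2.2)]
  apply Finset.sum_congr rfl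
  intro x hx
  simp only [mem_filter, mem_univ, true_and] at hx
  rw [← Exset_card hrs tf x]
  congr 1
  ext σ
  simp only [Eset, Exset, mem_filter, mem_univ, true_and, and_assoc]
  constructor
  · rintro ⟨hrk, hmin, hval, hfix⟩
    exact ⟨hrk, hmin, hfix⟩
  · rintro ⟨hrk, hmin, hfix⟩
    exact ⟨hrk, hmin, by rw [hfix]; exact hx, hfix⟩

/-- event: no stop before the last position, last position wins -/
def Lset (n s r bb : ℕ) : Finset (Equiv.Perm (Fin n)) :=
  univ.filter (fun σ => (∀ u : Fin n, s ≤ u.val → u.val < n - 1 → r < relRank n σ u) ∧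
    ∀ u : Fin n, u.val = n - 1 → (σ u).val + 1 ≤ bb)

lemma Lset_card {s r bb : ℕ} (hrs : r ≤ s) (hn : 2 ≤ n) (hbb : bb ≤ n) :
    (Lset n s r bb).card = bb * Afun s r (n - 1) := by
  classical
  have hn1 : n - 1 < n := by omega
  set lf : Fin n := ⟨n - 1, hn1⟩ with hlf
  rw [Finset.card_eq_sum_card_fiberwise
    (f := fun σ : Equiv.Perm (Fin n) => σ lf)
    (t := (univ : Finset (Fin n)).filter (fun x : Fin n => x.val + 1 ≤ bb)) (by
      intro σ hσ
      simp only [Finset.mem_coe, Lset, mem_filter, mem_univ, true_and] at hσ ⊢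
      exact hσ.2 lf rfl)]
  have hterm : ∀ x ∈ (univ : Finset (Fin n)).filter (fun x : Fin n => x.val + 1 ≤ bb),
      ((Lset n s r bb).filter (fun σ => σ lf = x)).card = Afun s r (n - 1) := by
    intro x hx
    simp only [mem_filter, mem_univ, true_and] at hx
    have hset : (Lset n s r bb).filter (fun σ => σ lf = x)
        = Gset n s r (n - 1) (fun _ => x) := by
      ext σ
      simp only [Lset, Gset, mem_filter, mem_univ, true_and]
      constructor
      · rintro ⟨⟨hmin, hval⟩, hfix⟩
        refine ⟨?_, ?_⟩
        · intro u hu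
          have : u = lf := Fin.ext (by have := u.isLt; simp only [hlf]; omega)
          rw [this, hfix]
        · intro u hsu hu
          exact hmin u hsu hu
      · rintro ⟨htail, hmin⟩
        refine ⟨⟨hmin, ?_⟩, ?_⟩
        · intro u hu
          rw [htail u (le_of_eq hu.symm)]
          exact hx
        · exact htail lf (le_refl _)
    rw [hset]
    apply Gset_card hrs (n - 1) (by omega)
    refine ⟨Equiv.swap lf x, ?_⟩
    intro u hu
    have : u = lf := Fin.ext (by have := u.isLt; simp only [hlf]; omega)
    rw [this, Equiv.swap_apply_left]
  rw [Finset.sum_congr rfl hterm, Finset.sum_const, smul_eq_mul, card_val_lt' bb hbb]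

def relRankN (n : ℕ) (σ : Equiv.Perm (Fin n)) (t : ℕ) : ℕ :=
  if h : t < n then relRank n σ ⟨t, h⟩ else 0

lemma relRankN_eq (σ : Equiv.Perm (Fin n)) (u : Fin n) : relRankN n σ u.val = relRank n σ u := by
  rw [relRankN, dif_pos u.isLt]

def EcardN (n s r bb t : ℕ) : ℕ :=
  if h : t < n then (Eset n s r bb ⟨t, h⟩).card else 0

def MS (n s r b : ℕ) (hn : 0 < n) : Finset (Equiv.Perm (Fin n)) :=
  Finset.univ.filter (fun σ : Equiv.Perm (Fin n) =>
        (∃ t : Fin n, s ≤ (t : ℕ) ∧ (t : ℕ) ≤ n - 2 ∧ relRank n σ t ≤ r ∧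
          (∀ u : Fin n, s ≤ (u : ℕ) → (u : ℕ) < (t : ℕ) → r < relRank n σ u) ∧
          (σ t : ℕ) + 1 ≤ b) ∨
        ((∀ t : Fin n, s ≤ (t : ℕ) → (t : ℕ) ≤ n - 2 → r < relRank n σ t) ∧
          (σ ⟨n - 1, by omega⟩ : ℕ) + 1 ≤ b))

lemma MS_card (s r b : ℕ) (hn : 2 ≤ n) (hsn : s ≤ n - 2) (hn0 : 0 < n) :
    (MS n s r b hn0).card
      = (∑ t ∈ Finset.Icc s (n - 2), EcardN n s r b t) + (Lset n s r b).card := by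
  classical
  set D : Equiv.Perm (Fin n) → Finset ℕ :=
    fun σ => (Finset.Icc s (n - 2)).filter (fun t => relRankN n σ t ≤ r) with hD
  have hmemD : ∀ (σ : Equiv.Perm (Fin n)) (x : ℕ),
      x ∈ D σ ↔ (s ≤ x ∧ x ≤ n - 2 ∧ relRankN n σ x ≤ r) := by
    intro σ x
    simp only [hD, Finset.mem_filter, Finset.mem_Icc]
    tauto
  set F : Equiv.Perm (Fin n) → ℕ :=
    fun σ => if h : (D σ).Nonempty then (D σ).min' h else n - 1 with hF
  have hFmem : ∀ σ ∈ MS n s r b hn0, F σ ∈ Finset.Icc s (n - 1) := by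
    intro σ _
    show (if h : (D σ).Nonempty then (D σ).min' h else n - 1) ∈ Finset.Icc s (n - 1)
    split_ifs with h
    · have := (hmemD σ _).mp (Finset.min'_mem (D σ) h)
      rw [Finset.mem_Icc]
      omega
    · rw [Finset.mem_Icc]; omega
  rw [Finset.card_eq_sum_card_fiberwise hFmem]
  have hsplit : n - 1 = (n - 2) + 1 := by omega
  rw [hsplit, Finset.sum_Icc_succ_top (by omega)]
  congr 1
  · apply Finset.sum_congr rfl
    intro t ht
    rw [Finset.mem_Icc] at ht
    have htn : t < n := by omega
    rw [EcardN, dif_pos htn]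
    congr 1
    ext σ
    simp only [MS, Eset, mem_filter, mem_univ, true_and]
    constructor
    · rintro ⟨hcase, hFt⟩
      have hDne : (D σ).Nonempty := by
        by_contra hc
        simp only [hF, dif_neg hc] at hFt
        omega
      simp only [hF, dif_pos hDne] at hFt
      have htD : t ∈ D σ := hFt ▸ Finset.min'_mem (D σ) hDne
      have hrkt : relRankN n σ t ≤ r := ((hmemD σ t).mp htD).2.2
      have hmin : ∀ u : Fin n, s ≤ u.val → u.val < t → r < relRank n σ u := by
        intro u hsu hut
        by_contra hc
        push_neg at hc
        have huD : u.val ∈ D σ := (hmemD σ u.val).mpr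
          ⟨hsu, by omega, by rw [relRankN_eq]; exact hc⟩
        have := Finset.min'_le (D σ) u.val huD
        omega
      refine ⟨by rw [← relRankN_eq σ ⟨t, htn⟩] at *; exact hrkt, hmin, ?_⟩
      rcases hcase with ⟨tf, h1, h2, h3, h4, h5⟩ | ⟨hall, -⟩
      · have htft : tf.val = t := by
          have htfD : tf.val ∈ D σ := (hmemD σ tf.val).mpr
            ⟨h1, h2, by rw [relRankN_eq]; exact h3⟩
          have hle : t ≤ tf.val := hFt ▸ Finset.min'_le (D σ) tf.val htfD
          rcases eq_or_lt_of_le hle with heq | hlt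
          · omega
          · exfalso
            have hts : s ≤ t := ((hmemD σ t).mp htD).1
            have := h4 ⟨t, htn⟩ (by simpa using hts) hlt
            rw [← relRankN_eq σ ⟨t, htn⟩] at this
            simp only [Fin.val_mk] at this
            omega
        have : tf = ⟨t, htn⟩ := Fin.ext htft
        rw [← this]
        exact h5
      · exfalso
        have htIcc := (hmemD σ t).mp htD
        have := hall ⟨t, htn⟩ (by simpa using htIcc.1) (by simpa using htIcc.2.1)
        rw [← relRankN_eq σ ⟨t, htn⟩] at this
        simp only [Fin.val_mk] at this
        omega
    · rintro ⟨hrk, hmin, hval⟩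
      have htD : t ∈ D σ := (hmemD σ t).mpr ⟨ht.1, ht.2, by
        rw [← relRankN_eq σ ⟨t, htn⟩] at hrk
        simpa using hrk⟩
      have hDne : (D σ).Nonempty := ⟨t, htD⟩
      constructor
      · exact Or.inl ⟨⟨t, htn⟩, by simpa using ht.1, by simpa using ht.2, hrk, hmin, hval⟩
      · show (if h : (D σ).Nonempty then (D σ).min' h else n - 1) = t
        simp only [dif_pos hDne]
        apply le_antisymm
        · exact Finset.min'_le (D σ) t htD
        · apply Finset.le_min'
          intro u huD
          by_contra hc
          push_neg at hc
          have huD' := (hmemD σ u).mp huD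
          have := hmin ⟨u, by omega⟩ (by simpa using huD'.1) (by simpa using hc)
          rw [← relRankN_eq σ ⟨u, by omega⟩] at this
          simp only [Fin.val_mk] at this
          omega
  · congr 1
    ext σ
    simp only [MS, Lset, mem_filter, mem_univ, true_and]
    constructor
    · rintro ⟨hcase, hFt⟩
      have hDe : ¬ (D σ).Nonempty := by
        intro hne
        simp only [hF, dif_pos hne] at hFt
        have := (hmemD σ _).mp (Finset.min'_mem (D σ) hne)
        omega
      have hallrk : ∀ u : Fin n, s ≤ u.val → u.val < n - 1 → r < relRank n σ u := by
        intro u hsu hu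
        by_contra hc
        push_neg at hc
        exact hDe ⟨u.val, (hmemD σ u.val).mpr
          ⟨hsu, by omega, by rw [relRankN_eq]; exact hc⟩⟩
      refine ⟨hallrk, ?_⟩
      intro u hu
      rcases hcase with ⟨tf, h1, h2, h3, -, -⟩ | ⟨-, h5⟩
      · exfalso
        exact hDe ⟨tf.val, (hmemD σ tf.val).mpr ⟨h1, h2, by rw [relRankN_eq]; exact h3⟩⟩
      · have : u = (⟨n - 1, by omega⟩ : Fin n) := Fin.ext hu
        rw [this]
        exact h5
    · rintro ⟨hallrk, hval⟩
      have hDe : ¬ (D σ).Nonempty := by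
        rintro ⟨u, huD⟩
        have huD' := (hmemD σ u).mp huD
        have := hallrk ⟨u, by omega⟩ (by simpa using huD'.1) (by
          simp only [Fin.val_mk]; omega)
        rw [← relRankN_eq σ ⟨u, by omega⟩] at this
        simp only [Fin.val_mk] at this
        omega
      constructor
      · refine Or.inr ⟨?_, ?_⟩
        · intro tf h1 h2
          exact hallrk tf h1 (by omega)
        · exact hval ⟨n - 1, by omega⟩ rfl
      · show (if h : (D σ).Nonempty then (D σ).min' h else n - 1) = n - 2 + 1
        simp only [dif_neg hDe]
        omega


lemma sum_val_filter (bb : ℕ) (hn : 0 < n) (hb : bb ≤ n) (g : ℕ → ℕ) :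
    ∑ x ∈ (univ : Finset (Fin n)).filter (fun x : Fin n => x.val + 1 ≤ bb), g x.val
      = ∑ v ∈ Finset.range bb, g v := by
  apply Finset.sum_nbij' (i := fun x : Fin n => x.val)
    (j := fun v : ℕ => (⟨v % n, Nat.mod_lt v hn⟩ : Fin n))
  · intro x hx
    simp only [mem_filter, mem_univ, true_and] at hx
    rw [Finset.mem_range]; omega
  · intro v hv
    rw [Finset.mem_range] at hv
    simp only [mem_filter, mem_univ, true_and, Fin.val_mk]
    rw [Nat.mod_eq_of_lt (by omega)]
    omega
  · intro x hx
    apply Fin.ext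
    simp only [Fin.val_mk]
    exact Nat.mod_eq_of_lt x.isLt
  · intro v hv
    rw [Finset.mem_range] at hv
    simp only [Fin.val_mk]
    exact Nat.mod_eq_of_lt (by omega)
  · intro x hx; rfl

lemma vandermonde_trunc {r : ℕ} (v t : ℕ) (hv : v < r) (hrt : r ≤ t) (hvn : v ≤ n - 1) :
    ∑ d ∈ Finset.range r, v.choose d * (n - 1 - v).choose (t - d) = (n - 1).choose t := by
  have h1 : v + (n - 1 - v) = n - 1 := by omega
  have h2 := Nat.add_choose_eq v (n - 1 - v) t
  rw [h1] at h2
  rw [Finset.Nat.sum_antidiagonal_eq_sum_range_succ_mk] at h2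
  dsimp only at h2
  rw [Nat.succ_eq_add_one] at h2
  have hsplit : ∑ d ∈ Finset.range r, v.choose d * (n - 1 - v).choose (t - d)
      + ∑ d ∈ Finset.Ico r (t + 1), v.choose d * (n - 1 - v).choose (t - d)
      = ∑ d ∈ Finset.range (t + 1), v.choose d * (n - 1 - v).choose (t - d) :=
    Finset.sum_range_add_sum_Ico _ (by omega)
  have hz : ∑ d ∈ Finset.Ico r (t + 1), v.choose d * (n - 1 - v).choose (t - d) = 0 := by
    apply Finset.sum_eq_zero
    intro d hd
    rw [Finset.mem_Ico] at hd
    rw [Nat.choose_eq_zero_of_lt (by omega), Nat.zero_mul]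
  omega

lemma inner_sum_eq {r : ℕ} (bb t : ℕ) (hr1 : 1 ≤ r) (hrb : r ≤ bb) (hrt : r ≤ t)
    (hbn : bb ≤ n) (htn : t ≤ n - 1) :
    ∑ v ∈ Finset.range bb, ∑ d ∈ Finset.range r, v.choose d * (n - 1 - v).choose (t - d)
      = r * (n - 1).choose t
        + ∑ j ∈ Finset.Icc (r + 1) bb, ∑ k ∈ Finset.Icc 1 r,
            (j - 1).choose (k - 1) * (n - j).choose ((t + 1) - k) := by
  have hsplit : (∑ v ∈ Finset.range r, ∑ d ∈ Finset.range r,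
        v.choose d * (n - 1 - v).choose (t - d))
      + ∑ v ∈ Finset.Ico r bb, ∑ d ∈ Finset.range r,
          v.choose d * (n - 1 - v).choose (t - d)
      = ∑ v ∈ Finset.range bb, ∑ d ∈ Finset.range r,
          v.choose d * (n - 1 - v).choose (t - d) :=
    Finset.sum_range_add_sum_Ico _ hrb
  rw [← hsplit]
  congr 1
  · calc ∑ v ∈ Finset.range r, ∑ d ∈ Finset.range r, v.choose d * (n - 1 - v).choose (t - d)
        = ∑ _v ∈ Finset.range r, (n - 1).choose t :=
          Finset.sum_congr rfl (fun v hv => by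
            rw [Finset.mem_range] at hv
            exact vandermonde_trunc v t hv hrt (by omega))
      _ = r * (n - 1).choose t := by
          rw [Finset.sum_const, Finset.card_range, smul_eq_mul]
  · apply Finset.sum_nbij' (i := fun v => v + 1) (j := fun j => j - 1)
    · intro v hv; rw [Finset.mem_Ico] at hv; rw [Finset.mem_Icc]; omega
    · intro j hj; rw [Finset.mem_Icc] at hj; rw [Finset.mem_Ico]; omega
    · intro v _; omega
    · intro j hj; rw [Finset.mem_Icc] at hj; omega
    · intro v hv
      rw [Finset.mem_Ico] at hv
      apply Finset.sum_nbij' (i := fun d => d + 1) (j := fun k => k - 1)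
      · intro d hd; rw [Finset.mem_range] at hd; rw [Finset.mem_Icc]; omega
      · intro k hk; rw [Finset.mem_Icc] at hk; rw [Finset.mem_range]; omega
      · intro d _; omega
      · intro k hk; rw [Finset.mem_Icc] at hk; omega
      · intro d hd
        rw [Finset.mem_range] at hd
        congr 2 <;> omega

lemma per_t {s r : ℕ} (t DS : ℕ) (hr1 : 1 ≤ r) (hrs : r ≤ s) (hst : s ≤ t)
    (htn : t ≤ n - 2) (hn : 3 ≤ n) :
    ((Afun s r t * (n - 1 - t).factorial * (r * (n - 1).choose t + DS) : ℕ) : ℝ)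
        / (n.factorial : ℝ)
      = ((s.descFactorial r : ℝ) / (t.descFactorial r : ℝ)) *
          ((r : ℝ) / (n : ℝ) + (1 / (n : ℝ)) * ((DS : ℝ) / ((n - 1).choose t : ℝ))) := by
  have hC : 0 < (n - 1).choose t := Nat.choose_pos (by omega)
  have htd : 0 < t.descFactorial r := by
    rcases Nat.eq_zero_or_pos (t.descFactorial r) with h | h
    · rw [Nat.descFactorial_eq_zero_iff_lt] at h; omega
    · exact h
  have hkey : Afun s r t * (n - 1 - t).factorial * (t.descFactorial r * (n * (n - 1).choose t))
      = s.descFactorial r * n.factorial := by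
    have h1 := Afun_mul_desc hr1 hrs hst
    have h2 : (n - 1).choose t * t.factorial * (n - 1 - t).factorial = (n - 1).factorial :=
      Nat.choose_mul_factorial_mul_factorial (by omega)
    have h3 : n * (n - 1).factorial = n.factorial := Nat.mul_factorial_pred (by omega)
    calc Afun s r t * (n - 1 - t).factorial * (t.descFactorial r * (n * (n - 1).choose t))
        = (Afun s r t * t.descFactorial r) * (n - 1 - t).factorial * n * (n - 1).choose t := by
          ring
      _ = (t.factorial * s.descFactorial r) * (n - 1 - t).factorial * n * (n - 1).choose t := by
          rw [h1]
      _ = s.descFactorial r * n * ((n - 1).choose t * t.factorial * (n - 1 - t).factorial) := by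
          ring
      _ = s.descFactorial r * (n * (n - 1).factorial) := by rw [h2]; ring
      _ = s.descFactorial r * n.factorial := by rw [h3]
  have hkeyR : (Afun s r t : ℝ) * ((n - 1 - t).factorial : ℝ)
      * ((t.descFactorial r : ℝ) * ((n : ℝ) * ((n - 1).choose t : ℝ)))
      = (s.descFactorial r : ℝ) * (n.factorial : ℝ) := by
    exact_mod_cast congrArg (fun z : ℕ => (z : ℝ)) hkey
  have hne1 : (n.factorial : ℝ) ≠ 0 := Nat.cast_ne_zero.mpr (Nat.factorial_ne_zero n)
  have hne2 : (t.descFactorial r : ℝ) ≠ 0 := Nat.cast_ne_zero.mpr (by omega)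
  have hne3 : ((n - 1).choose t : ℝ) ≠ 0 := Nat.cast_ne_zero.mpr (by omega)
  have hne4 : (n : ℝ) ≠ 0 := Nat.cast_ne_zero.mpr (by omega)
  have hrhs : ((s.descFactorial r : ℝ) / (t.descFactorial r : ℝ)) *
          ((r : ℝ) / (n : ℝ) + (1 / (n : ℝ)) * ((DS : ℝ) / ((n - 1).choose t : ℝ)))
      = ((s.descFactorial r : ℝ) * ((r : ℝ) * ((n - 1).choose t : ℝ) + (DS : ℝ)))
        / ((t.descFactorial r : ℝ) * ((n : ℝ) * ((n - 1).choose t : ℝ))) := by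
    field_simp
  rw [hrhs]
  rw [div_eq_div_iff hne1 (by
    apply mul_ne_zero hne2
    exact mul_ne_zero hne4 hne3)]
  push_cast
  linear_combination ((r : ℝ) * ((n - 1).choose t : ℝ) + (DS : ℝ)) * hkeyR

lemma last_t {s r b : ℕ} (hr1 : 1 ≤ r) (hrs : r ≤ s) (hsn : s ≤ n - 2) (hn : 3 ≤ n) :
    ((b * Afun s r (n - 1) : ℕ) : ℝ) / (n.factorial : ℝ)
      = ((s.descFactorial r : ℝ) / ((n - 1).descFactorial r : ℝ)) * ((b : ℝ) / (n : ℝ)) := by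
  have htd : 0 < (n - 1).descFactorial r := by
    rcases Nat.eq_zero_or_pos ((n - 1).descFactorial r) with h | h
    · rw [Nat.descFactorial_eq_zero_iff_lt] at h; omega
    · exact h
  have hkey : Afun s r (n - 1) * (n - 1).descFactorial r
      = (n - 1).factorial * s.descFactorial r := Afun_mul_desc hr1 hrs (by omega)
  have h3 : n * (n - 1).factorial = n.factorial := Nat.mul_factorial_pred (by omega)
  have hkeyR : (Afun s r (n - 1) : ℝ) * ((n - 1).descFactorial r : ℝ)
      = ((n - 1).factorial : ℝ) * (s.descFactorial r : ℝ) := by exact_mod_cast hkey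
  have h3R : (n : ℝ) * ((n - 1).factorial : ℝ) = (n.factorial : ℝ) := by exact_mod_cast h3
  have hne1 : (n.factorial : ℝ) ≠ 0 := Nat.cast_ne_zero.mpr (Nat.factorial_ne_zero n)
  have hne2 : ((n - 1).descFactorial r : ℝ) ≠ 0 := Nat.cast_ne_zero.mpr (by omega)
  have hne4 : (n : ℝ) ≠ 0 := Nat.cast_ne_zero.mpr (by omega)
  rw [div_mul_div_comm, div_eq_div_iff hne1 (mul_ne_zero hne2 hne4)]
  push_cast
  linear_combination (b : ℝ) * (n : ℝ) * hkeyR + (b : ℝ) * (s.descFactorial r : ℝ) * h3R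


end SLP

/-- Winning probability of the single-level policy `π(s,r)` with `r ≤ s ≤ n-2`:
`P_SLP(π(s,r)) = Σ_{i=s+1}^{n-1} [(s)_r/(i-1)_r]·( r/n +
(1/n)Σ_{j=r+1}^{b} Σ_{k=1}^{r} C(j-1,k-1)C(n-j,i-k)/C(n-1,i-1) ) + [(s)_r/(n-1)_r]·(b/n)`. -/
theorem slp_win_prob (n s r b : ℕ) (hr1 : 1 ≤ r) (hrb : r ≤ b) (hbn : b ≤ n)
    (hrs : r ≤ s) (hsn : s ≤ n - 2) :
    ((Finset.univ.filter (fun σ : Equiv.Perm (Fin n) =>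
        (∃ t : Fin n, s ≤ (t : ℕ) ∧ (t : ℕ) ≤ n - 2 ∧ relRank n σ t ≤ r ∧
          (∀ u : Fin n, s ≤ (u : ℕ) → (u : ℕ) < (t : ℕ) → r < relRank n σ u) ∧
          (σ t : ℕ) + 1 ≤ b) ∨
        ((∀ t : Fin n, s ≤ (t : ℕ) → (t : ℕ) ≤ n - 2 → r < relRank n σ t) ∧
          (σ ⟨n - 1, by omega⟩ : ℕ) + 1 ≤ b))).card : ℝ)
      / (Nat.factorial n : ℝ)
    = (∑ i ∈ Finset.Icc (s + 1) (n - 1),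
        ((Nat.descFactorial s r : ℝ) / (Nat.descFactorial (i - 1) r : ℝ)) *
          ((r : ℝ) / (n : ℝ) + (1 / (n : ℝ)) *
            ∑ j ∈ Finset.Icc (r + 1) b, ∑ k ∈ Finset.Icc 1 r,
              ((Nat.choose (j - 1) (k - 1) * Nat.choose (n - j) (i - k) : ℕ) : ℝ)
                / (Nat.choose (n - 1) (i - 1) : ℝ)))
      + ((Nat.descFactorial s r : ℝ) / (Nat.descFactorial (n - 1) r : ℝ)) *
          ((b : ℝ) / (n : ℝ)) := by
  classical
  have hn3 : 3 ≤ n := by omega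
  have hn0 : 0 < n := by omega
  have hn2 : 2 ≤ n := by omega
  show ((SLP.MS n s r b hn0).card : ℝ) / (Nat.factorial n : ℝ) = _
  rw [SLP.MS_card s r b hn2 hsn hn0, SLP.Lset_card hrs hn2 hbn]
  have hEc : ∀ t ∈ Finset.Icc s (n - 2), SLP.EcardN n s r b t
      = SLP.Afun s r t * (n - 1 - t).factorial * (r * (n - 1).choose t
          + ∑ j ∈ Finset.Icc (r + 1) b, ∑ k ∈ Finset.Icc 1 r,
              (j - 1).choose (k - 1) * (n - j).choose ((t + 1) - k)) := by
    intro t ht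
    rw [Finset.mem_Icc] at ht
    have htn : t < n := by omega
    rw [SLP.EcardN, dif_pos htn, SLP.Eset_card hrs ⟨t, htn⟩]
    simp only [Fin.val_mk]
    have hcs : ∀ x ∈ (univ : Finset (Fin n)).filter (fun x : Fin n => x.val + 1 ≤ b),
        (SLP.Cset n t r x).card * (SLP.Afun s r t * (n - 1 - t).factorial)
          = (fun v => (∑ d ∈ Finset.range r, v.choose d * (n - 1 - v).choose (t - d))
              * (SLP.Afun s r t * (n - 1 - t).factorial)) x.val := by
      intro x _
      rw [SLP.Cset_card t r x (by omega) (by omega)]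
    rw [Finset.sum_congr rfl hcs]
    rw [SLP.sum_val_filter b hn0 hbn
      (fun v => (∑ d ∈ Finset.range r, v.choose d * (n - 1 - v).choose (t - d))
        * (SLP.Afun s r t * (n - 1 - t).factorial))]
    rw [← Finset.sum_mul]
    rw [SLP.inner_sum_eq b t hr1 hrb (by omega) hbn (by omega)]
    ring
  rw [Finset.sum_congr rfl hEc]
  push_cast [Finset.sum_div, add_div]
  have himg : Finset.Icc (s + 1) (n - 1) = (Finset.Icc s (n - 2)).image (· + 1) := by
    ext i
    simp only [Finset.mem_Icc, Finset.mem_image]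
    constructor
    · intro hi; exact ⟨i - 1, by omega, by omega⟩
    · rintro ⟨t, ht, rfl⟩; omega
  rw [himg, Finset.sum_image (by intro a _ c _ h; simp only at h; omega)]
  congr 1
  · apply Finset.sum_congr rfl
    intro t ht
    rw [Finset.mem_Icc] at ht
    have hper := SLP.per_t (n := n) t
      (∑ j ∈ Finset.Icc (r + 1) b, ∑ k ∈ Finset.Icc 1 r,
        (j - 1).choose (k - 1) * (n - j).choose ((t + 1) - k))
      hr1 hrs ht.1 ht.2 hn3
    push_cast at hper
    rw [hper]
    have ht1 : t + 1 - 1 = t := by omega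
    rw [ht1]
    congr 2
    congr 1
    rw [Finset.sum_div]
    apply Finset.sum_congr rfl
    intro j _
    exact Finset.sum_div _ _ _
  · have hlast := SLP.last_t (n := n) (b := b) hr1 hrs hsn hn3
    push_cast at hlast
    rw [hlast]
end

section
/- Fix 1 ≤ r ≤ b and let s(n) = αn + o(n) with α ∈ (0,1). Then the winning probability P_SLP^(n)(π(s(n),r)) of the single-level policy converges, as n → ∞, to α^r · ∫_α^1 (1/x^r)·( r + Σ_{j=r+1}^{b} Σ_{k=1}^{r} C(j-1,k-1) x^{k-1} (1-x)^{j-k} ) dx. -/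
open Filter Finset

/-- Exact winning probability formula of the single-level policy `π(s,r)` for `n` candidates
and worst allowable rank `b` (valid for `r ≤ s ≤ n-2`). -/
noncomputable def Pslp (n b s r : ℕ) : ℝ :=
  (∑ i ∈ Finset.Icc (s + 1) (n - 1),
      ((Nat.descFactorial s r : ℝ) / (Nat.descFactorial (i - 1) r : ℝ)) *
        ((r : ℝ) / (n : ℝ) + (1 / (n : ℝ)) *
          ∑ j ∈ Finset.Icc (r + 1) b, ∑ k ∈ Finset.Icc 1 r,
            ((Nat.choose (j - 1) (k - 1) * Nat.choose (n - j) (i - k) : ℕ) : ℝ)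
              / (Nat.choose (n - 1) (i - 1) : ℝ)))
    + ((Nat.descFactorial s r : ℝ) / (Nat.descFactorial (n - 1) r : ℝ)) * ((b : ℝ) / (n : ℝ))

namespace SlpAux

open MeasureTheory

/-! ### Elementary limit lemmas -/

lemma natcast_tendsto_atTop {i : ℕ → ℕ} {x : ℝ} (hx : 0 < x)
    (hi : Tendsto (fun n : ℕ => (i n : ℝ) / n) atTop (nhds x)) :
    Tendsto i atTop atTop := by
  rw [← tendsto_natCast_atTop_iff (R := ℝ)]
  apply tendsto_atTop_mono' _ _ (Tendsto.const_mul_atTop (half_pos hx) tendsto_natCast_atTop_atTop)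
  filter_upwards [hi.eventually (eventually_gt_nhds (half_lt_self hx)),
    eventually_gt_atTop 0] with n h1 h2
  have hn : (0:ℝ) < n := by exact_mod_cast h2
  rw [lt_div_iff₀ hn] at h1
  linarith

lemma desc_ratio_tendsto {m : ℕ → ℕ} {c : ℝ} (hc : 0 < c)
    (h : Tendsto (fun n : ℕ => (m n : ℝ) / n) atTop (nhds c)) (d : ℕ) :
    Tendsto (fun n : ℕ => ((m n).descFactorial d : ℝ) / (n : ℝ) ^ d) atTop (nhds (c ^ d)) := by
  have hm := (natcast_tendsto_atTop hc h).eventually_ge_atTop d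
  have key : ∀ᶠ n : ℕ in atTop,
      ((m n).descFactorial d : ℝ) / (n : ℝ) ^ d
        = ∏ t ∈ range d, ((m n : ℝ) - t) / n := by
    filter_upwards [hm] with n hn
    rw [Finset.prod_div_distrib, Finset.prod_const, Finset.card_range]
    congr 1
    rw [Nat.descFactorial_eq_prod_range]
    push_cast
    refine Finset.prod_congr rfl fun t ht => ?_
    rw [Nat.cast_sub (le_trans (Finset.mem_range.1 ht).le hn)]
  rw [tendsto_congr' key]
  have hpc : (c : ℝ) ^ d = ∏ t ∈ range d, c := by simp
  rw [hpc]
  apply tendsto_finset_prod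
  intro t _
  have h2 : Tendsto (fun n : ℕ => (t : ℝ) / n) atTop (nhds 0) :=
    tendsto_const_div_atTop_nhds_zero_nat (t : ℝ)
  simpa [sub_div] using h.sub h2

lemma cast_descFactorial_real {a c : ℕ} (h : c ≤ a) :
    (a.descFactorial c : ℝ) = (a.factorial : ℝ) / ((a - c).factorial : ℝ) := by
  rw [eq_div_iff (by exact_mod_cast (a - c).factorial_pos.ne')]
  exact_mod_cast congrArg (Nat.cast (R := ℝ))
    (by rw [mul_comm]; exact Nat.factorial_mul_descFactorial h)

lemma choose_ratio_eq {n i j k : ℕ} (hk : 1 ≤ k) (hkj : k ≤ j) (hki : k ≤ i) (hij : i + j ≤ n) :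
    ((n - j).choose (i - k) : ℝ) / ((n - 1).choose (i - 1) : ℝ)
      = (((i - 1).descFactorial (k - 1) : ℝ) * ((n - i).descFactorial (j - k) : ℝ))
        / ((n - 1).descFactorial (j - 1) : ℝ) := by
  have h1 : i - k ≤ n - j := by omega
  have h2 : i - 1 ≤ n - 1 := by omega
  have hk1 : k - 1 ≤ i - 1 := by omega
  have hjk : j - k ≤ n - i := by omega
  have hj1 : j - 1 ≤ n - 1 := by omega
  rw [Nat.cast_choose ℝ h1, Nat.cast_choose ℝ h2, cast_descFactorial_real hk1,
    cast_descFactorial_real hjk, cast_descFactorial_real hj1]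
  have e1 : n - j - (i - k) = n - i - (j - k) := by omega
  have e2 : i - 1 - (k - 1) = i - k := by omega
  have e3 : n - 1 - (i - 1) = n - i := by omega
  have e4 : n - 1 - (j - 1) = n - j := by omega
  rw [e1, e2, e3, e4]
  have p : ∀ m : ℕ, (0:ℝ) < (m.factorial : ℝ) := fun m => by exact_mod_cast m.factorial_pos
  field_simp

lemma eventually_add_le {i : ℕ → ℕ} {x : ℝ} (hx1 : x < 1)
    (hi : Tendsto (fun n : ℕ => (i n : ℝ) / n) atTop (nhds x)) (j : ℕ) :
    ∀ᶠ n : ℕ in atTop, i n + j ≤ n := by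
  set c : ℝ := (x + 1) / 2 with hc
  have hc1 : c < 1 := by rw [hc]; linarith
  have hxc : x < c := by rw [hc]; linarith
  obtain ⟨N, hN⟩ := exists_nat_ge ((j : ℝ) / (1 - c))
  filter_upwards [hi.eventually (eventually_lt_nhds hxc), eventually_ge_atTop (N + 1)]
    with n h1 h2
  have hn : (0:ℝ) < n := by
    have : (1:ℕ) ≤ n := le_trans (Nat.le_add_left 1 N) h2
    exact_mod_cast Nat.lt_of_lt_of_le Nat.zero_lt_one this
  rw [div_lt_iff₀ hn] at h1
  have hjn : (j : ℝ) ≤ (1 - c) * n := by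
    rw [div_le_iff₀ (by linarith)] at hN
    calc (j:ℝ) ≤ (1-c) * N := by linarith [hN]
    _ ≤ (1-c) * n := by
        have : (N:ℝ) ≤ n := by exact_mod_cast le_trans (Nat.le_succ N) h2
        nlinarith
  have : (i n : ℝ) + j ≤ n := by nlinarith
  exact_mod_cast this

lemma choose_ratio_tendsto {j k : ℕ} (hk : 1 ≤ k) (hkj : k ≤ j) {x : ℝ} (hx0 : 0 < x)
    (hx1 : x < 1) {i : ℕ → ℕ} (hi : Tendsto (fun n : ℕ => (i n : ℝ) / n) atTop (nhds x)) :
    Tendsto (fun n : ℕ => ((n - j).choose (i n - k) : ℝ) / ((n - 1).choose (i n - 1) : ℝ))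
      atTop (nhds (x ^ (k - 1) * (1 - x) ^ (j - k))) := by
  have hip : ∀ᶠ n : ℕ in atTop, k ≤ i n := (natcast_tendsto_atTop hx0 hi).eventually_ge_atTop k
  have hnj := eventually_add_le hx1 hi j
  have l1 : Tendsto (fun n : ℕ => ((i n - 1 : ℕ) : ℝ) / n) atTop (nhds x) := by
    have he : ∀ᶠ n : ℕ in atTop, ((i n - 1 : ℕ) : ℝ) / n = (i n : ℝ) / n - 1 / n := by
      filter_upwards [hip] with n hn
      rw [Nat.cast_sub (le_trans hk hn)]; ring
    rw [tendsto_congr' he]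
    simpa using hi.sub (tendsto_const_div_atTop_nhds_zero_nat 1)
  have l2 : Tendsto (fun n : ℕ => ((n - i n : ℕ) : ℝ) / n) atTop (nhds (1 - x)) := by
    have he : ∀ᶠ n : ℕ in atTop, ((n - i n : ℕ) : ℝ) / n = 1 - (i n : ℝ) / n := by
      filter_upwards [hnj, eventually_gt_atTop 0] with n hn hn0
      have hn' : (0:ℝ) < n := by exact_mod_cast hn0
      rw [Nat.cast_sub (by omega)]
      field_simp
    rw [tendsto_congr' he]
    simpa using (tendsto_const_nhds (x := (1:ℝ))).sub hi
  have l3 : Tendsto (fun n : ℕ => ((n - 1 : ℕ) : ℝ) / n) atTop (nhds 1) := by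
    have he : ∀ᶠ n : ℕ in atTop, ((n - 1 : ℕ) : ℝ) / n = 1 - 1 / n := by
      filter_upwards [eventually_gt_atTop 0] with n hn0
      have hn' : (0:ℝ) < n := by exact_mod_cast hn0
      rw [Nat.cast_sub (by omega), Nat.cast_one]
      field_simp
    rw [tendsto_congr' he]
    simpa using (tendsto_const_nhds (x := (1:ℝ))).sub (tendsto_const_div_atTop_nhds_zero_nat 1)
  have d1 := desc_ratio_tendsto hx0 l1 (k - 1)
  have d2 := desc_ratio_tendsto (by linarith : (0:ℝ) < 1 - x) l2 (j - k)
  have d3 := desc_ratio_tendsto one_pos l3 (j - 1)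
  have main : Tendsto (fun n : ℕ =>
      (((i n - 1).descFactorial (k - 1) : ℝ) / (n:ℝ) ^ (k-1))
        * (((n - i n).descFactorial (j - k) : ℝ) / (n:ℝ) ^ (j-k))
        / (((n - 1).descFactorial (j - 1) : ℝ) / (n:ℝ) ^ (j-1))) atTop
      (nhds (x ^ (k - 1) * (1 - x) ^ (j - k))) := by
    have := (d1.mul d2).div d3 (by simp)
    simp only [one_pow, div_one] at this
    exact this
  apply main.congr'
  filter_upwards [hip, hnj, eventually_gt_atTop (j + 1)] with n hn1 hn2 hn3
  rw [choose_ratio_eq hk hkj hn1 hn2]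
  have hd3 : (0:ℝ) < ((n - 1).descFactorial (j - 1) : ℝ) := by
    exact_mod_cast Nat.pos_of_ne_zero
      (fun h => by have := Nat.descFactorial_eq_zero_iff_lt.1 h; omega)
  have hnr : (0:ℝ) < (n:ℝ) := by
    exact_mod_cast Nat.lt_of_lt_of_le (Nat.zero_lt_succ j) hn3.le
  have hpow : (n:ℝ) ^ (k - 1) * (n:ℝ) ^ (j - k) = (n:ℝ) ^ (j - 1) := by
    rw [← pow_add]; congr 1; omega
  field_simp
  rw [← hpow]
  ring

/-! ### The step function and its integral -/

noncomputable def slpH (n b s r i : ℕ) : ℝ :=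
  ((Nat.descFactorial s r : ℝ) / (Nat.descFactorial (i - 1) r : ℝ)) *
    ((r : ℝ) + ∑ j ∈ Finset.Icc (r + 1) b, ∑ k ∈ Finset.Icc 1 r,
      ((Nat.choose (j - 1) (k - 1) * Nat.choose (n - j) (i - k) : ℕ) : ℝ)
        / (Nat.choose (n - 1) (i - 1) : ℝ))

noncomputable def slpF (n b s r : ℕ) (x : ℝ) : ℝ :=
  if ⌊(n : ℝ) * x⌋₊ + 1 ∈ Finset.Icc (s + 1) (n - 1) then slpH n b s r (⌊(n : ℝ) * x⌋₊ + 1)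
  else 0

lemma slpF_measurable (n b s r : ℕ) : Measurable (slpF n b s r) := by
  have h : slpF n b s r = (fun m : ℕ =>
      if m + 1 ∈ Finset.Icc (s + 1) (n - 1) then slpH n b s r (m + 1) else 0)
      ∘ (fun x : ℝ => ⌊(n : ℝ) * x⌋₊) := rfl
  rw [h]
  exact measurable_from_nat.comp (Nat.measurable_floor.comp (measurable_id.const_mul _))

lemma slpF_integral {n : ℕ} (hn : 1 ≤ n) (b s r : ℕ) :
    ∫ x in (0:ℝ)..1, slpF n b s r x
      = ∑ i ∈ Finset.Icc (s + 1) (n - 1), slpH n b s r i / n := by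
  have hnr : (0:ℝ) < n := by exact_mod_cast hn
  set a : ℕ → ℝ := fun i => (i : ℝ) / n with ha
  set c : ℕ → ℝ :=
    fun i => if i + 1 ∈ Finset.Icc (s + 1) (n - 1) then slpH n b s r (i + 1) else 0 with hc
  have hle : ∀ i : ℕ, a i ≤ a (i + 1) := by
    intro i
    apply div_le_div_of_nonneg_right ?_ hnr.le
    · push_cast; linarith
  have hconst : ∀ i : ℕ, Set.EqOn (slpF n b s r) (fun _ => c i) (Set.Ioo (a i) (a (i + 1))) := by
    intro i x hx
    have h1 : (i : ℝ) ≤ (n : ℝ) * x := by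
      have := hx.1
      rw [ha] at this
      simp only [div_lt_iff₀ hnr] at this
      nlinarith
    have h2 : (n : ℝ) * x < (i : ℕ) + 1 := by
      have := hx.2
      rw [ha] at this
      simp only [lt_div_iff₀ hnr] at this
      push_cast at this ⊢
      nlinarith
    have hf : ⌊(n : ℝ) * x⌋₊ = i := by
      rw [Nat.floor_eq_iff (le_trans (by positivity) h1)]
      exact ⟨h1, h2⟩
    simp only [slpF, hf, hc]
  have hval : ∀ i : ℕ, ∫ x in (a i)..(a (i + 1)), slpF n b s r x = c i / n := by
    intro i
    rw [intervalIntegral.integral_of_le (hle i), integral_Ioc_eq_integral_Ioo,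
      setIntegral_congr_fun measurableSet_Ioo (hconst i), setIntegral_const, measureReal_def, Real.volume_Ioo]
    rw [ENNReal.toReal_ofReal (by linarith [hle i])]
    have hd : a (i + 1) - a i = 1 / n := by
      rw [ha]; push_cast; field_simp; ring
    rw [hd]
    simp [div_eq_mul_inv, mul_comm]
  have hint : ∀ i : ℕ, i < n →
      IntervalIntegrable (slpF n b s r) volume (a i) (a (i + 1)) := by
    intro i _
    rw [intervalIntegrable_iff_integrableOn_Ioo_of_le (hle i)]
    refine IntegrableOn.congr_fun ?_ (hconst i).symm measurableSet_Ioo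
    apply (integrableOn_const_iff (by simp)).2 (Or.inr ?_)
    rw [Real.volume_Ioo]
    exact ENNReal.ofReal_lt_top
  have hsum := intervalIntegral.sum_integral_adjacent_intervals hint
  have ha0 : a 0 = 0 := by simp [ha]
  have han : a n = 1 := by rw [ha]; field_simp
  rw [ha0, han] at hsum
  rw [← hsum]
  have hsum2 : ∑ i ∈ range n, ∫ x in (a i)..(a (i + 1)), slpF n b s r x
      = ∑ i ∈ range n, c i / n := Finset.sum_congr rfl fun i _ => hval i
  rw [hsum2, ← Finset.sum_div, ← Finset.sum_div]
  congr 1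
  set g : ℕ → ℝ :=
    fun m => if m ∈ Finset.Icc (s + 1) (n - 1) then slpH n b s r m else 0 with hg
  have h1 : ∑ i ∈ range n, c i = ∑ m ∈ Finset.Icc 1 n, g m := by
    have himg : (range n).image (· + 1) = Finset.Icc 1 n := by
      ext m
      simp only [Finset.mem_image, Finset.mem_range, Finset.mem_Icc]
      constructor
      · rintro ⟨i, hi, rfl⟩; omega
      · rintro ⟨h1, h2⟩; exact ⟨m - 1, by omega, by omega⟩
    rw [← himg, Finset.sum_image (by intro x _ y _ h; simp only at h; omega)]
  rw [h1]
  rw [← Finset.sum_subset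
    (show Finset.Icc (s + 1) (n - 1) ⊆ Finset.Icc 1 n by
      intro m hm; simp only [Finset.mem_Icc] at *; omega)
    (fun m _ hm => if_neg hm)]
  exact Finset.sum_congr rfl fun m hm => if_pos hm

/-! ### Bounds -/

lemma vandermonde_bound {n i j r : ℕ} (hj1 : 1 ≤ j) (hjn : j ≤ n) (hri : r < i) :
    ∑ k ∈ Finset.Icc 1 r, Nat.choose (j - 1) (k - 1) * Nat.choose (n - j) (i - k)
      ≤ Nat.choose (n - 1) (i - 1) := by
  have hnn : n - 1 = (j - 1) + (n - j) := by omega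
  rw [hnn, Nat.add_choose_eq]
  have himg : (Finset.Icc 1 r).image (fun k => (k - 1, i - k))
      ⊆ Finset.HasAntidiagonal.antidiagonal (i - 1) := by
    intro p hp
    simp only [Finset.mem_image, Finset.mem_Icc] at hp
    obtain ⟨k, ⟨hk1, hkr⟩, rfl⟩ := hp
    simp only [Finset.HasAntidiagonal.mem_antidiagonal]
    omega
  calc ∑ k ∈ Finset.Icc 1 r, Nat.choose (j - 1) (k - 1) * Nat.choose (n - j) (i - k)
      = ∑ p ∈ (Finset.Icc 1 r).image (fun k => (k - 1, i - k)),
          Nat.choose (j - 1) p.1 * Nat.choose (n - j) p.2 := by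
        rw [Finset.sum_image]
        intro x hx y hy h
        simp only [Finset.mem_coe, Finset.mem_Icc] at hx hy
        have := congrArg Prod.fst h
        simp only at this
        omega
    _ ≤ ∑ p ∈ Finset.HasAntidiagonal.antidiagonal (i - 1),
          Nat.choose (j - 1) p.1 * Nat.choose (n - j) p.2 :=
        Finset.sum_le_sum_of_subset himg

lemma slpH_nonneg (n b s r i : ℕ) : 0 ≤ slpH n b s r i := by
  unfold slpH
  apply mul_nonneg (by positivity)
  apply add_nonneg (by positivity)
  apply Finset.sum_nonneg; intro j _
  apply Finset.sum_nonneg; intro k _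
  positivity

lemma slpH_le {n b s r i : ℕ} (hrs : r ≤ s) (hbn : b ≤ n)
    (hi : i ∈ Finset.Icc (s + 1) (n - 1)) :
    slpH n b s r i ≤ (r : ℝ) + b := by
  simp only [Finset.mem_Icc] at hi
  obtain ⟨hi1, hi2⟩ := hi
  have hri : r < i := by omega
  have hA1 : ((Nat.descFactorial s r : ℝ) / (Nat.descFactorial (i - 1) r : ℝ)) ≤ 1 := by
    rw [div_le_one (by
      exact_mod_cast Nat.pos_of_ne_zero
        (fun h => by have := Nat.descFactorial_eq_zero_iff_lt.1 h; omega))]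
    exact_mod_cast Nat.descFactorial_le r (by omega)
  have hn2 : 2 ≤ n := by omega
  have hS : (∑ j ∈ Finset.Icc (r + 1) b, ∑ k ∈ Finset.Icc 1 r,
      ((Nat.choose (j - 1) (k - 1) * Nat.choose (n - j) (i - k) : ℕ) : ℝ)
        / (Nat.choose (n - 1) (i - 1) : ℝ)) ≤ (b : ℝ) := by
    have hC : (0:ℝ) < (Nat.choose (n - 1) (i - 1) : ℝ) := by
      exact_mod_cast Nat.choose_pos (by omega)
    calc _ ≤ ∑ j ∈ Finset.Icc (r + 1) b, (1:ℝ) := by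
          apply Finset.sum_le_sum
          intro j hj
          simp only [Finset.mem_Icc] at hj
          rw [← Finset.sum_div, div_le_one hC]
          have hv := vandermonde_bound (show 1 ≤ j by omega) (show j ≤ n by omega) hri
          calc ∑ k ∈ Finset.Icc 1 r,
              ((Nat.choose (j - 1) (k - 1) * Nat.choose (n - j) (i - k) : ℕ) : ℝ)
              = ((∑ k ∈ Finset.Icc 1 r,
                  Nat.choose (j - 1) (k - 1) * Nat.choose (n - j) (i - k) : ℕ) : ℝ) := by
                push_cast; rfl
            _ ≤ _ := by exact_mod_cast hv
      _ ≤ (b : ℝ) := by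
          rw [Finset.sum_const, nsmul_eq_mul, mul_one]
          have hcard : (Finset.Icc (r + 1) b).card ≤ b := by
            rw [Nat.card_Icc]; omega
          exact_mod_cast hcard
  have h2 : (0:ℝ) ≤ (r : ℝ) + ∑ j ∈ Finset.Icc (r + 1) b, ∑ k ∈ Finset.Icc 1 r,
      ((Nat.choose (j - 1) (k - 1) * Nat.choose (n - j) (i - k) : ℕ) : ℝ)
        / (Nat.choose (n - 1) (i - 1) : ℝ) := by
    apply add_nonneg (by positivity)
    apply Finset.sum_nonneg; intro j _
    apply Finset.sum_nonneg; intro k _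
    positivity
  unfold slpH
  calc _ ≤ 1 * ((r : ℝ) + ∑ j ∈ Finset.Icc (r + 1) b, ∑ k ∈ Finset.Icc 1 r,
      ((Nat.choose (j - 1) (k - 1) * Nat.choose (n - j) (i - k) : ℕ) : ℝ)
        / (Nat.choose (n - 1) (i - 1) : ℝ)) :=
      mul_le_mul_of_nonneg_right hA1 h2
    _ ≤ _ := by rw [one_mul]; linarith

/-! ### Rewriting `Pslp` -/

lemma Pslp_eq (n b s r : ℕ) :
    Pslp n b s r = (∑ i ∈ Finset.Icc (s + 1) (n - 1), slpH n b s r i / n)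
      + ((Nat.descFactorial s r : ℝ) / (Nat.descFactorial (n - 1) r : ℝ)) * ((b : ℝ) / n) := by
  unfold Pslp slpH
  congr 1
  apply Finset.sum_congr rfl
  intro i _
  ring

lemma floor_div_tendsto {x : ℝ} (hx : 0 ≤ x) :
    Tendsto (fun n : ℕ => ((⌊(n : ℝ) * x⌋₊ : ℕ) : ℝ) / n) atTop (nhds x) := by
  have h := (tendsto_nat_floor_mul_div_atTop (R := ℝ) hx).comp tendsto_natCast_atTop_atTop
  simpa [Function.comp_def, mul_comm] using h

lemma nsub_one_div_tendsto : Tendsto (fun n : ℕ => ((n - 1 : ℕ) : ℝ) / n) atTop (nhds 1) := by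
  have he : ∀ᶠ n : ℕ in atTop, ((n - 1 : ℕ) : ℝ) / n = 1 - 1 / n := by
    filter_upwards [eventually_gt_atTop 0] with n hn0
    have hn' : (0:ℝ) < n := by exact_mod_cast hn0
    rw [Nat.cast_sub (by omega), Nat.cast_one]
    field_simp
  rw [tendsto_congr' he]
  simpa using (tendsto_const_nhds (x := (1:ℝ))).sub (tendsto_const_div_atTop_nhds_zero_nat 1)

lemma div_pow_trick {a c : ℝ} {n r : ℕ} (hn : 1 ≤ n) :
    a / (n:ℝ) ^ r / (c / (n:ℝ) ^ r) = a / c := by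
  have hnr : ((n:ℝ)) ^ r ≠ 0 := by
    apply pow_ne_zero
    exact_mod_cast Nat.one_le_iff_ne_zero.1 hn
  rw [div_div_div_comm, div_self hnr, div_one]

lemma slpH_tendsto {b r : ℕ} {α x : ℝ} (hα0 : 0 < α) (hαx : α < x) (hx1 : x < 1)
    {s : ℕ → ℕ} (hs : Tendsto (fun n : ℕ => (s n : ℝ) / n) atTop (nhds α)) :
    Tendsto (fun n : ℕ => slpH n b (s n) r (⌊(n : ℝ) * x⌋₊ + 1)) atTop
      (nhds ((α ^ r / x ^ r) * ((r : ℝ) + ∑ j ∈ Finset.Icc (r + 1) b, ∑ k ∈ Finset.Icc 1 r,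
        (Nat.choose (j - 1) (k - 1) : ℝ) * x ^ (k - 1) * (1 - x) ^ (j - k)))) := by
  have hx0 : 0 < x := lt_trans hα0 hαx
  set i : ℕ → ℕ := fun n => ⌊(n : ℝ) * x⌋₊ + 1 with hidef
  have hi : Tendsto (fun n : ℕ => (i n : ℝ) / n) atTop (nhds x) := by
    have he : ∀ n : ℕ, (i n : ℝ) / n = ((⌊(n : ℝ) * x⌋₊ : ℕ) : ℝ) / n + 1 / n := by
      intro n; rw [hidef]; push_cast; ring
    simp only [he]
    simpa using (floor_div_tendsto hx0.le).add (tendsto_const_div_atTop_nhds_zero_nat 1)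
  have hA : Tendsto (fun n : ℕ =>
      ((Nat.descFactorial (s n) r : ℝ) / (Nat.descFactorial (i n - 1) r : ℝ))) atTop
      (nhds (α ^ r / x ^ r)) := by
    have d1 := desc_ratio_tendsto hα0 hs r
    have d2 := desc_ratio_tendsto hx0 (floor_div_tendsto hx0.le) r
    have hd := d1.div d2 (pow_ne_zero r hx0.ne')
    apply hd.congr'
    filter_upwards [eventually_ge_atTop 1] with n hn
    have h1 : i n - 1 = ⌊(n : ℝ) * x⌋₊ := by simp [hidef]
    simp only [Pi.div_apply, h1]
    exact div_pow_trick hn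
  have hS : Tendsto (fun n : ℕ => ∑ j ∈ Finset.Icc (r + 1) b, ∑ k ∈ Finset.Icc 1 r,
      ((Nat.choose (j - 1) (k - 1) * Nat.choose (n - j) (i n - k) : ℕ) : ℝ)
        / (Nat.choose (n - 1) (i n - 1) : ℝ)) atTop
      (nhds (∑ j ∈ Finset.Icc (r + 1) b, ∑ k ∈ Finset.Icc 1 r,
        (Nat.choose (j - 1) (k - 1) : ℝ) * x ^ (k - 1) * (1 - x) ^ (j - k))) := by
    apply tendsto_finset_sum
    intro j hj
    apply tendsto_finset_sum
    intro k hk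
    simp only [Finset.mem_Icc] at hj hk
    have hc := (choose_ratio_tendsto hk.1 (by omega : k ≤ j) hx0 hx1 hi).const_mul
      ((Nat.choose (j - 1) (k - 1) : ℝ))
    have heq : ∀ n : ℕ, ((Nat.choose (j - 1) (k - 1) * Nat.choose (n - j) (i n - k) : ℕ) : ℝ)
        / (Nat.choose (n - 1) (i n - 1) : ℝ)
        = (Nat.choose (j - 1) (k - 1) : ℝ)
          * (((n - j).choose (i n - k) : ℝ) / ((n - 1).choose (i n - 1) : ℝ)) := by
      intro n; push_cast; ring
    simp only [heq]
    have : (Nat.choose (j - 1) (k - 1) : ℝ) * x ^ (k - 1) * (1 - x) ^ (j - k)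
        = (Nat.choose (j - 1) (k - 1) : ℝ) * (x ^ (k - 1) * (1 - x) ^ (j - k)) := by ring
    rw [this]
    exact hc
  have := hA.mul ((tendsto_const_nhds (x := (r:ℝ))).add hS)
  simpa only [slpH] using this

end SlpAux

open SlpAux MeasureTheory in
/-- Fix `1 ≤ r ≤ b` and let `s(n) = αn + o(n)` with `α ∈ (0,1)` (and `r ≤ s(n) ≤ n-2`
eventually). Then the single-level winning probability converges to
`α^r · ∫_α^1 x^{-r}( r + Σ_{j=r+1}^{b} Σ_{k=1}^{r} C(j-1,k-1)x^{k-1}(1-x)^{j-k} )dx`. -/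
theorem slp_win_prob_tendsto (r b : ℕ) (hr1 : 1 ≤ r) (hrb : r ≤ b)
    (α : ℝ) (hα0 : 0 < α) (hα1 : α < 1) (s : ℕ → ℕ)
    (hs : Tendsto (fun n : ℕ => (s n : ℝ) / (n : ℝ)) atTop (nhds α))
    (hsr : ∀ᶠ n in atTop, r ≤ s n ∧ s n ≤ n - 2) :
    Tendsto (fun n : ℕ => Pslp n b (s n) r) atTop
      (nhds (α ^ r * ∫ x in α..1, (1 / x ^ r) *
        ((r : ℝ) + ∑ j ∈ Finset.Icc (r + 1) b, ∑ k ∈ Finset.Icc 1 r,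
          (Nat.choose (j - 1) (k - 1) : ℝ) * x ^ (k - 1) * (1 - x) ^ (j - k)))) := by
  set G : ℝ → ℝ := fun x => ∑ j ∈ Finset.Icc (r + 1) b, ∑ k ∈ Finset.Icc 1 r,
    (Nat.choose (j - 1) (k - 1) : ℝ) * x ^ (k - 1) * (1 - x) ^ (j - k) with hG
  set T : ℝ → ℝ := fun x => (1 / x ^ r) * ((r : ℝ) + G x) with hT
  set L : ℝ → ℝ := fun x => if α < x then α ^ r * T x else 0 with hL
  -- Step 2 : dominated convergence for the step-function integrals
  have step2 : Tendsto (fun n : ℕ => ∫ x in (0:ℝ)..1, slpF n b (s n) r x) atTop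
      (nhds (∫ x in (0:ℝ)..1, L x)) := by
    apply intervalIntegral.tendsto_integral_filter_of_dominated_convergence
      (bound := fun _ => (r : ℝ) + b)
    · exact Eventually.of_forall fun n =>
        (slpF_measurable n b (s n) r).aestronglyMeasurable
    · filter_upwards [hsr, eventually_ge_atTop b] with n hn hbn
      apply Eventually.of_forall
      intro x _
      rw [Real.norm_eq_abs]
      by_cases hc : ⌊(n : ℝ) * x⌋₊ + 1 ∈ Finset.Icc (s n + 1) (n - 1)
      · rw [slpF, if_pos hc, abs_of_nonneg (slpH_nonneg _ _ _ _ _)]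
        exact slpH_le hn.1 hbn hc
      · rw [slpF, if_neg hc, abs_zero]
        positivity
    · exact intervalIntegrable_const
    · have hane : ∀ᵐ x : ℝ, x ≠ α := by
        rw [ae_iff]
        simp only [ne_eq, not_not, Set.setOf_eq_eq_singleton]
        exact Real.volume_singleton
      have h1ne : ∀ᵐ x : ℝ, x ≠ 1 := by
        rw [ae_iff]
        simp only [ne_eq, not_not, Set.setOf_eq_eq_singleton]
        exact Real.volume_singleton
      filter_upwards [hane, h1ne] with x hxa hx1'
      intro hmem
      rw [Set.uIoc_of_le (by norm_num : (0:ℝ) ≤ 1)] at hmem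
      obtain ⟨hx0, hxle1⟩ := hmem
      rcases lt_or_gt_of_ne hxa with hxlt | hxgt
      · -- x < α : eventually slpF = 0
        have hev : ∀ᶠ n : ℕ in atTop, slpF n b (s n) r x = 0 := by
          filter_upwards [hs.eventually (eventually_gt_nhds hxlt), eventually_ge_atTop 1]
            with n hn hn1
          have hnr : (0:ℝ) < n := by exact_mod_cast hn1
          rw [lt_div_iff₀ hnr] at hn
          have hfl : (⌊(n : ℝ) * x⌋₊ : ℝ) < s n := by
            calc (⌊(n : ℝ) * x⌋₊ : ℝ) ≤ (n : ℝ) * x := Nat.floor_le (by positivity)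
            _ < s n := by nlinarith
          have hcond : ¬ (⌊(n : ℝ) * x⌋₊ + 1 ∈ Finset.Icc (s n + 1) (n - 1)) := by
            simp only [Finset.mem_Icc, not_and, not_le]
            intro h
            exfalso
            have : ⌊(n : ℝ) * x⌋₊ < s n := by exact_mod_cast hfl
            omega
          rw [slpF, if_neg hcond]
        rw [show L x = 0 from if_neg (by linarith)]
        exact (tendsto_congr' (hev.mono fun n h => h.symm)).1 tendsto_const_nhds
      · -- α < x
        have hx1 : x < 1 := lt_of_le_of_ne hxle1 hx1'
        have hev : ∀ᶠ n : ℕ in atTop,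
            slpF n b (s n) r x = slpH n b (s n) r (⌊(n : ℝ) * x⌋₊ + 1) := by
          have hup : ∀ᶠ n : ℕ in atTop, ⌊(n : ℝ) * x⌋₊ + 1 ≤ n - 1 := by
            have hat : Tendsto (fun n : ℕ => (n : ℝ) * (1 - x)) atTop atTop :=
              Tendsto.atTop_mul_const (by linarith) tendsto_natCast_atTop_atTop
            filter_upwards [hat.eventually_ge_atTop 2, eventually_ge_atTop 2] with n hn hn2
            have hle : (n : ℝ) * x ≤ ((n - 2 : ℕ) : ℝ) := by
              rw [Nat.cast_sub hn2]
              push_cast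
              nlinarith
            have := Nat.floor_le_floor hle
            rw [Nat.floor_natCast] at this
            omega
          have hlow : ∀ᶠ n : ℕ in atTop, s n + 1 ≤ ⌊(n : ℝ) * x⌋₊ + 1 := by
            filter_upwards [hs.eventually (eventually_lt_nhds hxgt), eventually_ge_atTop 1]
              with n hn hn1
            have hnr : (0:ℝ) < n := by exact_mod_cast hn1
            rw [div_lt_iff₀ hnr] at hn
            have : s n ≤ ⌊(n : ℝ) * x⌋₊ := Nat.le_floor (by nlinarith)
            omega
          filter_upwards [hup, hlow] with n h1 h2
          rw [slpF, if_pos (Finset.mem_Icc.2 ⟨h2, h1⟩)]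
        rw [show L x = α ^ r * T x from if_pos hxgt]
        have hlim := slpH_tendsto (b := b) (r := r) hα0 hxgt hx1 hs
        have heqv : α ^ r * T x = (α ^ r / x ^ r) * ((r : ℝ) + G x) := by
          rw [hT]; ring
        rw [heqv]
        exact hlim.congr' (hev.mono fun n h => h.symm)
  -- Step 3 : identify the limit integral
  have step3 : ∫ x in (0:ℝ)..1, L x = α ^ r * ∫ x in α..1, T x := by
    have hLind : L = Set.indicator (Set.Ioi α) (fun x => α ^ r * T x) := by
      funext x
      rw [hL, Set.indicator_apply]
      simp [Set.mem_Ioi]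
    rw [intervalIntegral.integral_of_le (by norm_num : (0:ℝ) ≤ 1), hLind,
      integral_indicator measurableSet_Ioi, Measure.restrict_restrict measurableSet_Ioi]
    have hset : Set.Ioi α ∩ Set.Ioc (0:ℝ) 1 = Set.Ioc α 1 := by
      ext y
      simp only [Set.mem_inter_iff, Set.mem_Ioi, Set.mem_Ioc]
      constructor
      · rintro ⟨h1, _, h3⟩; exact ⟨h1, h3⟩
      · rintro ⟨h1, h2⟩; exact ⟨h1, lt_trans hα0 h1, h2⟩
    rw [hset, ← intervalIntegral.integral_of_le hα1.le, intervalIntegral.integral_const_mul]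
  -- Step 4 : the tail term tends to 0
  have step4 : Tendsto (fun n : ℕ =>
      ((Nat.descFactorial (s n) r : ℝ) / (Nat.descFactorial (n - 1) r : ℝ)) * ((b : ℝ) / n))
      atTop (nhds 0) := by
    have d1 := desc_ratio_tendsto hα0 hs r
    have d3 := desc_ratio_tendsto one_pos nsub_one_div_tendsto r
    have hA : Tendsto (fun n : ℕ =>
        ((Nat.descFactorial (s n) r : ℝ) / (Nat.descFactorial (n - 1) r : ℝ))) atTop
        (nhds (α ^ r / 1 ^ r)) := by
      apply (d1.div d3 (by simp)).congr'
      filter_upwards [eventually_ge_atTop 1] with n hn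
      simp only [Pi.div_apply]
      exact div_pow_trick hn
    have hB : Tendsto (fun n : ℕ => (b : ℝ) / n) atTop (nhds 0) :=
      tendsto_const_div_atTop_nhds_zero_nat (b : ℝ)
    simpa using hA.mul hB
  -- Assemble
  have hfin : Tendsto (fun n : ℕ => (∫ x in (0:ℝ)..1, slpF n b (s n) r x)
      + ((Nat.descFactorial (s n) r : ℝ) / (Nat.descFactorial (n - 1) r : ℝ)) * ((b : ℝ) / n))
      atTop (nhds (α ^ r * ∫ x in α..1, T x)) := by
    have := step2.add step4
    rw [add_zero, step3] at this
    exact this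
  apply hfin.congr'
  filter_upwards [eventually_ge_atTop 1] with n hn
  rw [Pslp_eq, slpF_integral hn]
end

section
/- Fix rank levels 1 ≤ r₁ < r₂ ≤ b and let s₁(n) = α₁n + o(n), s₂(n) = α₂n + o(n) with 0 < α₁ < α₂ < 1. Then the double-level winning probability P_DLP^(n) converges as n → ∞ to α₁^{r₁}∫_{α₁}^{α₂} x^{-r₁}( r₁ + Σ_{j=r₁+1}^{b}Σ_{k=1}^{r₁} C(j-1,k-1)x^{k-1}(1-x)^{j-k} )dx + α₁^{r₁}α₂^{r₂-r₁}∫_{α₂}^{1} x^{-r₂}( r₂ + Σ_{j=r₂+1}^{b}Σ_{k=1}^{r₂} C(j-1,k-1)x^{k-1}(1-x)^{j-k} )dx. -/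
open Filter Finset

open MeasureTheory Topology

lemma descF_add (n a c : ℕ) :
    Nat.descFactorial n (a + c) = Nat.descFactorial n a * Nat.descFactorial (n - a) c := by
  induction c with
  | zero => simp
  | succ c ih =>
      rw [← Nat.add_assoc, Nat.descFactorial_succ, ih, Nat.descFactorial_succ,
        Nat.sub_sub, mul_left_comm]

lemma choose_shift (m t d : ℕ) : Nat.choose m t ≤ Nat.choose (m + d) (t + d) := by
  induction d with
  | zero => simp
  | succ d ih =>
      calc Nat.choose m t ≤ Nat.choose (m + d) (t + d) := ih
        _ ≤ Nat.choose (m + d + 1) (t + d + 1) := by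
            rw [Nat.choose_succ_succ]; exact Nat.le_add_right _ _

lemma choose_ratio_le_one {n i j k : ℕ} (hk : 1 ≤ k) (hkj : k ≤ j) (hki : k ≤ i)
    (hkn : k ≤ n) : Nat.choose (n - j) (i - k) ≤ Nat.choose (n - 1) (i - 1) := by
  calc Nat.choose (n - j) (i - k) ≤ Nat.choose (n - k) (i - k) :=
        Nat.choose_le_choose _ (Nat.sub_le_sub_left hkj n)
    _ ≤ Nat.choose (n - k + (k - 1)) (i - k + (k - 1)) := choose_shift _ _ _
    _ = Nat.choose (n - 1) (i - 1) := by congr 1 <;> omega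

lemma div_cast_le_one {p q : ℕ} (h : p ≤ q) : (p : ℝ) / (q : ℝ) ≤ 1 := by
  rcases Nat.eq_zero_or_pos q with hq | hq
  · subst hq; interval_cases p; simp
  · rw [div_le_one (by exact_mod_cast hq)]; exact_mod_cast h

lemma cast_descF {t m : ℕ} (h : t ≤ m) :
    (Nat.descFactorial m t : ℝ) = (Nat.factorial m : ℝ) / (Nat.factorial (m - t) : ℝ) := by
  rw [eq_div_iff (by exact_mod_cast (Nat.factorial_pos _).ne')]
  have := Nat.factorial_mul_descFactorial h
  exact_mod_cast (mul_comm (Nat.factorial (m-t)) _ ▸ this)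

lemma tendsto_descF_div_pow (u : ℕ → ℕ) (y : ℝ) (hy : 0 < y)
    (hu : Tendsto (fun n : ℕ => (u n : ℝ) / n) atTop (𝓝 y)) (t : ℕ) :
    Tendsto (fun n : ℕ => (Nat.descFactorial (u n) t : ℝ) / (n : ℝ) ^ t) atTop (𝓝 (y ^ t)) := by
  have hut : ∀ᶠ n : ℕ in atTop, t ≤ u n := by
    have h1 : ∀ᶠ n : ℕ in atTop, y / 2 < (u n : ℝ) / n :=
      hu.eventually (eventually_gt_nhds (by linarith))
    have h2 : Tendsto (fun n : ℕ => y / 2 * (n : ℝ)) atTop atTop :=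
      Tendsto.const_mul_atTop (by linarith) tendsto_natCast_atTop_atTop
    filter_upwards [h1, h2.eventually_ge_atTop (t : ℝ), eventually_ge_atTop 1]
      with n hn1 hn2 hn3
    have hnpos : (0 : ℝ) < n := by exact_mod_cast hn3
    have : (t : ℝ) ≤ (u n : ℝ) := by
      calc (t : ℝ) ≤ y / 2 * n := hn2
        _ ≤ (u n : ℝ) / n * n := by nlinarith
        _ = (u n : ℝ) := by field_simp
    exact_mod_cast this
  have hfac : ∀ m ∈ range t, Tendsto (fun n : ℕ => ((u n : ℝ) - m) / n) atTop (𝓝 y) := by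
    intro m _
    have h0 : Tendsto (fun n : ℕ => (m : ℝ) / n) atTop (𝓝 0) :=
      tendsto_const_div_atTop_nhds_zero_nat (m : ℝ)
    have := hu.sub h0
    simpa [sub_div] using this
  have hprod := tendsto_finset_prod (range t) (fun m hm => hfac m hm)
  rw [Finset.prod_const, Finset.card_range] at hprod
  refine hprod.congr' ?_
  filter_upwards [hut, eventually_ge_atTop 1] with n hn1 hn2
  rw [Nat.descFactorial_eq_prod_range, Nat.cast_prod]
  rw [show ((n:ℝ)^t) = ∏ _m ∈ range t, (n:ℝ) by rw [Finset.prod_const, Finset.card_range]]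
  rw [← Finset.prod_div_distrib]
  refine Finset.prod_congr rfl fun m hm => ?_
  rw [Nat.cast_sub (le_trans (le_of_lt (Finset.mem_range.1 hm)) hn1)]

lemma choose_ratio_eq {n i j k : ℕ} (hk : 1 ≤ k) (hki : k ≤ i) (hkj : k ≤ j)
    (hjn : j ≤ n) (h : i - k ≤ n - j) :
    ((Nat.choose (n - j) (i - k) : ℝ)) / (Nat.choose (n - 1) (i - 1) : ℝ) =
      ((Nat.descFactorial (i - 1) (k - 1) : ℝ) * (Nat.descFactorial (n - i) (j - k) : ℝ)) /
        (Nat.descFactorial (n - 1) (j - 1) : ℝ) := by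
  have hin : i ≤ n := by omega
  have e1 : ((n - j).choose (i - k) : ℝ) =
      (Nat.factorial (n - j)) / (Nat.factorial (i - k) * Nat.factorial ((n - i) - (j - k))) := by
    have hh : (n - j) - (i - k) = (n - i) - (j - k) := by omega
    rw [Nat.cast_choose ℝ h, hh]
  have e2 : ((n - 1).choose (i - 1) : ℝ) =
      (Nat.factorial (n - 1)) / (Nat.factorial (i - 1) * Nat.factorial (n - i)) := by
    have hh : (n - 1) - (i - 1) = n - i := by omega
    rw [Nat.cast_choose ℝ (by omega : i - 1 ≤ n - 1), hh]
  have d1 : ((i - 1).descFactorial (k - 1) : ℝ) =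
      (Nat.factorial (i - 1)) / (Nat.factorial (i - k)) := by
    have hh : (i - 1) - (k - 1) = i - k := by omega
    rw [cast_descF (by omega : k - 1 ≤ i - 1), hh]
  have d2 : ((n - i).descFactorial (j - k) : ℝ) =
      (Nat.factorial (n - i)) / (Nat.factorial ((n - i) - (j - k))) := by
    rw [cast_descF (by omega : j - k ≤ n - i)]
  have d3 : ((n - 1).descFactorial (j - 1) : ℝ) =
      (Nat.factorial (n - 1)) / (Nat.factorial (n - j)) := by
    have hh : (n - 1) - (j - 1) = n - j := by omega
    rw [cast_descF (by omega : j - 1 ≤ n - 1), hh]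
  rw [e1, e2, d1, d2, d3]
  have p1 := Nat.factorial_pos (n - j)
  have p2 := Nat.factorial_pos (i - k)
  have p3 := Nat.factorial_pos ((n - i) - (j - k))
  have p4 := Nat.factorial_pos (n - 1)
  have p5 := Nat.factorial_pos (i - 1)
  have p6 := Nat.factorial_pos (n - i)
  have q1 : (0:ℝ) < Nat.factorial (n - j) := by exact_mod_cast p1
  have q2 : (0:ℝ) < Nat.factorial (i - k) := by exact_mod_cast p2
  have q3 : (0:ℝ) < Nat.factorial ((n - i) - (j - k)) := by exact_mod_cast p3
  have q4 : (0:ℝ) < Nat.factorial (n - 1) := by exact_mod_cast p4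
  have q5 : (0:ℝ) < Nat.factorial (i - 1) := by exact_mod_cast p5
  have q6 : (0:ℝ) < Nat.factorial (n - i) := by exact_mod_cast p6
  field_simp

lemma ceil_mem_Icc {a c n : ℕ} (hn : 1 ≤ n) {x : ℝ}
    (hx : x ∈ Set.Ioc ((a : ℝ) / n) ((c : ℝ) / n)) :
    ⌈(n : ℝ) * x⌉₊ ∈ Finset.Icc (a + 1) (c : ℕ) := by
  have hnpos : (0 : ℝ) < n := by exact_mod_cast hn
  obtain ⟨hx1, hx2⟩ := hx
  have h1 : (a : ℝ) < (n : ℝ) * x := by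
    rw [div_lt_iff₀ hnpos] at hx1; linarith [hx1]
  have h2 : (n : ℝ) * x ≤ (c : ℝ) := by
    rw [le_div_iff₀ hnpos] at hx2; linarith [hx2]
  rw [Finset.mem_Icc]
  constructor
  · have := Nat.lt_ceil.2 h1
    omega
  · exact Nat.ceil_le.2 h2

lemma sum_eq_indicator (T : ℕ → ℕ → ℝ) (a c n : ℕ) (hn : 1 ≤ n) (ha1 : 1 ≤ a) (x : ℝ) :
    (∑ i ∈ Finset.Icc (a + 1) c,
        Set.indicator (Set.Ioc (((i : ℝ) - 1) / n) ((i : ℝ) / n)) (fun _ => (n : ℝ) * T n i) x)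
      = Set.indicator (Set.Ioc ((a : ℝ) / n) ((c : ℝ) / n))
          (fun y => (n : ℝ) * T n ⌈(n : ℝ) * y⌉₊) x := by
  have hnpos : (0 : ℝ) < n := by exact_mod_cast hn
  by_cases hx : x ∈ Set.Ioc ((a : ℝ) / n) ((c : ℝ) / n)
  · rw [Set.indicator_of_mem hx]
    set i := ⌈(n : ℝ) * x⌉₊ with hi
    have hmem : i ∈ Finset.Icc (a + 1) c := ceil_mem_Icc hn hx
    have hxpos : 0 < x := lt_of_le_of_lt (by positivity) hx.1
    have hnx : (0 : ℝ) ≤ (n : ℝ) * x := by positivity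
    rw [Finset.sum_eq_single_of_mem i hmem]
    · rw [Set.indicator_of_mem]
      constructor
      · rw [div_lt_iff₀ hnpos]
        have := Nat.ceil_lt_add_one hnx
        rw [← hi] at this
        linarith [this, mul_comm ((i:ℝ) - 1) (n:ℝ)]
      · rw [le_div_iff₀ hnpos]
        have := Nat.le_ceil ((n : ℝ) * x)
        rw [← hi] at this
        linarith [this, mul_comm x (n:ℝ)]
    · intro j hj hji
      rw [Set.indicator_of_notMem]
      intro hxj
      apply hji
      have hj1 : 1 ≤ j := le_trans (by omega) (Finset.mem_Icc.1 hj).1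
      have : ⌈(n : ℝ) * x⌉₊ = j := by
        rw [Nat.ceil_eq_iff (by omega)]
        constructor
        · have := hxj.1
          rw [div_lt_iff₀ hnpos] at this
          have hc : ((j - 1 : ℕ) : ℝ) = (j : ℝ) - 1 := by
            rw [Nat.cast_sub hj1]; norm_num
          rw [hc]; linarith [mul_comm ((j:ℝ) - 1) (n:ℝ), this]
        · have := hxj.2
          rw [le_div_iff₀ hnpos] at this
          linarith [mul_comm x (n:ℝ), this]
      omega
  · rw [Set.indicator_of_notMem hx]
    apply Finset.sum_eq_zero
    intro j hj
    obtain ⟨hj1, hj2⟩ := Finset.mem_Icc.1 hj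
    rw [Set.indicator_of_notMem]
    intro hxj
    apply hx
    have ha : (a : ℝ) ≤ (j : ℝ) - 1 := by
      have : (a : ℝ) + 1 ≤ (j : ℝ) := by exact_mod_cast hj1
      linarith
    have hc : (j : ℝ) ≤ (c : ℝ) := by exact_mod_cast hj2
    constructor
    · refine lt_of_le_of_lt ?_ hxj.1
      gcongr
    · refine le_trans hxj.2 ?_
      gcongr

lemma eventually_ge_of_div_tendsto (u : ℕ → ℕ) (y : ℝ) (hy : 0 < y)
    (hu : Tendsto (fun n : ℕ => (u n : ℝ) / n) atTop (𝓝 y)) (t : ℕ) :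
    ∀ᶠ n : ℕ in atTop, t ≤ u n := by
  have h1 : ∀ᶠ n : ℕ in atTop, y / 2 < (u n : ℝ) / n :=
    hu.eventually (eventually_gt_nhds (by linarith))
  have h2 : Tendsto (fun n : ℕ => y / 2 * (n : ℝ)) atTop atTop :=
    Tendsto.const_mul_atTop (by linarith) tendsto_natCast_atTop_atTop
  filter_upwards [h1, h2.eventually_ge_atTop (t : ℝ), eventually_ge_atTop 1]
    with n hn1 hn2 hn3
  have hnpos : (0 : ℝ) < n := by exact_mod_cast hn3
  have : (t : ℝ) ≤ (u n : ℝ) := by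
    calc (t : ℝ) ≤ y / 2 * n := hn2
      _ ≤ (u n : ℝ) / n * n := by nlinarith
      _ = (u n : ℝ) := by field_simp
  exact_mod_cast this

lemma sum_tendsto_setIntegral (T : ℕ → ℕ → ℝ) (g : ℝ → ℝ) (a c : ℕ → ℕ) (α β M : ℝ)
    (hα : 0 < α) (hαβ : α < β) (hβ : β ≤ 1)
    (ha : Tendsto (fun n : ℕ => (a n : ℝ) / n) atTop (𝓝 α))
    (hc : Tendsto (fun n : ℕ => (c n : ℝ) / n) atTop (𝓝 β))
    (hcn : ∀ᶠ n : ℕ in atTop, c n ≤ n)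
    (hbd : ∀ᶠ n : ℕ in atTop, ∀ i ∈ Finset.Icc (a n + 1) (c n), |(n : ℝ) * T n i| ≤ M)
    (hlim : ∀ x ∈ Set.Ioo α β,
      Tendsto (fun n : ℕ => (n : ℝ) * T n ⌈(n : ℝ) * x⌉₊) atTop (𝓝 (g x))) :
    Tendsto (fun n : ℕ => ∑ i ∈ Finset.Icc (a n + 1) (c n), T n i) atTop
      (𝓝 (∫ x in Set.Ioc α β, g x)) := by
  set F : ℕ → ℝ → ℝ := fun n x => ∑ i ∈ Finset.Icc (a n + 1) (c n),
    Set.indicator (Set.Ioc (((i : ℝ) - 1) / n) ((i : ℝ) / n)) (fun _ => (n : ℝ) * T n i) x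
    with hF
  have ha1 : ∀ᶠ n : ℕ in atTop, 1 ≤ a n := eventually_ge_of_div_tendsto a α hα ha 1
  -- Step A : the sum equals the integral of F n
  have hint : ∀ᶠ n : ℕ in atTop,
      (∑ i ∈ Finset.Icc (a n + 1) (c n), T n i) = ∫ x, F n x := by
    filter_upwards [eventually_ge_atTop 1] with n hn
    have hnpos : (0 : ℝ) < n := by exact_mod_cast hn
    rw [hF]
    rw [integral_finset_sum _ (fun i _ => (integrable_indicator_iff measurableSet_Ioc).2
      (integrableOn_const measure_Ioc_lt_top.ne))]
    refine Finset.sum_congr rfl fun i _ => ?_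
    rw [integral_indicator_const _ measurableSet_Ioc, measureReal_def, Real.volume_Ioc]
    rw [show (i : ℝ) / n - ((i : ℝ) - 1) / n = 1 / n by field_simp; ring]
    rw [ENNReal.toReal_ofReal (by positivity)]
    simp only [smul_eq_mul]
    field_simp
  -- Step B : dominated convergence
  set bound : ℝ → ℝ := Set.indicator (Set.Ioc (0 : ℝ) 1) (fun _ => |M|) with hbnd
  have hbound_nonneg : ∀ x, 0 ≤ bound x := fun x =>
    Set.indicator_nonneg (fun _ _ => abs_nonneg M) x
  have hFmeas : ∀ᶠ n : ℕ in atTop, AEStronglyMeasurable (F n) volume := by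
    refine Eventually.of_forall fun n => ?_
    exact (Finset.measurable_sum _ fun i _ =>
      (measurable_const.indicator measurableSet_Ioc)).aestronglyMeasurable
  have hbound : ∀ᶠ n : ℕ in atTop, ∀ᵐ x : ℝ, ‖F n x‖ ≤ bound x := by
    filter_upwards [hbd, hcn, ha1, eventually_ge_atTop 1] with n hbdn hcnn ha1n hn1
    refine Eventually.of_forall fun x => ?_
    have hnpos : (0 : ℝ) < n := by exact_mod_cast hn1
    rw [hF]
    simp only []
    rw [sum_eq_indicator T (a n) (c n) n hn1 ha1n x]
    by_cases hx : x ∈ Set.Ioc ((a n : ℝ) / n) ((c n : ℝ) / n)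
    · rw [Set.indicator_of_mem hx]
      have hx01 : x ∈ Set.Ioc (0 : ℝ) 1 := by
        constructor
        · exact lt_of_le_of_lt (by positivity) hx.1
        · refine le_trans hx.2 ?_
          rw [div_le_one hnpos]
          exact_mod_cast hcnn
      rw [hbnd, Set.indicator_of_mem hx01]
      calc ‖(n : ℝ) * T n ⌈(n : ℝ) * x⌉₊‖ = |(n : ℝ) * T n ⌈(n : ℝ) * x⌉₊| := rfl
        _ ≤ M := hbdn _ (ceil_mem_Icc hn1 hx)
        _ ≤ |M| := le_abs_self M
    · rw [Set.indicator_of_notMem hx]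
      simpa using hbound_nonneg x
  have hbint : Integrable bound volume := by
    rw [hbnd]
    exact (integrable_indicator_iff measurableSet_Ioc).2
      (integrableOn_const measure_Ioc_lt_top.ne)
  have hae : ∀ᵐ x : ℝ, x ∉ ({α, β} : Set ℝ) := by
    rw [← MeasureTheory.measure_eq_zero_iff_ae_notMem]
    exact Set.Finite.measure_zero (Set.toFinite _) volume
  have hlimae : ∀ᵐ x : ℝ, Tendsto (fun n : ℕ => F n x) atTop
      (𝓝 (Set.indicator (Set.Ioc α β) g x)) := by
    filter_upwards [hae] with x hx
    simp only [Set.mem_insert_iff, Set.mem_singleton_iff, not_or] at hx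
    rcases lt_trichotomy x α with hxa | hxa | hxa
    · rw [Set.indicator_of_notMem (by intro h; exact absurd h.1 (not_lt.2 hxa.le))]
      have h1 : ∀ᶠ n : ℕ in atTop, x < (a n : ℝ) / n := ha.eventually (eventually_gt_nhds hxa)
      refine Tendsto.congr' ?_ tendsto_const_nhds
      filter_upwards [h1, eventually_ge_atTop 1, ha1] with n hn1 hn2 hn3
      rw [hF]
      simp only []
      rw [sum_eq_indicator T (a n) (c n) n hn2 hn3 x]
      rw [Set.indicator_of_notMem (by intro h; exact absurd h.1 (not_lt.2 hn1.le))]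
    · exact absurd hxa hx.1
    · rcases lt_trichotomy x β with hxb | hxb | hxb
      · rw [Set.indicator_of_mem (Set.mem_Ioc.2 ⟨hxa, hxb.le⟩)]
        have h1 : ∀ᶠ n : ℕ in atTop, (a n : ℝ) / n < x := ha.eventually (eventually_lt_nhds hxa)
        have h2 : ∀ᶠ n : ℕ in atTop, x < (c n : ℝ) / n := hc.eventually (eventually_gt_nhds hxb)
        refine Tendsto.congr' ?_ (hlim x ⟨hxa, hxb⟩)
        filter_upwards [h1, h2, eventually_ge_atTop 1, ha1] with n hn1 hn2 hn3 hn4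
        rw [hF]
        simp only []
        rw [sum_eq_indicator T (a n) (c n) n hn3 hn4 x]
        rw [Set.indicator_of_mem (Set.mem_Ioc.2 ⟨hn1, hn2.le⟩)]
      · exact absurd hxb hx.2
      · rw [Set.indicator_of_notMem (by intro h; exact absurd h.2 (not_le.2 hxb))]
        have h2 : ∀ᶠ n : ℕ in atTop, (c n : ℝ) / n < x := hc.eventually (eventually_lt_nhds hxb)
        refine Tendsto.congr' ?_ tendsto_const_nhds
        filter_upwards [h2, eventually_ge_atTop 1, ha1] with n hn1 hn2 hn3
        rw [hF]
        simp only []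
        rw [sum_eq_indicator T (a n) (c n) n hn2 hn3 x]
        rw [Set.indicator_of_notMem (by intro h; exact absurd h.2 (not_le.2 hn1))]
  have hdct := tendsto_integral_filter_of_dominated_convergence bound hFmeas hbound hbint hlimae
  rw [integral_indicator measurableSet_Ioc] at hdct
  exact hdct.congr' (by filter_upwards [hint] with n h using h.symm)

lemma abs_term_le {n i r b N : ℕ} (hr : 1 ≤ r) (hrb : r ≤ b)
    (hN : N ≤ Nat.descFactorial (i - 1) r) (hbi : b + 1 ≤ i) (hin : i ≤ n - 1) (hn : 1 ≤ n) :
    |((N : ℝ) / (Nat.descFactorial (i - 1) r : ℝ)) *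
        ((r : ℝ) + ∑ j ∈ Finset.Icc (r + 1) b, ∑ k ∈ Finset.Icc 1 r,
          ((Nat.choose (j - 1) (k - 1) * Nat.choose (n - j) (i - k) : ℕ) : ℝ)
            / (Nat.choose (n - 1) (i - 1) : ℝ))|
      ≤ (r : ℝ) + ∑ j ∈ Finset.Icc (r + 1) b, ∑ k ∈ Finset.Icc 1 r,
          (Nat.choose (j - 1) (k - 1) : ℝ) := by
  set S := ∑ j ∈ Finset.Icc (r + 1) b, ∑ k ∈ Finset.Icc 1 r,
      ((Nat.choose (j - 1) (k - 1) * Nat.choose (n - j) (i - k) : ℕ) : ℝ)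
        / (Nat.choose (n - 1) (i - 1) : ℝ) with hSdef
  have hD0 : (0 : ℝ) ≤ (N : ℝ) / (Nat.descFactorial (i - 1) r : ℝ) := by positivity
  have hD1 : (N : ℝ) / (Nat.descFactorial (i - 1) r : ℝ) ≤ 1 := div_cast_le_one hN
  have hS0 : 0 ≤ S := by
    rw [hSdef]
    refine Finset.sum_nonneg fun j _ => Finset.sum_nonneg fun k _ => by positivity
  have hSle : S ≤ ∑ j ∈ Finset.Icc (r + 1) b, ∑ k ∈ Finset.Icc 1 r,
      (Nat.choose (j - 1) (k - 1) : ℝ) := by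
    rw [hSdef]
    refine Finset.sum_le_sum fun j hj => Finset.sum_le_sum fun k hk => ?_
    obtain ⟨hk1, hkr⟩ := Finset.mem_Icc.1 hk
    obtain ⟨hj1, hjb⟩ := Finset.mem_Icc.1 hj
    rw [Nat.cast_mul, mul_div_assoc]
    calc (Nat.choose (j - 1) (k - 1) : ℝ) *
          ((Nat.choose (n - j) (i - k) : ℝ) / (Nat.choose (n - 1) (i - 1) : ℝ))
        ≤ (Nat.choose (j - 1) (k - 1) : ℝ) * 1 := by
          refine mul_le_mul_of_nonneg_left ?_ (by positivity)
          exact div_cast_le_one (choose_ratio_le_one hk1 (by omega) (by omega) (by omega))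
      _ = _ := mul_one _
  rw [abs_of_nonneg (by positivity)]
  calc (N : ℝ) / (Nat.descFactorial (i - 1) r : ℝ) * ((r : ℝ) + S)
      ≤ 1 * ((r : ℝ) + S) := by
        refine mul_le_mul_of_nonneg_right hD1 (by positivity)
    _ = (r : ℝ) + S := one_mul _
    _ ≤ _ := by linarith

lemma tendsto_ceil_div (x : ℝ) (hx : 0 < x) :
    Tendsto (fun n : ℕ => ((⌈(n : ℝ) * x⌉₊ : ℕ) : ℝ) / n) atTop (𝓝 x) := by
  have hub : Tendsto (fun n : ℕ => x + 1 / (n : ℝ)) atTop (𝓝 x) := by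
    have := tendsto_one_div_atTop_nhds_zero_nat (𝕜 := ℝ)
    simpa using tendsto_const_nhds.add this
  refine tendsto_of_tendsto_of_tendsto_of_le_of_le' tendsto_const_nhds hub ?_ ?_
  · filter_upwards [eventually_ge_atTop 1] with n hn
    have hnpos : (0 : ℝ) < n := by exact_mod_cast hn
    rw [le_div_iff₀ hnpos]
    calc x * n = (n : ℝ) * x := mul_comm _ _
      _ ≤ _ := Nat.le_ceil _
  · filter_upwards [eventually_ge_atTop 1] with n hn
    have hnpos : (0 : ℝ) < n := by exact_mod_cast hn
    rw [div_le_iff₀ hnpos]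
    have h1 : ((⌈(n : ℝ) * x⌉₊ : ℕ) : ℝ) < (n : ℝ) * x + 1 :=
      Nat.ceil_lt_add_one (by positivity)
    calc ((⌈(n : ℝ) * x⌉₊ : ℕ) : ℝ) ≤ (n : ℝ) * x + 1 := h1.le
      _ = (x + 1 / n) * n := by field_simp
lemma tendsto_cast_sub_div {u : ℕ → ℕ} {y : ℝ} (d : ℕ)
    (hu : Tendsto (fun n : ℕ => (u n : ℝ) / n) atTop (𝓝 y))
    (hud : ∀ᶠ n : ℕ in atTop, d ≤ u n) :
    Tendsto (fun n : ℕ => ((u n - d : ℕ) : ℝ) / n) atTop (𝓝 y) := by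
  have h0 : Tendsto (fun n : ℕ => (d : ℝ) / n) atTop (𝓝 0) :=
    tendsto_const_div_atTop_nhds_zero_nat (d : ℝ)
  have := hu.sub h0
  rw [sub_zero] at this
  refine this.congr' ?_
  filter_upwards [hud] with n hn
  rw [Nat.cast_sub hn, sub_div]

lemma tendsto_cast_nsub_div {u : ℕ → ℕ} {y : ℝ}
    (hu : Tendsto (fun n : ℕ => (u n : ℝ) / n) atTop (𝓝 y))
    (hun : ∀ᶠ n : ℕ in atTop, u n ≤ n) :
    Tendsto (fun n : ℕ => ((n - u n : ℕ) : ℝ) / n) atTop (𝓝 (1 - y)) := by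
  have h1 : Tendsto (fun n : ℕ => (n : ℝ) / n) atTop (𝓝 1) := by
    refine Tendsto.congr' ?_ tendsto_const_nhds
    filter_upwards [eventually_ge_atTop 1] with n hn
    have hnpos : (0 : ℝ) < n := by exact_mod_cast hn
    field_simp
  have := h1.sub hu
  refine this.congr' ?_
  filter_upwards [hun] with n hn
  rw [Nat.cast_sub hn, sub_div]

lemma tendsto_nat_sub_one_div : Tendsto (fun n : ℕ => ((n - 1 : ℕ) : ℝ) / n) atTop (𝓝 1) := by
  have h1 : Tendsto (fun n : ℕ => (n : ℝ) / n) atTop (𝓝 1) := by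
    refine Tendsto.congr' ?_ tendsto_const_nhds
    filter_upwards [eventually_ge_atTop 1] with n hn
    have hnpos : (0 : ℝ) < n := by exact_mod_cast hn
    field_simp
  exact tendsto_cast_sub_div 1 h1 (eventually_ge_atTop 1)

lemma term_tendsto (N : ℕ → ℕ) (r b : ℕ) (hr : 1 ≤ r) (hrb : r ≤ b) (L : ℝ) (hL : 0 < L)
    (hN : Tendsto (fun n : ℕ => (N n : ℝ) / (n : ℝ) ^ r) atTop (𝓝 L))
    (x : ℝ) (hx0 : 0 < x) (hx1 : x < 1) :
    Tendsto (fun n : ℕ =>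
      ((N n : ℝ) / (Nat.descFactorial (⌈(n : ℝ) * x⌉₊ - 1) r : ℝ)) *
        ((r : ℝ) + ∑ j ∈ Finset.Icc (r + 1) b, ∑ k ∈ Finset.Icc 1 r,
          ((Nat.choose (j - 1) (k - 1) * Nat.choose (n - j) (⌈(n : ℝ) * x⌉₊ - k) : ℕ) : ℝ)
            / (Nat.choose (n - 1) (⌈(n : ℝ) * x⌉₊ - 1) : ℝ)))
      atTop
      (𝓝 ((L / x ^ r) * ((r : ℝ) + ∑ j ∈ Finset.Icc (r + 1) b, ∑ k ∈ Finset.Icc 1 r,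
        (Nat.choose (j - 1) (k - 1) : ℝ) * x ^ (k - 1) * (1 - x) ^ (j - k)))) := by
  set i : ℕ → ℕ := fun n => ⌈(n : ℝ) * x⌉₊ with hidef
  have hi : Tendsto (fun n : ℕ => (i n : ℝ) / n) atTop (𝓝 x) := tendsto_ceil_div x hx0
  have hige : ∀ᶠ n : ℕ in atTop, b + 2 ≤ i n :=
    eventually_ge_of_div_tendsto i x hx0 hi (b + 2)
  have hile : ∀ᶠ n : ℕ in atTop, i n + b + 2 ≤ n := by
    have h2 : Tendsto (fun n : ℕ => (1 - x) * (n : ℝ)) atTop atTop :=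
      Tendsto.const_mul_atTop (by linarith) tendsto_natCast_atTop_atTop
    filter_upwards [h2.eventually_ge_atTop ((b : ℝ) + 3), eventually_ge_atTop 1] with n hn hn1
    have hnpos : (0 : ℝ) < n := by exact_mod_cast hn1
    have h1 : ((i n : ℕ) : ℝ) < (n : ℝ) * x + 1 := Nat.ceil_lt_add_one (by positivity)
    have : ((i n : ℕ) : ℝ) + (b : ℝ) + 2 ≤ (n : ℝ) := by nlinarith
    exact_mod_cast this
  have hi1 : Tendsto (fun n : ℕ => ((i n - 1 : ℕ) : ℝ) / n) atTop (𝓝 x) :=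
    tendsto_cast_sub_div 1 hi (hige.mono fun n hn => by omega)
  have hni : Tendsto (fun n : ℕ => ((n - i n : ℕ) : ℝ) / n) atTop (𝓝 (1 - x)) :=
    tendsto_cast_nsub_div hi (hile.mono fun n hn => by omega)
  -- the descFactorial ratio
  have hD : Tendsto (fun n : ℕ => (N n : ℝ) / (Nat.descFactorial (i n - 1) r : ℝ)) atTop
      (𝓝 (L / x ^ r)) := by
    have h2 := tendsto_descF_div_pow (fun n => i n - 1) x hx0 hi1 r
    have h3 := hN.div h2 (pow_ne_zero r hx0.ne')
    refine h3.congr' ?_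
    filter_upwards [hige, eventually_ge_atTop 1] with n hn hn1
    have hnpos : (0 : ℝ) < n := by exact_mod_cast hn1
    have hd0 : (Nat.descFactorial (i n - 1) r : ℝ) ≠ 0 := by
      have : ¬ (i n - 1 < r) := by omega
      exact_mod_cast fun h => this (Nat.descFactorial_eq_zero_iff_lt.1 (by exact_mod_cast h))
    simp only [Pi.div_apply]
    rw [div_div_div_comm, div_self (by positivity : ((n:ℝ))^r ≠ 0), div_one]
  -- ratio of binomials
  have hR : ∀ j ∈ Finset.Icc (r + 1) b, ∀ k ∈ Finset.Icc 1 r,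
      Tendsto (fun n : ℕ =>
        ((Nat.choose (j - 1) (k - 1) * Nat.choose (n - j) (i n - k) : ℕ) : ℝ)
          / (Nat.choose (n - 1) (i n - 1) : ℝ)) atTop
        (𝓝 ((Nat.choose (j - 1) (k - 1) : ℝ) * x ^ (k - 1) * (1 - x) ^ (j - k))) := by
    intro j hj k hk
    obtain ⟨hj1, hjb⟩ := Finset.mem_Icc.1 hj
    obtain ⟨hk1, hkr⟩ := Finset.mem_Icc.1 hk
    have core : Tendsto (fun n : ℕ =>
        (Nat.choose (n - j) (i n - k) : ℝ) / (Nat.choose (n - 1) (i n - 1) : ℝ)) atTop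
        (𝓝 (x ^ (k - 1) * (1 - x) ^ (j - k))) := by
      have t1 := tendsto_descF_div_pow (fun n => i n - 1) x hx0 hi1 (k - 1)
      have t2 := tendsto_descF_div_pow (fun n => n - i n) (1 - x) (by linarith) hni (j - k)
      have t3 := tendsto_descF_div_pow (fun n => n - 1) 1 one_pos tendsto_nat_sub_one_div (j - 1)
      have t4 := (t1.mul t2).div t3 (by rw [one_pow]; norm_num)
      rw [one_pow, div_one] at t4
      refine t4.congr' ?_
      filter_upwards [hige, hile, eventually_ge_atTop (b + 2)] with n hn hn2 hn1
      have hnpos : (0 : ℝ) < n := by exact_mod_cast (show 1 ≤ n by omega)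
      have hd3 : (Nat.descFactorial (n - 1) (j - 1) : ℝ) ≠ 0 := by
        have : ¬ (n - 1 < j - 1) := by omega
        exact_mod_cast fun h => this (Nat.descFactorial_eq_zero_iff_lt.1 (by exact_mod_cast h))
      have hpow : (n : ℝ) ^ (j - 1) = (n : ℝ) ^ (k - 1) * (n : ℝ) ^ (j - k) := by
        rw [← pow_add]; congr 1; omega
      simp only [Pi.div_apply]
      rw [choose_ratio_eq hk1 (by omega) (by omega) (by omega) (by omega)]
      rw [div_mul_div_comm, ← hpow, div_div_div_comm,
        div_self (by positivity : ((n:ℝ))^(j-1) ≠ 0), div_one]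
    have heq : (fun n : ℕ =>
        ((Nat.choose (j - 1) (k - 1) * Nat.choose (n - j) (i n - k) : ℕ) : ℝ)
          / (Nat.choose (n - 1) (i n - 1) : ℝ))
        = fun n : ℕ => (Nat.choose (j - 1) (k - 1) : ℝ) *
            ((Nat.choose (n - j) (i n - k) : ℝ) / (Nat.choose (n - 1) (i n - 1) : ℝ)) := by
      funext n; rw [Nat.cast_mul, mul_div_assoc]
    rw [heq, mul_assoc]
    exact core.const_mul _
  have hS := tendsto_finset_sum (Finset.Icc (r + 1) b) fun j hj =>
    tendsto_finset_sum (Finset.Icc 1 r) fun k hk => hR j hj k hk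
  exact hD.mul (tendsto_const_nhds.add hS)

lemma mul_term_algebra (n D r S : ℝ) (hn : n ≠ 0) :
    n * (D * (r / n + 1 / n * S)) = D * (r + S) := by
  field_simp

noncomputable def Pdlp (n b s₁ s₂ r₁ r₂ : ℕ) : ℝ :=
  (∑ i ∈ Finset.Icc (s₁ + 1) s₂,
      ((Nat.descFactorial s₁ r₁ : ℝ) / (Nat.descFactorial (i - 1) r₁ : ℝ)) *
        ((r₁ : ℝ) / (n : ℝ) + (1 / (n : ℝ)) *
          ∑ j ∈ Finset.Icc (r₁ + 1) b, ∑ k ∈ Finset.Icc 1 r₁,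
            ((Nat.choose (j - 1) (k - 1) * Nat.choose (n - j) (i - k) : ℕ) : ℝ)
              / (Nat.choose (n - 1) (i - 1) : ℝ)))
    + (∑ i ∈ Finset.Icc (s₂ + 1) (n - 1),
      (((Nat.descFactorial s₁ r₁ * Nat.descFactorial (s₂ - r₁) (r₂ - r₁) : ℕ) : ℝ)
          / (Nat.descFactorial (i - 1) r₂ : ℝ)) *
        ((r₂ : ℝ) / (n : ℝ) + (1 / (n : ℝ)) *
          ∑ j ∈ Finset.Icc (r₂ + 1) b, ∑ k ∈ Finset.Icc 1 r₂,
            ((Nat.choose (j - 1) (k - 1) * Nat.choose (n - j) (i - k) : ℕ) : ℝ)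
              / (Nat.choose (n - 1) (i - 1) : ℝ)))
    + (((Nat.descFactorial s₁ r₁ * Nat.descFactorial (s₂ - r₁) (r₂ - r₁) : ℕ) : ℝ)
          / (Nat.descFactorial (n - 1) r₂ : ℝ)) * ((b : ℝ) / (n : ℝ))

/-- Fix `1 ≤ r₁ < r₂ ≤ b`, and let `s₁(n) = α₁n + o(n)`, `s₂(n) = α₂n + o(n)` with
`0 < α₁ < α₂ < 1`. Then the double-level winning probability converges to
`α₁^{r₁}∫_{α₁}^{α₂} x^{-r₁}(r₁ + Σ…)dx + α₁^{r₁}α₂^{r₂-r₁}∫_{α₂}^{1} x^{-r₂}(r₂ + Σ…)dx`. -/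
theorem dlp_win_prob_tendsto (r₁ r₂ b : ℕ) (hr1 : 1 ≤ r₁) (hr12 : r₁ < r₂) (hr2b : r₂ ≤ b)
    (α₁ α₂ : ℝ) (hα1 : 0 < α₁) (hα12 : α₁ < α₂) (hα2 : α₂ < 1) (s₁ s₂ : ℕ → ℕ)
    (hs1 : Tendsto (fun n : ℕ => (s₁ n : ℝ) / (n : ℝ)) atTop (nhds α₁))
    (hs2 : Tendsto (fun n : ℕ => (s₂ n : ℝ) / (n : ℝ)) atTop (nhds α₂)) :
    Tendsto (fun n : ℕ => Pdlp n b (s₁ n) (s₂ n) r₁ r₂) atTop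
      (nhds (α₁ ^ r₁ * (∫ x in α₁..α₂, (1 / x ^ r₁) *
          ((r₁ : ℝ) + ∑ j ∈ Finset.Icc (r₁ + 1) b, ∑ k ∈ Finset.Icc 1 r₁,
            (Nat.choose (j - 1) (k - 1) : ℝ) * x ^ (k - 1) * (1 - x) ^ (j - k)))
        + α₁ ^ r₁ * α₂ ^ (r₂ - r₁) * (∫ x in α₂..1, (1 / x ^ r₂) *
          ((r₂ : ℝ) + ∑ j ∈ Finset.Icc (r₂ + 1) b, ∑ k ∈ Finset.Icc 1 r₂,
            (Nat.choose (j - 1) (k - 1) : ℝ) * x ^ (k - 1) * (1 - x) ^ (j - k))))) := by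
  have hα2pos : 0 < α₂ := lt_trans hα1 hα12
  -- eventual facts
  have hE1 : ∀ᶠ n : ℕ in atTop, b + 1 ≤ s₁ n :=
    eventually_ge_of_div_tendsto s₁ α₁ hα1 hs1 (b + 1)
  have hE4 : ∀ᶠ n : ℕ in atTop, b + 1 ≤ s₂ n :=
    eventually_ge_of_div_tendsto s₂ α₂ hα2pos hs2 (b + 1)
  have hE12 : ∀ᶠ n : ℕ in atTop, s₁ n ≤ s₂ n := by
    have hmid : α₁ < (α₁ + α₂) / 2 := by linarith
    have hmid2 : (α₁ + α₂) / 2 < α₂ := by linarith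
    filter_upwards [hs1.eventually (eventually_lt_nhds hmid),
      hs2.eventually (eventually_gt_nhds hmid2), eventually_ge_atTop 1] with n h1 h2 h3
    have hnpos : (0 : ℝ) < n := by exact_mod_cast h3
    have : (s₁ n : ℝ) < (s₂ n : ℝ) := by
      have a1 : (s₁ n : ℝ) < (α₁ + α₂) / 2 * n := by
        rw [div_lt_iff₀ hnpos] at h1; linarith
      have a2 : (α₁ + α₂) / 2 * n < (s₂ n : ℝ) := by
        rw [lt_div_iff₀ hnpos] at h2; linarith
      linarith
    exact_mod_cast this.le
  have hE3 : ∀ᶠ n : ℕ in atTop, s₂ n + 1 ≤ n := by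
    filter_upwards [hs2.eventually (eventually_lt_nhds hα2), eventually_ge_atTop 1] with n h1 h2
    have hnpos : (0 : ℝ) < n := by exact_mod_cast h2
    have : (s₂ n : ℝ) < (n : ℝ) := by rw [div_lt_iff₀ hnpos] at h1; nlinarith
    have := (by exact_mod_cast this : s₂ n < n)
    omega
  -- Part A
  set QA : ℝ → ℝ := fun x => (1 / x ^ r₁) *
      ((r₁ : ℝ) + ∑ j ∈ Finset.Icc (r₁ + 1) b, ∑ k ∈ Finset.Icc 1 r₁,
        (Nat.choose (j - 1) (k - 1) : ℝ) * x ^ (k - 1) * (1 - x) ^ (j - k)) with hQA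
  set QB : ℝ → ℝ := fun x => (1 / x ^ r₂) *
      ((r₂ : ℝ) + ∑ j ∈ Finset.Icc (r₂ + 1) b, ∑ k ∈ Finset.Icc 1 r₂,
        (Nat.choose (j - 1) (k - 1) : ℝ) * x ^ (k - 1) * (1 - x) ^ (j - k)) with hQB
  set TA : ℕ → ℕ → ℝ := fun n i =>
      ((Nat.descFactorial (s₁ n) r₁ : ℝ) / (Nat.descFactorial (i - 1) r₁ : ℝ)) *
        ((r₁ : ℝ) / (n : ℝ) + (1 / (n : ℝ)) *
          ∑ j ∈ Finset.Icc (r₁ + 1) b, ∑ k ∈ Finset.Icc 1 r₁,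
            ((Nat.choose (j - 1) (k - 1) * Nat.choose (n - j) (i - k) : ℕ) : ℝ)
              / (Nat.choose (n - 1) (i - 1) : ℝ)) with hTA
  set TB : ℕ → ℕ → ℝ := fun n i =>
      (((Nat.descFactorial (s₁ n) r₁ * Nat.descFactorial (s₂ n - r₁) (r₂ - r₁) : ℕ) : ℝ)
          / (Nat.descFactorial (i - 1) r₂ : ℝ)) *
        ((r₂ : ℝ) / (n : ℝ) + (1 / (n : ℝ)) *
          ∑ j ∈ Finset.Icc (r₂ + 1) b, ∑ k ∈ Finset.Icc 1 r₂,
            ((Nat.choose (j - 1) (k - 1) * Nat.choose (n - j) (i - k) : ℕ) : ℝ)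
              / (Nat.choose (n - 1) (i - 1) : ℝ)) with hTB
  have hA : Tendsto (fun n : ℕ => ∑ i ∈ Finset.Icc (s₁ n + 1) (s₂ n), TA n i) atTop
      (𝓝 (∫ x in Set.Ioc α₁ α₂, α₁ ^ r₁ * QA x)) := by
    refine sum_tendsto_setIntegral TA (fun x => α₁ ^ r₁ * QA x) s₁ s₂ α₁ α₂
      ((r₁ : ℝ) + ∑ j ∈ Finset.Icc (r₁ + 1) b, ∑ k ∈ Finset.Icc 1 r₁,
        (Nat.choose (j - 1) (k - 1) : ℝ))
      hα1 hα12 hα2.le hs1 hs2 (hE3.mono fun n h => by omega) ?_ ?_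
    · -- bound
      filter_upwards [hE1, hE3, eventually_ge_atTop 1] with n h1 h3 hn1 i hi
      obtain ⟨hi1, hi2⟩ := Finset.mem_Icc.1 hi
      have hnne : (n : ℝ) ≠ 0 := by positivity
      have halg : (n : ℝ) * TA n i =
          ((Nat.descFactorial (s₁ n) r₁ : ℝ) / (Nat.descFactorial (i - 1) r₁ : ℝ)) *
            ((r₁ : ℝ) + ∑ j ∈ Finset.Icc (r₁ + 1) b, ∑ k ∈ Finset.Icc 1 r₁,
              ((Nat.choose (j - 1) (k - 1) * Nat.choose (n - j) (i - k) : ℕ) : ℝ)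
                / (Nat.choose (n - 1) (i - 1) : ℝ)) := by
        simp only [hTA]
        exact mul_term_algebra _ _ _ _ hnne
      rw [halg]
      exact abs_term_le hr1 (by omega) (Nat.descFactorial_le r₁ (by omega)) (by omega)
        (by omega) hn1
    · -- pointwise limit
      intro x hx
      obtain ⟨hx1, hx2⟩ := hx
      have hx0 : 0 < x := lt_trans hα1 hx1
      have hxlt1 : x < 1 := lt_trans hx2 hα2
      have hL : (0 : ℝ) < α₁ ^ r₁ := by positivity
      have key := term_tendsto (fun n => Nat.descFactorial (s₁ n) r₁) r₁ b hr1 (by omega)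
        (α₁ ^ r₁) hL (tendsto_descF_div_pow s₁ α₁ hα1 hs1 r₁) x hx0 hxlt1
      have hgoal : α₁ ^ r₁ * QA x = (α₁ ^ r₁ / x ^ r₁) *
          ((r₁ : ℝ) + ∑ j ∈ Finset.Icc (r₁ + 1) b, ∑ k ∈ Finset.Icc 1 r₁,
            (Nat.choose (j - 1) (k - 1) : ℝ) * x ^ (k - 1) * (1 - x) ^ (j - k)) := by
        rw [hQA]; ring
      show Tendsto (fun n : ℕ => (n : ℝ) * TA n ⌈(n : ℝ) * x⌉₊) atTop (𝓝 (α₁ ^ r₁ * QA x))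
      rw [hgoal]
      refine key.congr' ?_
      filter_upwards [eventually_ge_atTop 1] with n hn1
      have hnne : (n : ℝ) ≠ 0 := by positivity
      simp only [hTA]
      exact (mul_term_algebra _ _ _ _ hnne).symm
  have hB : Tendsto (fun n : ℕ => ∑ i ∈ Finset.Icc (s₂ n + 1) (n - 1), TB n i) atTop
      (𝓝 (∫ x in Set.Ioc α₂ 1, (α₁ ^ r₁ * α₂ ^ (r₂ - r₁)) * QB x)) := by
    refine sum_tendsto_setIntegral TB (fun x => (α₁ ^ r₁ * α₂ ^ (r₂ - r₁)) * QB x) s₂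
      (fun n => n - 1) α₂ 1
      ((r₂ : ℝ) + ∑ j ∈ Finset.Icc (r₂ + 1) b, ∑ k ∈ Finset.Icc 1 r₂,
        (Nat.choose (j - 1) (k - 1) : ℝ))
      hα2pos hα2 le_rfl hs2 tendsto_nat_sub_one_div
      (Eventually.of_forall fun n => Nat.sub_le n 1) ?_ ?_
    · -- bound
      filter_upwards [hE1, hE4, hE12, hE3, eventually_ge_atTop 1] with n h1 h4 h12 h3 hn1 i hi
      obtain ⟨hi1, hi2⟩ := Finset.mem_Icc.1 hi
      have hnne : (n : ℝ) ≠ 0 := by positivity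
      have halg : (n : ℝ) * TB n i =
          (((Nat.descFactorial (s₁ n) r₁ * Nat.descFactorial (s₂ n - r₁) (r₂ - r₁) : ℕ) : ℝ)
              / (Nat.descFactorial (i - 1) r₂ : ℝ)) *
            ((r₂ : ℝ) + ∑ j ∈ Finset.Icc (r₂ + 1) b, ∑ k ∈ Finset.Icc 1 r₂,
              ((Nat.choose (j - 1) (k - 1) * Nat.choose (n - j) (i - k) : ℕ) : ℝ)
                / (Nat.choose (n - 1) (i - 1) : ℝ)) := by
        simp only [hTB]
        exact mul_term_algebra _ _ _ _ hnne
      rw [halg]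
      have hsplit : Nat.descFactorial (i - 1) r₂ =
          Nat.descFactorial (i - 1) r₁ * Nat.descFactorial (i - 1 - r₁) (r₂ - r₁) := by
        have h : r₂ = r₁ + (r₂ - r₁) := by omega
        conv_lhs => rw [h]
        rw [descF_add]
      have hNle : Nat.descFactorial (s₁ n) r₁ * Nat.descFactorial (s₂ n - r₁) (r₂ - r₁)
          ≤ Nat.descFactorial (i - 1) r₂ := by
        rw [hsplit]
        exact Nat.mul_le_mul (Nat.descFactorial_le r₁ (by omega))
          (Nat.descFactorial_le (r₂ - r₁) (by omega))
      exact abs_term_le (by omega) hr2b hNle (by omega) (by omega) hn1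
    · intro x hx
      obtain ⟨hx1, hx2⟩ := hx
      have hx0 : 0 < x := lt_trans hα2pos hx1
      have hL : (0 : ℝ) < α₁ ^ r₁ * α₂ ^ (r₂ - r₁) := by positivity
      have hs2' : Tendsto (fun n : ℕ => ((s₂ n - r₁ : ℕ) : ℝ) / n) atTop (𝓝 α₂) :=
        tendsto_cast_sub_div r₁ hs2 (hE4.mono fun n h => by omega)
      have hNtend : Tendsto (fun n : ℕ =>
          ((Nat.descFactorial (s₁ n) r₁ * Nat.descFactorial (s₂ n - r₁) (r₂ - r₁) : ℕ) : ℝ)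
            / (n : ℝ) ^ r₂) atTop (𝓝 (α₁ ^ r₁ * α₂ ^ (r₂ - r₁))) := by
        have h1 := tendsto_descF_div_pow s₁ α₁ hα1 hs1 r₁
        have h2 := tendsto_descF_div_pow (fun n => s₂ n - r₁) α₂ hα2pos hs2' (r₂ - r₁)
        refine (h1.mul h2).congr' ?_
        filter_upwards [eventually_ge_atTop 1] with n hn1
        have hnne : (n : ℝ) ≠ 0 := by positivity
        have hpow : (n : ℝ) ^ r₂ = (n : ℝ) ^ r₁ * (n : ℝ) ^ (r₂ - r₁) := by
          rw [← pow_add]; congr 1; omega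
        rw [Nat.cast_mul, hpow]
        rw [div_mul_div_comm]
      have key := term_tendsto
        (fun n => Nat.descFactorial (s₁ n) r₁ * Nat.descFactorial (s₂ n - r₁) (r₂ - r₁))
        r₂ b (by omega) hr2b (α₁ ^ r₁ * α₂ ^ (r₂ - r₁)) hL hNtend x hx0 hx2
      have hgoal : (α₁ ^ r₁ * α₂ ^ (r₂ - r₁)) * QB x =
          ((α₁ ^ r₁ * α₂ ^ (r₂ - r₁)) / x ^ r₂) *
          ((r₂ : ℝ) + ∑ j ∈ Finset.Icc (r₂ + 1) b, ∑ k ∈ Finset.Icc 1 r₂,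
            (Nat.choose (j - 1) (k - 1) : ℝ) * x ^ (k - 1) * (1 - x) ^ (j - k)) := by
        rw [hQB]; ring
      show Tendsto (fun n : ℕ => (n : ℝ) * TB n ⌈(n : ℝ) * x⌉₊) atTop
        (𝓝 ((α₁ ^ r₁ * α₂ ^ (r₂ - r₁)) * QB x))
      rw [hgoal]
      refine key.congr' ?_
      filter_upwards [eventually_ge_atTop 1] with n hn1
      have hnne : (n : ℝ) ≠ 0 := by positivity
      simp only [hTB]
      exact (mul_term_algebra _ _ _ _ hnne).symm
  -- third term
  have hC : Tendsto (fun n : ℕ =>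
      (((Nat.descFactorial (s₁ n) r₁ * Nat.descFactorial (s₂ n - r₁) (r₂ - r₁) : ℕ) : ℝ)
          / (Nat.descFactorial (n - 1) r₂ : ℝ)) * ((b : ℝ) / (n : ℝ))) atTop (𝓝 0) := by
    have hup : Tendsto (fun n : ℕ => (b : ℝ) / (n : ℝ)) atTop (𝓝 0) :=
      tendsto_const_div_atTop_nhds_zero_nat (b : ℝ)
    refine tendsto_of_tendsto_of_tendsto_of_le_of_le' tendsto_const_nhds hup ?_ ?_
    · exact Eventually.of_forall fun n => by positivity
    · filter_upwards [hE1, hE12, hE3, eventually_ge_atTop 1] with n h1 h12 h3 hn1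
      have hD1 : (((Nat.descFactorial (s₁ n) r₁ * Nat.descFactorial (s₂ n - r₁) (r₂ - r₁) : ℕ) : ℝ)
          / (Nat.descFactorial (n - 1) r₂ : ℝ)) ≤ 1 := by
        refine div_cast_le_one ?_
        have hsplit : Nat.descFactorial (n - 1) r₂ =
            Nat.descFactorial (n - 1) r₁ * Nat.descFactorial (n - 1 - r₁) (r₂ - r₁) := by
          have h : r₂ = r₁ + (r₂ - r₁) := by omega
          conv_lhs => rw [h]
          rw [descF_add]
        rw [hsplit]
        exact Nat.mul_le_mul (Nat.descFactorial_le r₁ (by omega))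
          (Nat.descFactorial_le (r₂ - r₁) (by omega))
      calc _ ≤ 1 * ((b : ℝ) / (n : ℝ)) := by
            refine mul_le_mul_of_nonneg_right hD1 (by positivity)
        _ = (b : ℝ) / (n : ℝ) := one_mul _
  -- assemble
  have hfinal := (hA.add hB).add hC
  rw [add_zero] at hfinal
  have hIA : ∫ x in Set.Ioc α₁ α₂, α₁ ^ r₁ * QA x = α₁ ^ r₁ * ∫ x in α₁..α₂, QA x := by
    rw [← intervalIntegral.integral_of_le hα12.le, intervalIntegral.integral_const_mul]
  have hIB : ∫ x in Set.Ioc α₂ 1, (α₁ ^ r₁ * α₂ ^ (r₂ - r₁)) * QB x =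
      (α₁ ^ r₁ * α₂ ^ (r₂ - r₁)) * ∫ x in α₂..1, QB x := by
    rw [← intervalIntegral.integral_of_le hα2.le, intervalIntegral.integral_const_mul]
  rw [hIA, hIB] at hfinal
  refine hfinal.congr ?_
  intro n
  rw [Pdlp, hTA, hTB]
end
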